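/- arXiv:2512.21007 — 8 statements merged into one kernel-verified Lean document; each statement's English description precedes it below -/
import Mathlib

section
/- Let f be in the class S with Taylor coefficients a_2, a_3, and let A_2, A_3 be the corresponding coefficients of the inverse function. Then the Toeplitz determinants satisfy T_{2,1}(f^{-1}) = T_{2,1}(f) and T_{3,1}(f^{-1}) = T_{3,1}(f), i.e. 1 - |A_2|^2 = 1 - |a_2|^2 and 2·Re(A_2^2·conj(A_3)) - 2|A_2|^2 - |A_3|^2 + 1 = 2·Re(a_2^2·conj(a_3)) - 2|a_2|^2 - |a_3|^2 + 1. -/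
open Complex Metric Set

theorem toeplitz_inverse_eq (f : ℂ → ℂ)
    (hf : AnalyticOnNhd ℂ f (ball (0:ℂ) 1))
    (hinj : Set.InjOn f (ball (0:ℂ) 1))
    (hf0 : f 0 = 0) (hf1 : deriv f 0 = 1)
    (a₂ a₃ A₂ A₃ : ℂ)
    (ha₂ : a₂ = iteratedDeriv 2 f 0 / 2)
    (ha₃ : a₃ = iteratedDeriv 3 f 0 / 6)
    (hA₂ : A₂ = -a₂)
    (hA₃ : A₃ = 2 * a₂ ^ 2 - a₃) :
    1 - ‖A₂‖ ^ 2 = 1 - ‖a₂‖ ^ 2 ∧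
    2 * (A₂ ^ 2 * (starRingEnd ℂ) A₃).re - 2 * ‖A₂‖ ^ 2 - ‖A₃‖ ^ 2 + 1 =
      2 * (a₂ ^ 2 * (starRingEnd ℂ) a₃).re - 2 * ‖a₂‖ ^ 2 - ‖a₃‖ ^ 2 + 1 := by
  subst hA₂ hA₃
  constructor
  · simp
  · simp only [Complex.sq_norm]
    simp only [Complex.normSq_apply, Complex.sub_re, Complex.sub_im,
      Complex.mul_re, Complex.mul_im, Complex.neg_re, Complex.neg_im, Complex.conj_re,
      Complex.conj_im, pow_two, Complex.re_ofNat, Complex.im_ofNat]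
    ring
end

section
/- Let f be in the class R (bounded turning) and let A_2, A_3 be the coefficients of the inverse function. Then the symmetric Toeplitz determinant satisfies |T^s_{2,2}(f^{-1})| = |A_2^2 - A_3^2| ≤ 25/9. -/
open Complex Metric Set intervalIntegral Filter Topology


lemma coeffInt {p : ℂ → ℂ} {r : ℝ} (hr : 0 < r)
    (hd : DifferentiableOn ℂ p (closedBall 0 r)) (n : ℕ) :
    ∫ θ in (0:ℝ)..(2*Real.pi), Complex.exp (-(n:ℂ)*θ*I) * p (circleMap 0 r θ) =
      2 * Real.pi * (r:ℂ)^n * (iteratedDeriv n p 0 / (n.factorial:ℂ)) := by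
  lift r to NNReal using hr.le with R hR
  have hR0 : 0 < R := by exact_mod_cast hr
  have hp : HasFPowerSeriesOnBall p (cauchyPowerSeries p 0 R) 0 R :=
    hd.hasFPowerSeriesOnBall hR0
  have h1 := hp.factorial_smul (y := (1:ℂ)) n
  rw [← iteratedDeriv_eq_iteratedFDeriv, cauchyPowerSeries_apply] at h1
  have hRne : ((R:ℝ):ℂ) ≠ 0 := by exact_mod_cast hr.ne'
  have key : (∮ z in C(0, (R:ℝ)), ((1:ℂ) / (z - 0)) ^ n • (z - 0)⁻¹ • p z)
      = (I * (((R:ℝ):ℂ)^n)⁻¹) * ∫ θ in (0:ℝ)..(2*Real.pi),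
          Complex.exp (-(n:ℂ)*θ*I) * p (circleMap 0 R θ) := by
    rw [circleIntegral, ← intervalIntegral.integral_const_mul]
    refine intervalIntegral.integral_congr fun θ _ => ?_
    have hz : circleMap 0 (R:ℝ) θ ≠ 0 := circleMap_ne_center (by exact_mod_cast hR0.ne')
    rw [deriv_circleMap]
    have hzval : circleMap 0 (R:ℝ) θ = ((R:ℝ):ℂ) * Complex.exp (θ*I) := circleMap_zero _ _
    have hcan' : Complex.exp (θ*I) ^ n * Complex.exp (-((n:ℂ) * θ * I)) = 1 := by
      rw [← Complex.exp_nat_mul, ← Complex.exp_add]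
      rw [show (n:ℂ) * (θ*I) + -((n:ℂ)*θ*I) = 0 by ring, Complex.exp_zero]
    have hE : Complex.exp (-(n:ℂ)*θ*I) = (Complex.exp (θ*I) ^ n)⁻¹ := by
      rw [neg_mul, neg_mul]; exact eq_inv_of_mul_eq_one_left (by rw [mul_comm]; exact hcan')
    rw [hzval, hE]; simp only [smul_eq_mul, sub_zero]
    field_simp
    rw [div_pow, one_pow, mul_pow]
    field_simp
  rw [key] at h1
  have hpi : (Real.pi : ℂ) ≠ 0 := by exact_mod_cast Real.pi_ne_zero
  have hfac : ((n.factorial : ℕ) : ℂ) ≠ 0 := by exact_mod_cast n.factorial_ne_zero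
  rw [nsmul_eq_mul, smul_eq_mul] at h1
  field_simp at h1 ⊢
  simp only [show ∀ θ : ℝ, -(I * (n:ℂ) * θ) = -((n:ℂ)*θ*I) from fun θ => by ring] at h1 ⊢
  linear_combination h1


lemma posInt {p : ℂ → ℂ} {r : ℝ} (hr : 0 < r)
    (hd : DifferentiableOn ℂ p (closedBall 0 r)) (n : ℕ) :
    ∫ θ in (0:ℝ)..(2*Real.pi), Complex.exp ((n+1:ℂ)*θ*I) * p (circleMap 0 r θ) = 0 := by
  have hg : DifferentiableOn ℂ (fun z => z^n * p z) (closedBall 0 r) :=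
    (differentiable_pow n).differentiableOn.mul hd
  have h0 : (∮ z in C(0, r), z^n * p z) = 0 := by
    refine Complex.circleIntegral_eq_zero_of_differentiable_on_off_countable hr.le
      Set.countable_empty (hg.continuousOn) fun z hz => ?_
    exact (hg.mono ball_subset_closedBall).differentiableAt (isOpen_ball.mem_nhds hz.1)
  have key : (∮ z in C(0, r), z^n * p z)
      = (I * (r:ℂ)^(n+1)) * ∫ θ in (0:ℝ)..(2*Real.pi),
          Complex.exp ((n+1:ℂ)*θ*I) * p (circleMap 0 r θ) := by
    rw [circleIntegral, ← intervalIntegral.integral_const_mul]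
    refine intervalIntegral.integral_congr fun θ _ => ?_
    rw [deriv_circleMap]
    have hzval : circleMap 0 r θ = (r:ℂ) * Complex.exp (θ*I) := circleMap_zero _ _
    have he : Complex.exp ((n+1:ℂ)*θ*I) = Complex.exp (θ*I)^(n+1) := by
      rw [← Complex.exp_nat_mul]; push_cast; ring_nf
    rw [smul_eq_mul, hzval, he]
    ring
  rw [key] at h0
  have : (I * (r:ℂ)^(n+1)) ≠ 0 := by
    apply mul_ne_zero I_ne_zero
    exact pow_ne_zero _ (by exact_mod_cast hr.ne')
  exact (mul_eq_zero.1 h0).resolve_left this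


lemma conjInt (f : ℝ → ℂ) (a b : ℝ) :
    ∫ θ in a..b, (starRingEnd ℂ) (f θ) = (starRingEnd ℂ) (∫ θ in a..b, f θ) := by
  simp only [intervalIntegral, ← integral_conj, map_sub]

lemma splitInt {p : ℂ → ℂ} {r : ℝ} (n : ℕ)
    (hc : Continuous fun θ : ℝ => p (circleMap 0 r θ)) :
    ∫ θ in (0:ℝ)..(2*Real.pi), (((p (circleMap 0 r θ)).re : ℝ) : ℂ) * Complex.exp (-(n:ℂ)*θ*I)
      = (1/2) * ((∫ θ in (0:ℝ)..(2*Real.pi), Complex.exp (-(n:ℂ)*θ*I) * p (circleMap 0 r θ))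
          + (starRingEnd ℂ) (∫ θ in (0:ℝ)..(2*Real.pi), Complex.exp ((n:ℂ)*θ*I) * p (circleMap 0 r θ))) := by
  have h1 : IntervalIntegrable (fun θ : ℝ => Complex.exp (-(n:ℂ)*θ*I) * p (circleMap 0 r θ) / 2)
      MeasureTheory.volume 0 (2*Real.pi) := by
    apply Continuous.intervalIntegrable
    exact ((Complex.continuous_exp.comp (by continuity)).mul hc).div_const _
  have h2 : IntervalIntegrable
      (fun θ : ℝ => (starRingEnd ℂ) (Complex.exp ((n:ℂ)*θ*I) * p (circleMap 0 r θ)) / 2)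
      MeasureTheory.volume 0 (2*Real.pi) := by
    apply Continuous.intervalIntegrable
    exact (Complex.continuous_conj.comp ((Complex.continuous_exp.comp (by continuity)).mul hc)).div_const _
  have congr1 : ∀ θ : ℝ, (((p (circleMap 0 r θ)).re : ℝ) : ℂ) * Complex.exp (-(n:ℂ)*θ*I)
      = Complex.exp (-(n:ℂ)*θ*I) * p (circleMap 0 r θ) / 2
        + (starRingEnd ℂ) (Complex.exp ((n:ℂ)*θ*I) * p (circleMap 0 r θ)) / 2 := by
    intro θ
    have hre : ((((p (circleMap 0 r θ)).re : ℝ)) : ℂ)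
        = (p (circleMap 0 r θ) + (starRingEnd ℂ) (p (circleMap 0 r θ))) / 2 := by
      rw [Complex.add_conj]; push_cast; ring
    have hconj : (starRingEnd ℂ) (Complex.exp ((n:ℂ)*θ*I))
        = Complex.exp (-(n:ℂ)*θ*I) := by
      rw [← Complex.exp_conj]; congr 1
      simp only [map_mul, map_neg, Complex.conj_I, Complex.conj_ofReal, map_natCast]; ring
    rw [map_mul, hconj, hre]; ring
  rw [intervalIntegral.integral_congr (fun θ _ => congr1 θ), intervalIntegral.integral_add h1 h2]
  rw [intervalIntegral.integral_div, intervalIntegral.integral_div, conjInt]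
  ring

lemma caratBound_r {p : ℂ → ℂ} {r : ℝ} (hr0 : 0 < r) (hr1 : r < 1)
    (hp : AnalyticOnNhd ℂ p (ball (0:ℂ) 1)) (hp0 : p 0 = 1)
    (hre : ∀ z ∈ ball (0:ℂ) 1, 0 < (p z).re) :
    r * ‖deriv p 0‖ ≤ 2 ∧
    r^2 * (‖iteratedDeriv 2 p 0 - (deriv p 0)^2‖ / 2
      + (‖deriv p 0‖)^2 / 2) ≤ 2 := by
  have hsub : closedBall (0:ℂ) r ⊆ ball 0 1 := closedBall_subset_ball hr1
  have hd : DifferentiableOn ℂ p (closedBall 0 r) :=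
    fun z hz => ((hp z (hsub hz)).differentiableAt).differentiableWithinAt
  have hmem : ∀ θ : ℝ, circleMap 0 r θ ∈ closedBall (0:ℂ) r := fun θ =>
    sphere_subset_closedBall (circleMap_mem_sphere _ hr0.le θ)
  have hc : Continuous fun θ : ℝ => p (circleMap 0 r θ) :=
    hd.continuousOn.comp_continuous (continuous_circleMap 0 r) (fun θ => hmem θ)
  set w : ℝ → ℝ := fun θ => (p (circleMap 0 r θ)).re with hw
  have hwc : Continuous w := Complex.continuous_re.comp hc
  have hwpos : ∀ θ, 0 < w θ := fun θ => hre _ (hsub (hmem θ))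
  set q1 := deriv p 0 with hq1
  set q2 := iteratedDeriv 2 p 0 with hq2
  -- the P values
  have P0 : ∫ θ in (0:ℝ)..(2*Real.pi), Complex.exp (-((0:ℕ):ℂ)*θ*I) * p (circleMap 0 r θ)
      = 2 * Real.pi := by
    rw [coeffInt hr0 hd 0]; simp [hp0]
  have P1 : ∫ θ in (0:ℝ)..(2*Real.pi), Complex.exp (-((1:ℕ):ℂ)*θ*I) * p (circleMap 0 r θ)
      = 2 * Real.pi * r * q1 := by
    rw [coeffInt hr0 hd 1]
    simp [iteratedDeriv_one]; exact Or.inl rfl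
  have P2 : ∫ θ in (0:ℝ)..(2*Real.pi), Complex.exp (-((2:ℕ):ℂ)*θ*I) * p (circleMap 0 r θ)
      = Real.pi * r^2 * q2 := by
    rw [coeffInt hr0 hd 2]
    rw [Nat.factorial_two]; push_cast; ring
  have Q1 : ∫ θ in (0:ℝ)..(2*Real.pi), Complex.exp (((1:ℕ):ℂ)*θ*I) * p (circleMap 0 r θ) = 0 := by
    have := posInt hr0 hd 0; norm_num at this ⊢; exact this
  have Q2 : ∫ θ in (0:ℝ)..(2*Real.pi), Complex.exp (((2:ℕ):ℂ)*θ*I) * p (circleMap 0 r θ) = 0 := by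
    have := posInt hr0 hd 1; norm_num at this ⊢; exact this
  -- the M values
  have M0 : ∫ θ in (0:ℝ)..(2*Real.pi), ((w θ : ℝ) : ℂ) * Complex.exp (-((0:ℕ):ℂ)*θ*I)
      = 2 * Real.pi := by
    rw [splitInt 0 hc]
    rw [show ∫ θ in (0:ℝ)..(2*Real.pi), Complex.exp (((0:ℕ):ℂ)*θ*I) * p (circleMap 0 r θ)
        = 2*Real.pi from by rw [← P0]; apply intervalIntegral.integral_congr; intro θ _; norm_num]
    rw [P0]
    have h2 : (starRingEnd ℂ) (2 * (Real.pi:ℂ)) = 2 * Real.pi := by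
      rw [map_mul, Complex.conj_ofReal, map_ofNat]
    rw [h2]; push_cast; ring
  have M1 : ∫ θ in (0:ℝ)..(2*Real.pi), ((w θ : ℝ) : ℂ) * Complex.exp (-((1:ℕ):ℂ)*θ*I)
      = Real.pi * r * q1 := by
    rw [splitInt 1 hc, P1, Q1, map_zero]; push_cast; ring
  have M2 : ∫ θ in (0:ℝ)..(2*Real.pi), ((w θ : ℝ) : ℂ) * Complex.exp (-((2:ℕ):ℂ)*θ*I)
      = Real.pi * r^2 * q2 / 2 := by
    rw [splitInt 2 hc, P2, Q2, map_zero]; push_cast; ring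
  -- total mass
  have hof : (∫ θ in (0:ℝ)..(2*Real.pi), ((w θ : ℝ) : ℂ))
      = ((∫ θ in (0:ℝ)..(2*Real.pi), w θ : ℝ) : ℂ) := intervalIntegral.integral_ofReal
  have Wr : ∫ θ in (0:ℝ)..(2*Real.pi), w θ = 2 * Real.pi := by
    have h := M0
    rw [show (∫ θ in (0:ℝ)..(2*Real.pi), ((w θ : ℝ) : ℂ) * Complex.exp (-((0:ℕ):ℂ)*θ*I))
        = ∫ θ in (0:ℝ)..(2*Real.pi), ((w θ : ℝ) : ℂ) from
      intervalIntegral.integral_congr fun θ _ => by norm_num, hof] at h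
    exact_mod_cast h
  have h2pi : (0:ℝ) ≤ 2 * Real.pi := by positivity
  -- integrability facts
  have iw : IntervalIntegrable (fun θ : ℝ => ((w θ : ℝ) : ℂ)) MeasureTheory.volume 0 (2*Real.pi) :=
    (Complex.continuous_ofReal.comp hwc).intervalIntegrable _ _
  have ie : ∀ n : ℕ, IntervalIntegrable
      (fun θ : ℝ => ((w θ : ℝ) : ℂ) * Complex.exp (-(n:ℂ)*θ*I)) MeasureTheory.volume 0 (2*Real.pi) :=
    fun n => ((Complex.continuous_ofReal.comp hwc).mul
      (Complex.continuous_exp.comp (by fun_prop))).intervalIntegrable _ _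
  -- first bound : r * |q1| ≤ 2
  have eabs : ∀ (n : ℕ) (θ : ℝ), ‖Complex.exp (-(n:ℂ)*θ*I)‖ = 1 := by
    intro n θ
    rw [Complex.norm_exp]
    norm_num [Complex.mul_I_re]
  have eabs' : ∀ θ : ℝ, ‖Complex.exp (-(θ:ℂ)*I)‖ = 1 := by
    intro θ
    rw [Complex.norm_exp]
    norm_num [Complex.mul_I_re]
  have key1 : ‖Real.pi * r * q1‖ ≤ 2 * Real.pi := by
    have h := intervalIntegral.norm_integral_le_integral_norm
      (f := fun θ : ℝ => ((w θ : ℝ) : ℂ) * Complex.exp (-((1:ℕ):ℂ)*θ*I))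
      (μ := MeasureTheory.volume) h2pi
    rw [M1] at h
    have heq : (∫ θ in (0:ℝ)..(2*Real.pi), ‖((w θ : ℝ) : ℂ) * Complex.exp (-((1:ℕ):ℂ)*θ*I)‖)
        = ∫ θ in (0:ℝ)..(2*Real.pi), w θ := by
      refine intervalIntegral.integral_congr fun θ _ => ?_
      simp only [norm_mul, Complex.norm_real, Real.norm_eq_abs]
      rw [eabs 1 θ, abs_of_pos (hwpos θ), mul_one]
    rw [heq, Wr] at h
    exact h
  have habsq1 : r * ‖q1‖ ≤ 2 := by
    have hpi := Real.pi_pos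
    have : Real.pi * (r * ‖q1‖) ≤ Real.pi * 2 := by
      calc Real.pi * (r * ‖q1‖) = ‖Real.pi * r * q1‖ := by
            rw [norm_mul, norm_mul, Complex.norm_real, Real.norm_eq_abs, Complex.norm_real, Real.norm_eq_abs,
              abs_of_pos hpi, abs_of_pos hr0]; ring
        _ ≤ 2 * Real.pi := key1
        _ = Real.pi * 2 := by ring
    exact le_of_mul_le_mul_left this hpi
  constructor
  · exact habsq1
  -- second bound
  set m : ℂ := (r:ℂ) * q1 / 2 with hm
  have habsm : ‖m‖ = r * ‖q1‖ / 2 := by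
    rw [hm, norm_div, norm_mul, Complex.norm_real, Real.norm_eq_abs, abs_of_pos hr0]; norm_num
  -- expansion of the squared integrand
  have expand : ∀ θ : ℝ, ((w θ : ℝ) : ℂ) * (Complex.exp (-(θ:ℂ)*I) - m)^2
      = ((w θ : ℝ) : ℂ) * Complex.exp (-((2:ℕ):ℂ)*θ*I)
        - (2*m) * (((w θ : ℝ) : ℂ) * Complex.exp (-((1:ℕ):ℂ)*θ*I))
        + m^2 * (((w θ : ℝ) : ℂ) * Complex.exp (-((0:ℕ):ℂ)*θ*I)) := by
    intro θ
    have he2 : Complex.exp (-((2:ℕ):ℂ)*θ*I) = Complex.exp (-(θ:ℂ)*I) ^ 2 := by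
      rw [sq, ← Complex.exp_add]; push_cast; ring_nf
    have he1 : Complex.exp (-((1:ℕ):ℂ)*θ*I) = Complex.exp (-(θ:ℂ)*I) := by push_cast; ring_nf
    have he0 : Complex.exp (-((0:ℕ):ℂ)*θ*I) = 1 := by push_cast; simp
    rw [he2, he1, he0]; ring
  have ig : IntervalIntegrable (fun θ : ℝ => ((w θ : ℝ) : ℂ) * (Complex.exp (-(θ:ℂ)*I) - m)^2)
      MeasureTheory.volume 0 (2*Real.pi) := by
    apply Continuous.intervalIntegrable
    exact (Complex.continuous_ofReal.comp hwc).mul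
      (((Complex.continuous_exp.comp (by fun_prop)).sub continuous_const).pow 2)
  have left_eq : (∫ θ in (0:ℝ)..(2*Real.pi), ((w θ : ℝ) : ℂ) * (Complex.exp (-(θ:ℂ)*I) - m)^2)
      = Real.pi * r^2 * q2 / 2 - 2 * Real.pi * m^2 := by
    rw [intervalIntegral.integral_congr fun θ _ => expand θ]
    rw [intervalIntegral.integral_add (((ie 2).sub ((ie 1).const_mul (2*m)))) ((ie 0).const_mul (m^2)),
      intervalIntegral.integral_sub (ie 2) ((ie 1).const_mul (2*m)),
      intervalIntegral.integral_const_mul, intervalIntegral.integral_const_mul,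
      M0, M1, M2]
    rw [hm]; ring
  -- right side
  have reInt : (∫ θ in (0:ℝ)..(2*Real.pi), (((w θ : ℝ) : ℂ) * Complex.exp (-((1:ℕ):ℂ)*θ*I)
        * (starRingEnd ℂ) m).re)
      = ((Real.pi * r * q1 : ℂ) * (starRingEnd ℂ) m).re := by
    rw [← M1, ← intervalIntegral.integral_mul_const]
    exact Complex.reCLM.intervalIntegral_comp_comm ((ie 1).mul_const ((starRingEnd ℂ) m))
  have right_eq : (∫ θ in (0:ℝ)..(2*Real.pi), w θ * (‖Complex.exp (-(θ:ℂ)*I) - m‖)^2)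
      = 2 * Real.pi * (1 - Complex.normSq m) := by
    have point : ∀ θ : ℝ, w θ * (‖Complex.exp (-(θ:ℂ)*I) - m‖)^2
        = (1 + Complex.normSq m) * w θ
          - 2 * (((w θ : ℝ) : ℂ) * Complex.exp (-((1:ℕ):ℂ)*θ*I) * (starRingEnd ℂ) m).re := by
      intro θ
      have h1 : Complex.exp (-((1:ℕ):ℂ)*θ*I) = Complex.exp (-(θ:ℂ)*I) := by push_cast; ring_nf
      rw [Complex.sq_norm, Complex.normSq_sub, h1]
      have hnse : Complex.normSq (Complex.exp (-(θ:ℂ)*I)) = 1 := by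
        rw [← Complex.sq_norm, eabs' θ]; norm_num
      have hre2 : (((w θ : ℝ) : ℂ) * Complex.exp (-(θ:ℂ)*I) * (starRingEnd ℂ) m).re
          = w θ * (Complex.exp (-(θ:ℂ)*I) * (starRingEnd ℂ) m).re := by
        rw [mul_assoc, Complex.re_ofReal_mul]
      rw [hnse, hre2]; ring
    rw [intervalIntegral.integral_congr fun θ _ => point θ]
    have iA : IntervalIntegrable (fun θ : ℝ => (1 + Complex.normSq m) * w θ)
        MeasureTheory.volume 0 (2*Real.pi) := (continuous_const.mul hwc).intervalIntegrable _ _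
    have iB : IntervalIntegrable
        (fun θ : ℝ => 2 * (((w θ : ℝ) : ℂ) * Complex.exp (-((1:ℕ):ℂ)*θ*I) * (starRingEnd ℂ) m).re)
        MeasureTheory.volume 0 (2*Real.pi) := by
      apply Continuous.intervalIntegrable
      exact continuous_const.mul (Complex.continuous_re.comp (((Complex.continuous_ofReal.comp hwc).mul
        (Complex.continuous_exp.comp (by fun_prop))).mul continuous_const))
    rw [intervalIntegral.integral_sub iA iB, intervalIntegral.integral_const_mul,
      intervalIntegral.integral_const_mul, reInt, Wr]
    have hval : (((Real.pi : ℂ) * r * q1) * (starRingEnd ℂ) m)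
        = ((2 * Real.pi * Complex.normSq m : ℝ) : ℂ) := by
      have hmc := Complex.mul_conj m
      calc ((Real.pi : ℂ) * r * q1) * (starRingEnd ℂ) m
          = 2 * (Real.pi : ℂ) * (m * (starRingEnd ℂ) m) := by rw [hm]; ring
        _ = ((2 * Real.pi * Complex.normSq m : ℝ) : ℂ) := by rw [hmc]; push_cast; ring
    rw [hval, Complex.ofReal_re]
    ring
  -- key inequality
  have key2 : ‖(Real.pi : ℂ) * r^2 * q2 / 2 - 2 * Real.pi * m^2‖
      ≤ 2 * Real.pi * (1 - Complex.normSq m) := by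
    have h := intervalIntegral.norm_integral_le_integral_norm
      (f := fun θ : ℝ => ((w θ : ℝ) : ℂ) * (Complex.exp (-(θ:ℂ)*I) - m)^2)
      (μ := MeasureTheory.volume) h2pi
    rw [left_eq] at h
    have heq : (∫ θ in (0:ℝ)..(2*Real.pi), ‖((w θ : ℝ) : ℂ) * (Complex.exp (-(θ:ℂ)*I) - m)^2‖)
        = ∫ θ in (0:ℝ)..(2*Real.pi), w θ * (‖Complex.exp (-(θ:ℂ)*I) - m‖)^2 := by
      refine intervalIntegral.integral_congr fun θ _ => ?_
      simp only [norm_mul, Complex.norm_real, Real.norm_eq_abs, norm_pow]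
      rw [abs_of_pos (hwpos θ)]
    rw [heq, right_eq] at h
    exact le_trans (le_of_eq rfl) h
  -- convert key2 into the real inequality
  have hD : ‖(Real.pi : ℂ) * r^2 * q2 / 2 - 2 * Real.pi * m^2‖
      = Real.pi * r^2 / 2 * ‖q2 - q1^2‖ := by
    have : ((Real.pi : ℂ) * r^2 * q2 / 2 - 2 * Real.pi * m^2)
        = ((Real.pi * r^2 / 2 : ℝ) : ℂ) * (q2 - q1^2) := by
      rw [hm]; push_cast; ring
    rw [this, norm_mul, Complex.norm_real, Real.norm_eq_abs, abs_of_pos (by positivity)]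
  have hns : Complex.normSq m = (r * ‖q1‖ / 2)^2 := by
    rw [← Complex.sq_norm, habsm]
  rw [hD, hns] at key2
  have hpi := Real.pi_pos
  nlinarith [norm_nonneg (q2 - q1^2), norm_nonneg q1,
    mul_pos hpi (mul_pos hr0 hr0)]

lemma limit_aux {C : ℝ} (n : ℕ) (h : ∀ r : ℝ, 0 < r → r < 1 → r^n * C ≤ 2) : C ≤ 2 := by
  have hev : ∀ᶠ r in 𝓝[<] (1:ℝ), r^n * C ≤ 2 := by
    filter_upwards [Ioo_mem_nhdsLT_of_mem (by norm_num : (1:ℝ) ∈ Ioc (0:ℝ) 1)] with r hr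
    exact h r hr.1 hr.2
  have ht : Tendsto (fun r : ℝ => r^n * C) (𝓝[<] (1:ℝ)) (𝓝 C) := by
    have : Tendsto (fun r : ℝ => r^n * C) (𝓝 (1:ℝ)) (𝓝 (1^n * C)) :=
      ((continuous_pow n).mul continuous_const).tendsto 1
    simpa using this.mono_left nhdsWithin_le_nhds
  exact le_of_tendsto ht hev

lemma caratBound {p : ℂ → ℂ}
    (hp : AnalyticOnNhd ℂ p (ball (0:ℂ) 1)) (hp0 : p 0 = 1)
    (hre : ∀ z ∈ ball (0:ℂ) 1, 0 < (p z).re) :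
    ‖deriv p 0‖ ≤ 2 ∧
    ‖iteratedDeriv 2 p 0 - (deriv p 0)^2‖ / 2
      + (‖deriv p 0‖)^2 / 2 ≤ 2 := by
  constructor
  · exact limit_aux 1 (fun r h0 h1 => by
      simpa using (caratBound_r h0 h1 hp hp0 hre).1)
  · exact limit_aux 2 (fun r h0 h1 => (caratBound_r h0 h1 hp hp0 hre).2)

theorem symToeplitz22_R (f : ℂ → ℂ)
    (hf : AnalyticOnNhd ℂ f (ball (0:ℂ) 1))
    (hf0 : f 0 = 0) (hf1 : deriv f 0 = 1)
    (hre : ∀ z ∈ ball (0:ℂ) 1, 0 < (deriv f z).re)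
    (a₂ a₃ A₂ A₃ : ℂ)
    (ha₂ : a₂ = iteratedDeriv 2 f 0 / 2)
    (ha₃ : a₃ = iteratedDeriv 3 f 0 / 6)
    (hA₂ : A₂ = -a₂)
    (hA₃ : A₃ = 2 * a₂ ^ 2 - a₃) :
    ‖A₂ ^ 2 - A₃ ^ 2‖ ≤ 25 / 9 := by
  have hp : AnalyticOnNhd ℂ (deriv f) (ball (0:ℂ) 1) := hf.deriv
  have hbd := caratBound hp hf1 hre
  set q1 := deriv (deriv f) 0 with hq1
  set q2 := iteratedDeriv 2 (deriv f) 0 with hq2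
  have e2 : iteratedDeriv 2 f 0 = q1 := by
    rw [show (2:ℕ) = 1 + 1 from rfl, iteratedDeriv_succ', iteratedDeriv_one]
  have e3 : iteratedDeriv 3 f 0 = q2 := by
    rw [show (3:ℕ) = 2 + 1 from rfl, iteratedDeriv_succ']
  -- abbreviations
  set t := ‖a₂‖ with ht
  have hq1a : ‖q1‖ = 2 * t := by
    rw [ht, ha₂, e2, norm_div]; norm_num; ring
  have ht1 : t ≤ 1 := by
    have := hbd.1; rw [hq1a] at this; linarith
  have ht0 : 0 ≤ t := norm_nonneg _
  set D := ‖q2 - q1^2‖ with hD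
  have hD0 : 0 ≤ D := norm_nonneg _
  have hDle : D ≤ 4 - 4 * t^2 := by
    have := hbd.2; rw [hq1a] at this; nlinarith
  -- A₃ bound
  have hA3 : ‖A₃‖ ≤ (8 * t^2 + D) / 6 := by
    have hval : A₃ = (2 * q1^2 - (q2 - q1^2)) / 6 := by
      rw [hA₃, ha₂, ha₃, e2, e3]; ring
    rw [hval, norm_div]
    simp only [Complex.norm_ofNat]
    have : ‖2 * q1^2 - (q2 - q1^2)‖ ≤ 8 * t^2 + D := by
      refine le_trans (norm_sub_le _ _) ?_
      rw [norm_mul, norm_pow, hq1a]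
      norm_num; nlinarith
    calc ‖2 * q1 ^ 2 - (q2 - q1 ^ 2)‖ / 6 ≤ (8 * t^2 + D) / 6 := by linarith
      _ = (8 * t^2 + D) / 6 := rfl
  have hA2 : ‖A₂‖ = t := by rw [hA₂, norm_neg]
  have tri : ‖A₂^2 - A₃^2‖ ≤ t^2 + ((8*t^2 + D)/6)^2 := by
    refine le_trans (norm_sub_le _ _) ?_
    rw [norm_pow, norm_pow, hA2]
    have h3 : (‖A₃‖)^2 ≤ ((8*t^2 + D)/6)^2 := by
      apply pow_le_pow_left₀ (norm_nonneg _) hA3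
    linarith
  refine le_trans tri ?_
  nlinarith [sq_nonneg t, sq_nonneg (t^2 - 1), sq_nonneg (t*D), mul_nonneg ht0 hD0]
end

section
/- Let f be in the class R (bounded turning) and let A_3, A_4 be the coefficients of the inverse function. Then the symmetric Toeplitz determinant satisfies |T^s_{2,3}(f^{-1})| = |A_3^2 - A_4^2| ≤ 233/36. -/
open Complex Metric Set Filter Topology

lemma moebius_abs {a w : ℂ} (ha : ‖a‖ ≤ 1) (hw : ‖w‖ ≤ 1) :
    ‖w - a‖ ≤ ‖1 - (starRingEnd ℂ) a * w‖ := by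
  have h1 : Complex.normSq a ≤ 1 := by
    rw [← Complex.sq_norm]; nlinarith [norm_nonneg a]
  have h2 : Complex.normSq w ≤ 1 := by
    rw [← Complex.sq_norm]; nlinarith [norm_nonneg w]
  have key : Complex.normSq (w - a) ≤ Complex.normSq (1 - (starRingEnd ℂ) a * w) := by
    have : Complex.normSq (1 - (starRingEnd ℂ) a * w) - Complex.normSq (w - a)
        = (1 - Complex.normSq a) * (1 - Complex.normSq w) := by
      simp [Complex.normSq_apply, Complex.sub_re, Complex.sub_im, Complex.mul_re,
        Complex.mul_im, Complex.conj_re, Complex.conj_im]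
      ring
    nlinarith
  rw [Complex.norm_def, Complex.norm_def]
  exact Real.sqrt_le_sqrt key

lemma moebius_denom_ne {a w : ℂ} (ha : ‖a‖ < 1) (hw : ‖w‖ ≤ 1) :
    1 - (starRingEnd ℂ) a * w ≠ 0 := by
  intro h
  have : (1:ℂ) = (starRingEnd ℂ) a * w := by linear_combination h
  have habs : ‖(starRingEnd ℂ) a * w‖ = 1 := by rw [← this]; simp
  rw [norm_mul, Complex.norm_conj] at habs
  nlinarith [norm_nonneg a, norm_nonneg w]

lemma dslope_analytic {u : ℂ → ℂ} (hu : AnalyticOnNhd ℂ u (ball (0:ℂ) 1)) :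
    AnalyticOnNhd ℂ (dslope u 0) (ball (0:ℂ) 1) := by
  intro z hz
  rcases eq_or_ne z 0 with rfl | hz0
  · obtain ⟨P, hP⟩ := hu 0 (by simp)
    exact hP.has_fpower_series_dslope_fslope.analyticAt
  · have h1 : AnalyticAt ℂ (fun w => w⁻¹ * (u w - u 0)) z :=
      ((analyticAt_inv hz0).mul ((hu z hz).sub analyticAt_const))
    apply h1.congr
    filter_upwards [isOpen_ne.mem_nhds hz0] with w hw
    rw [dslope_of_ne _ hw, slope_def_field]
    field_simp
    ring

lemma schwarz_closed {u : ℂ → ℂ} (hu : AnalyticOnNhd ℂ u (ball (0:ℂ) 1)) (h0 : u 0 = 0)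
    (hb : ∀ z ∈ ball (0:ℂ) 1, ‖u z‖ ≤ 1) :
    ∀ z ∈ ball (0:ℂ) 1, ‖dslope u 0 z‖ ≤ 1 := by
  intro z hz
  have hd : DifferentiableOn ℂ u (ball (0:ℂ) 1) := fun w hw => (hu w hw).differentiableWithinAt
  have key : ∀ ε > (0:ℝ), ‖dslope u 0 z‖ ≤ 1 + ε := by
    intro ε hε
    have hmaps : MapsTo u (ball (0:ℂ) 1) (ball (u 0) (1 + ε)) := by
      intro w hw
      rw [h0, mem_ball, dist_zero_right]
      exact lt_of_le_of_lt (hb w hw) (by linarith)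
    have := Complex.norm_dslope_le_div_of_mapsTo_ball hd (hmaps.mono_right ball_subset_closedBall) hz
    rwa [div_one] at this
  by_contra hcon
  push_neg at hcon
  have := key ((‖dslope u 0 z‖ - 1)/2) (by linarith)
  linarith

lemma ev_const_derivs {u : ℂ → ℂ} (h : u =ᶠ[𝓝 (0:ℂ)] fun _ => u 0) :
    deriv u 0 = 0 ∧ deriv (deriv u) 0 = 0 := by
  constructor
  · rw [h.deriv_eq]; simp
  · have h2 : deriv u =ᶠ[𝓝 (0:ℂ)] deriv (fun _ => u 0) := h.deriv
    rw [h2.deriv_eq]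
    have : deriv (fun _ : ℂ => u 0) = fun _ => (0:ℂ) := by
      funext w; simp
    rw [this]; simp

lemma SP0 {u : ℂ → ℂ} (hu : AnalyticOnNhd ℂ u (ball (0:ℂ) 1))
    (hb : ∀ z ∈ ball (0:ℂ) 1, ‖u z‖ ≤ 1) :
    ‖deriv u 0‖ ≤ 1 - (‖u 0‖)^2 := by
  have h0m : (0:ℂ) ∈ ball (0:ℂ) 1 := by simp
  set b := u 0 with hbdef
  rcases lt_or_ge (‖b‖) 1 with hblt | hbge
  · -- Möbius case
    set H : ℂ → ℂ := fun z => (u z - b) / (1 - (starRingEnd ℂ) b * u z) with hH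
    have hden : ∀ z ∈ ball (0:ℂ) 1, 1 - (starRingEnd ℂ) b * u z ≠ 0 :=
      fun z hz => moebius_denom_ne hblt (hb z hz)
    have hHan : AnalyticOnNhd ℂ H (ball (0:ℂ) 1) :=
      (hu.sub analyticOnNhd_const).div
        (analyticOnNhd_const.sub (analyticOnNhd_const.mul hu)) hden
    have hH0 : H 0 = 0 := by simp [hH, hbdef]
    have hHb : ∀ z ∈ ball (0:ℂ) 1, ‖H z‖ ≤ 1 := by
      intro z hz
      rw [hH]
      simp only [norm_div]
      rw [div_le_one (norm_pos_iff.mpr (hden z hz))]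
      exact moebius_abs hblt.le (hb z hz)
    have hds := schwarz_closed hHan hH0 hHb 0 h0m
    rw [dslope_same] at hds
    have hdu : DifferentiableAt ℂ u 0 := (hu 0 h0m).differentiableAt
    have hne : (1 - (starRingEnd ℂ) b * b) ≠ 0 := hden 0 h0m
    have hDH : deriv H 0 = deriv u 0 / (1 - (starRingEnd ℂ) b * b) := by
      rw [hH, deriv_fun_div (hdu.sub_const _)
        ((differentiableAt_const _).fun_sub ((differentiableAt_const _).fun_mul hdu)) hne]
      rw [deriv_sub_const]
      have h2 : deriv (fun z => 1 - (starRingEnd ℂ) b * u z) 0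
          = -((starRingEnd ℂ) b * deriv u 0) := by
        rw [deriv_const_sub, deriv_const_mul _ hdu]
      rw [h2]
      rw [show u 0 - b = 0 by simp [hbdef]]
      rw [← hbdef]
      field_simp
      ring
    have habs1 : ‖1 - (starRingEnd ℂ) b * b‖ = 1 - (‖b‖)^2 := by
      rw [mul_comm, Complex.mul_conj]
      rw [show (1 : ℂ) - (Complex.normSq b : ℂ) = ((1 - Complex.normSq b : ℝ) : ℂ) by push_cast; ring]
      rw [Complex.norm_of_nonneg (by rw [← Complex.sq_norm]; nlinarith [norm_nonneg b]), Complex.sq_norm]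
    rw [hDH, norm_div, habs1, div_le_one (by nlinarith [norm_nonneg b])] at hds
    exact hds
  · -- max modulus case
    have hmax : IsLocalMax (norm ∘ u) 0 := by
      filter_upwards [isOpen_ball.mem_nhds h0m] with w hw
      simp only [Function.comp_apply]
      exact le_trans (hb w hw) hbge
    have hev := Complex.eventually_eq_of_isLocalMax_norm
      (by filter_upwards [isOpen_ball.mem_nhds h0m] with w hw using (hu w hw).differentiableAt) hmax
    rw [(ev_const_derivs hev).1]
    have hb1 : ‖b‖ = 1 := le_antisymm (hb 0 h0m) hbge
    rw [hb1]
    simp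

lemma deriv_congr_ball {u v : ℂ → ℂ} (h : ∀ w ∈ ball (0:ℂ) 1, u w = v w) {z : ℂ}
    (hz : z ∈ ball (0:ℂ) 1) : deriv u z = deriv v z := by
  apply Filter.EventuallyEq.deriv_eq
  filter_upwards [isOpen_ball.mem_nhds hz] with w hw using h w hw

lemma abs_sub_le₂ (x y : ℂ) : ‖x - y‖ ≤ ‖x‖ + ‖y‖ := by
  simpa [sub_eq_add_neg] using norm_add_le x (-y)

lemma abs_one_sub_conj_self {a : ℂ} (ha : ‖a‖ ≤ 1) :
    ‖1 - (starRingEnd ℂ) a * a‖ = 1 - (‖a‖)^2 := by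
  rw [mul_comm, Complex.mul_conj]
  rw [show (1:ℂ) - (Complex.normSq a : ℂ) = ((1 - Complex.normSq a : ℝ):ℂ) by push_cast; ring]
  rw [Complex.norm_of_nonneg
    (by rw [← Complex.sq_norm]; nlinarith [norm_nonneg a])]
  rw [← Complex.sq_norm]

lemma numM1 {s t : ℝ} (hs1 : s ≤ 1) (h1t : 0 ≤ 1 - t^2) : s * (1 - t^2) ≤ 1 - t^2 := by
  nlinarith

lemma numM2 {s t d : ℝ} (hs0 : 0 ≤ s) (hs1 : s ≤ 1) (ht0 : 0 ≤ t) (ht1 : t ≤ 1)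
    (hd : d ≤ 1 - s^2) : 2 * d * (1 - t^2) + 2 * t * s * (s * (1 - t^2)) ≤ 2 * (1 - t^2) := by
  have h1t : (0:ℝ) ≤ 1 - t^2 := by nlinarith
  nlinarith [mul_le_mul_of_nonneg_right hd h1t,
    mul_nonneg (mul_nonneg (mul_nonneg hs0 hs0) h1t) (by linarith : (0:ℝ) ≤ 1 - t)]

lemma numA4 {t x y : ℝ} (ht0 : 0 ≤ t) (ht1 : t ≤ 1) (hx0 : 0 ≤ x) (hx : x ≤ 1 - t^2)
    (hy : y ≤ 2*(1 - t^2)) : 1/4 * y + 7/3 * (t * x) + 13/6 * t^3 ≤ 13/6 := by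
  have h1 : t*x ≤ t*(1-t^2) := mul_le_mul_of_nonneg_left hx ht0
  have h2 : (0:ℝ) ≤ (1-t) * (10 - 4*t - t^2) := by nlinarith
  nlinarith

lemma numA3 {t x : ℝ} (ht0 : 0 ≤ t) (ht1 : t ≤ 1) (hx : x ≤ 1 - t^2) :
    4/3 * t^2 + 2/3 * x ≤ 4/3 := by nlinarith

lemma numFinal {u v : ℝ} (hu0 : 0 ≤ u) (hu : u ≤ 4/3) (hv0 : 0 ≤ v) (hv : v ≤ 13/6) :
    u^2 + v^2 ≤ 233/36 := by nlinarith

theorem symToeplitz23_R (f : ℂ → ℂ)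
    (hf : AnalyticOnNhd ℂ f (ball (0:ℂ) 1))
    (hf0 : f 0 = 0) (hf1 : deriv f 0 = 1)
    (hre : ∀ z ∈ ball (0:ℂ) 1, 0 < (deriv f z).re)
    (a₂ a₃ a₄ A₂ A₃ A₄ : ℂ)
    (ha₂ : a₂ = iteratedDeriv 2 f 0 / 2)
    (ha₃ : a₃ = iteratedDeriv 3 f 0 / 6)
    (ha₄ : a₄ = iteratedDeriv 4 f 0 / 24)
    (hA₂ : A₂ = -a₂)
    (hA₃ : A₃ = 2 * a₂ ^ 2 - a₃)
    (hA₄ : A₄ = -a₄ + 5 * a₂ * a₃ - 5 * a₂ ^ 3) :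
    ‖A₃ ^ 2 - A₄ ^ 2‖ ≤ 233 / 36 := by
  have h0m : (0:ℂ) ∈ ball (0:ℂ) 1 := by simp
  set p : ℂ → ℂ := deriv f with hp
  have hpan : AnalyticOnNhd ℂ p (ball (0:ℂ) 1) := hf.deriv
  have hpne : ∀ z ∈ ball (0:ℂ) 1, p z + 1 ≠ 0 := by
    intro z hz h
    have h2 : (p z + 1).re = 0 := by rw [h]; simp
    rw [Complex.add_re, Complex.one_re] at h2
    have := hre z hz
    linarith
  set ω : ℂ → ℂ := fun z => (p z - 1)/(p z + 1) with hw
  have hωan : AnalyticOnNhd ℂ ω (ball (0:ℂ) 1) :=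
    (hpan.sub analyticOnNhd_const).div (hpan.add analyticOnNhd_const) hpne
  have hω0 : ω 0 = 0 := by rw [hw]; simp [hf1]
  have hωeq : ∀ z ∈ ball (0:ℂ) 1, ω z * (p z + 1) = p z - 1 := by
    intro z hz
    rw [hw]
    exact div_mul_cancel₀ _ (hpne z hz)
  have hωlt : ∀ z ∈ ball (0:ℂ) 1, ‖ω z‖ < 1 := by
    intro z hz
    have hres := hre z hz
    have hkey : Complex.normSq (p z - 1) < Complex.normSq (p z + 1) := by
      simp only [Complex.normSq_apply, Complex.sub_re, Complex.sub_im, Complex.add_re,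
        Complex.add_im, Complex.one_re, Complex.one_im]
      nlinarith
    have habs : ‖p z - 1‖ < ‖p z + 1‖ := by
      rw [Complex.norm_def, Complex.norm_def]
      exact Real.sqrt_lt_sqrt (Complex.normSq_nonneg _) hkey
    rw [hw]
    simp only [norm_div]
    rw [div_lt_one (norm_pos_iff.mpr (hpne z hz))]
    exact habs
  set g := dslope ω 0 with hg
  have hgan : AnalyticOnNhd ℂ g (ball (0:ℂ) 1) := dslope_analytic hωan
  have hωg : ∀ z : ℂ, ω z = z * g z := by
    intro z
    have h := sub_smul_dslope ω 0 z
    rw [sub_zero, smul_eq_mul, hω0, sub_zero] at h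
    rw [← h, hg]
  have hgb : ∀ z ∈ ball (0:ℂ) 1, ‖g z‖ ≤ 1 := by
    intro z hz
    have hd : DifferentiableOn ℂ ω (ball (0:ℂ) 1) :=
      fun w hw1 => (hωan w hw1).differentiableWithinAt
    have hmaps : MapsTo ω (ball (0:ℂ) 1) (ball (ω 0) 1) := by
      intro w hw1
      rw [hω0, mem_ball, dist_zero_right]
      exact hωlt w hw1
    have := Complex.norm_dslope_le_div_of_mapsTo_ball hd (hmaps.mono_right ball_subset_closedBall) hz
    rw [div_one] at this
    rw [hg]
    exact this
  clear_value p ω g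
  -- ω derivatives in terms of g
  have hganD : AnalyticOnNhd ℂ (deriv g) (ball (0:ℂ) 1) := hgan.deriv
  have hganD2 : AnalyticOnNhd ℂ (deriv (deriv g)) (ball (0:ℂ) 1) := hganD.deriv
  have hωfun : ω = fun w => w * g w := funext hωg
  have E1 : ∀ z ∈ ball (0:ℂ) 1, deriv ω z = g z + z * deriv g z := by
    intro z hz
    rw [hωfun, deriv_fun_mul differentiableAt_fun_id ((hgan z hz).differentiableAt)]
    simp
  have E2 : ∀ z ∈ ball (0:ℂ) 1, deriv (deriv ω) z = 2 * deriv g z + z * deriv (deriv g) z := by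
    intro z hz
    rw [deriv_congr_ball E1 hz,
      deriv_fun_add ((hgan z hz).differentiableAt)
        (differentiableAt_fun_id.fun_mul ((hganD z hz).differentiableAt)),
      deriv_fun_mul differentiableAt_fun_id ((hganD z hz).differentiableAt)]
    simp
    ring
  have E3 : deriv (deriv (deriv ω)) 0 = 3 * deriv (deriv g) 0 := by
    rw [deriv_congr_ball E2 h0m,
      deriv_fun_add ((analyticAt_const.fun_mul (hganD 0 h0m)).differentiableAt)
        (differentiableAt_fun_id.fun_mul ((hganD2 0 h0m).differentiableAt)),
      deriv_fun_mul differentiableAt_fun_id ((hganD2 0 h0m).differentiableAt),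
      deriv_const_mul _ ((hganD 0 h0m).differentiableAt)]
    simp
    ring
  -- p derivatives in terms of ω derivatives
  have hωanD : AnalyticOnNhd ℂ (deriv ω) (ball (0:ℂ) 1) := hωan.deriv
  have hωanD2 : AnalyticOnNhd ℂ (deriv (deriv ω)) (ball (0:ℂ) 1) := hωanD.deriv
  have hpanD : AnalyticOnNhd ℂ (deriv p) (ball (0:ℂ) 1) := hpan.deriv
  have hpanD2 : AnalyticOnNhd ℂ (deriv (deriv p)) (ball (0:ℂ) 1) := hpanD.deriv
  have B1 : ∀ z ∈ ball (0:ℂ) 1,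
      deriv ω z * (p z + 1) + ω z * deriv p z = deriv p z := by
    intro z hz
    have h1 := deriv_congr_ball hωeq hz
    rw [deriv_fun_mul ((hωan z hz).differentiableAt) (((hpan z hz).differentiableAt).add_const 1),
      deriv_add_const, deriv_sub_const] at h1
    exact h1
  have B2 : ∀ z ∈ ball (0:ℂ) 1,
      deriv (deriv ω) z * (p z + 1) + 2 * (deriv ω z * deriv p z)
        + ω z * deriv (deriv p) z = deriv (deriv p) z := by
    intro z hz
    have h1 := deriv_congr_ball B1 hz
    rw [deriv_fun_add
        (((hωanD z hz).differentiableAt).fun_mul (((hpan z hz).differentiableAt).add_const 1))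
        (((hωan z hz).differentiableAt).fun_mul ((hpanD z hz).differentiableAt)),
      deriv_fun_mul ((hωanD z hz).differentiableAt) (((hpan z hz).differentiableAt).add_const 1),
      deriv_fun_mul ((hωan z hz).differentiableAt) ((hpanD z hz).differentiableAt),
      deriv_add_const] at h1
    linear_combination h1
  have B3 : deriv (deriv (deriv ω)) 0 * 2 + 3 * (deriv (deriv ω) 0 * deriv p 0)
      + 3 * (deriv ω 0 * deriv (deriv p) 0) = deriv (deriv (deriv p)) 0 := by
    have h1 := deriv_congr_ball B2 h0m
    rw [deriv_fun_add
        ((((hωanD2 0 h0m).differentiableAt).fun_mul (((hpan 0 h0m).differentiableAt).add_const 1)).fun_add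
          ((analyticAt_const.fun_mul ((hωanD 0 h0m).fun_mul (hpanD 0 h0m))).differentiableAt))
        (((hωan 0 h0m).differentiableAt).fun_mul ((hpanD2 0 h0m).differentiableAt)),
      deriv_fun_add
        (((hωanD2 0 h0m).differentiableAt).fun_mul (((hpan 0 h0m).differentiableAt).add_const 1))
        ((analyticAt_const.fun_mul ((hωanD 0 h0m).fun_mul (hpanD 0 h0m))).differentiableAt),
      deriv_fun_mul ((hωanD2 0 h0m).differentiableAt) (((hpan 0 h0m).differentiableAt).add_const 1),
      deriv_const_mul _ (((hωanD 0 h0m).fun_mul (hpanD 0 h0m)).differentiableAt),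
      deriv_fun_mul ((hωanD 0 h0m).differentiableAt) ((hpanD 0 h0m).differentiableAt),
      deriv_fun_mul ((hωan 0 h0m).differentiableAt) ((hpanD2 0 h0m).differentiableAt),
      deriv_add_const, hω0, hf1] at h1
    linear_combination h1
  -- coefficients
  set c1 : ℂ := g 0 with hc1def
  set x1 : ℂ := deriv g 0 with hx1def
  set x2 : ℂ := deriv (deriv g) 0 with hx2def
  have hω1 : deriv ω 0 = c1 := by rw [E1 0 h0m]; simp [hc1def]
  have hω2 : deriv (deriv ω) 0 = 2 * x1 := by rw [E2 0 h0m]; simp [hx1def]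
  have hω3 : deriv (deriv (deriv ω)) 0 = 3 * x2 := E3
  have hp1 : deriv p 0 = 2 * c1 := by
    have := B1 0 h0m
    rw [hω0, hf1, hω1] at this
    linear_combination -this
  have hp2 : deriv (deriv p) 0 = 4 * x1 + 4 * c1^2 := by
    have := B2 0 h0m
    rw [hω0, hf1, hω1, hω2, hp1] at this
    linear_combination -this
  have hp3 : deriv (deriv (deriv p)) 0 = 6 * x2 + 24 * c1 * x1 + 12 * c1^3 := by
    have := B3
    rw [hω1, hω2, hω3, hp1, hp2] at this
    linear_combination -this
  -- iterated derivatives of f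
  have h2f : iteratedDeriv 2 f 0 = deriv p 0 := by
    rw [show (2:ℕ) = 1 + 1 from rfl, iteratedDeriv_succ', iteratedDeriv_one, ← hp]
  have h3f : iteratedDeriv 3 f 0 = deriv (deriv p) 0 := by
    rw [show (3:ℕ) = 2 + 1 from rfl, iteratedDeriv_succ',
      show (2:ℕ) = 1 + 1 from rfl, iteratedDeriv_succ, iteratedDeriv_one, ← hp]
  have h4f : iteratedDeriv 4 f 0 = deriv (deriv (deriv p)) 0 := by
    rw [show (4:ℕ) = 3 + 1 from rfl, iteratedDeriv_succ',
      show (3:ℕ) = 2 + 1 from rfl, iteratedDeriv_succ,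
      show (2:ℕ) = 1 + 1 from rfl, iteratedDeriv_succ, iteratedDeriv_one, ← hp]
  -- coefficient bounds
  have ht1 : ‖c1‖ ≤ 1 := hgb 0 h0m
  have key : ‖x1‖ ≤ 1 - (‖c1‖)^2 ∧
      ‖x2‖ ≤ 2 * (1 - (‖c1‖)^2) := by
    rcases lt_or_ge (‖c1‖) 1 with hlt | hge
    · -- Möbius case
      set F : ℂ → ℂ := fun z => (g z - c1) / (1 - (starRingEnd ℂ) c1 * g z) with hFdef
      have hden : ∀ z ∈ ball (0:ℂ) 1, 1 - (starRingEnd ℂ) c1 * g z ≠ 0 :=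
        fun z hz => moebius_denom_ne hlt (hgb z hz)
      have hFan : AnalyticOnNhd ℂ F (ball (0:ℂ) 1) :=
        (hgan.sub analyticOnNhd_const).div
          (analyticOnNhd_const.sub (analyticOnNhd_const.mul hgan)) hden
      have hF0 : F 0 = 0 := by rw [hFdef]; simp [hc1def]
      have hFb : ∀ z ∈ ball (0:ℂ) 1, ‖F z‖ ≤ 1 := by
        intro z hz
        rw [hFdef]
        simp only [norm_div]
        rw [div_le_one (norm_pos_iff.mpr (hden z hz))]
        exact moebius_abs hlt.le (hgb z hz)
      have hFeq : ∀ z ∈ ball (0:ℂ) 1,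
          F z * (1 - (starRingEnd ℂ) c1 * g z) = g z - c1 := by
        intro z hz
        rw [hFdef]
        exact div_mul_cancel₀ _ (hden z hz)
      set G := dslope F 0 with hGdef
      have hGan : AnalyticOnNhd ℂ G (ball (0:ℂ) 1) := dslope_analytic hFan
      have hGb : ∀ z ∈ ball (0:ℂ) 1, ‖G z‖ ≤ 1 := by
        intro z hz
        rw [hGdef]
        exact schwarz_closed hFan hF0 hFb z hz
      have hFG : ∀ z : ℂ, F z = z * G z := by
        intro z
        have h := sub_smul_dslope F 0 z
        rw [sub_zero, smul_eq_mul, hF0, sub_zero] at h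
        rw [← h, hGdef]
      have hSP : ‖deriv G 0‖ ≤ 1 - (‖G 0‖)^2 := SP0 hGan hGb
      clear_value F G
      have hGanD : AnalyticOnNhd ℂ (deriv G) (ball (0:ℂ) 1) := hGan.deriv
      have hFanD : AnalyticOnNhd ℂ (deriv F) (ball (0:ℂ) 1) := hFan.deriv
      have hFfun : F = fun w => w * G w := funext hFG
      have hDF : ∀ z ∈ ball (0:ℂ) 1, deriv F z = G z + z * deriv G z := by
        intro z hz
        rw [hFfun, deriv_fun_mul differentiableAt_fun_id ((hGan z hz).differentiableAt)]
        simp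
      have hDF0 : deriv F 0 = G 0 := by rw [hDF 0 h0m]; simp
      have hD2F0 : deriv (deriv F) 0 = 2 * deriv G 0 := by
        rw [deriv_congr_ball hDF h0m,
          deriv_fun_add ((hGan 0 h0m).differentiableAt)
            (differentiableAt_fun_id.fun_mul ((hGanD 0 h0m).differentiableAt)),
          deriv_fun_mul differentiableAt_fun_id ((hGanD 0 h0m).differentiableAt)]
        simp
        ring
      have C1 : ∀ z ∈ ball (0:ℂ) 1,
          deriv F z * (1 - (starRingEnd ℂ) c1 * g z)
            + F z * (-((starRingEnd ℂ) c1 * deriv g z)) = deriv g z := by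
        intro z hz
        have h1 := deriv_congr_ball hFeq hz
        rw [deriv_fun_mul ((hFan z hz).differentiableAt)
            ((differentiableAt_const _).fun_sub
              ((differentiableAt_const _).fun_mul ((hgan z hz).differentiableAt))),
          deriv_const_sub, deriv_const_mul _ ((hgan z hz).differentiableAt),
          deriv_sub_const] at h1
        linear_combination h1
      have hx1eq : x1 = G 0 * (1 - (starRingEnd ℂ) c1 * c1) := by
        have h1 := C1 0 h0m
        rw [hF0, hDF0, ← hc1def, ← hx1def] at h1
        linear_combination -h1
      have hx2eq : x2 = 2 * deriv G 0 * (1 - (starRingEnd ℂ) c1 * c1)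
          - 2 * (starRingEnd ℂ) c1 * G 0 * x1 := by
        have h1 := deriv_congr_ball C1 h0m
        rw [deriv_fun_add
            (((hFanD 0 h0m).differentiableAt).fun_mul
              ((differentiableAt_const _).fun_sub
                ((differentiableAt_const _).fun_mul ((hgan 0 h0m).differentiableAt))))
            (((hFan 0 h0m).differentiableAt).fun_mul
              (((differentiableAt_const _).fun_mul ((hganD 0 h0m).differentiableAt)).fun_neg)),
          deriv_fun_mul ((hFanD 0 h0m).differentiableAt)
            ((differentiableAt_const _).fun_sub
              ((differentiableAt_const _).fun_mul ((hgan 0 h0m).differentiableAt))),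
          deriv_fun_mul ((hFan 0 h0m).differentiableAt)
            (((differentiableAt_const _).fun_mul ((hganD 0 h0m).differentiableAt)).fun_neg),
          deriv_const_sub, deriv_const_mul _ ((hgan 0 h0m).differentiableAt),
          deriv.fun_neg, deriv_const_mul _ ((hganD 0 h0m).differentiableAt),
          hF0, hDF0, hD2F0, ← hc1def, ← hx1def, ← hx2def] at h1
        linear_combination -h1
      have habsq : ‖1 - (starRingEnd ℂ) c1 * c1‖
          = 1 - (‖c1‖)^2 := abs_one_sub_conj_self ht1
      have hG0 : ‖G 0‖ ≤ 1 := hGb 0 h0m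
      have ht0' : (0:ℝ) ≤ ‖c1‖ := norm_nonneg _
      have hs0 : (0:ℝ) ≤ ‖G 0‖ := norm_nonneg _
      have hx1abs : ‖x1‖ = ‖G 0‖ * (1 - (‖c1‖)^2) := by
        rw [hx1eq, norm_mul, habsq]
      have h1t : (0:ℝ) ≤ 1 - (‖c1‖)^2 := by nlinarith
      constructor
      · rw [hx1abs]
        exact numM1 hG0 h1t
      · rw [hx2eq]
        refine le_trans (abs_sub_le₂ _ _) ?_
        rw [norm_mul, norm_mul, norm_mul, norm_mul, norm_mul, habsq, Complex.norm_conj, hx1abs]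
        have e2 : ‖(2:ℂ)‖ = 2 := by simp
        rw [e2]
        have := numM2 hs0 hG0 ht0' hlt.le hSP
        linarith
    · -- max modulus case
      have hmax : IsLocalMax (norm ∘ g) 0 := by
        filter_upwards [isOpen_ball.mem_nhds h0m] with w hw1
        simp only [Function.comp_apply]
        exact le_trans (hgb w hw1) hge
      have hev := Complex.eventually_eq_of_isLocalMax_norm
        (by filter_upwards [isOpen_ball.mem_nhds h0m] with w hw1
            using (hgan w hw1).differentiableAt) hmax
      obtain ⟨hd1, hd2⟩ := ev_const_derivs hev
      have hb1 : ‖c1‖ = 1 := le_antisymm ht1 hge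
      constructor
      · rw [hx1def, hd1, hb1]; simp
      · rw [hx2def, hd2, hb1]; simp
  obtain ⟨hc2, hc3⟩ := key
  clear_value c1 x1 x2
  -- final algebra
  have hA3 : A₃ = (4/3) * c1^2 - (2/3) * x1 := by
    rw [hA₃, ha₂, ha₃, h2f, h3f, hp1, hp2]; ring
  have hA4 : A₄ = -(1/4) * x2 + (7/3) * (c1 * x1) - (13/6) * c1^3 := by
    rw [hA₄, ha₂, ha₃, ha₄, h2f, h3f, h4f, hp1, hp2, hp3]; ring
  set t := ‖c1‖ with htdef
  have ht0 : 0 ≤ t := norm_nonneg c1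
  have hx10 : 0 ≤ ‖x1‖ := norm_nonneg x1
  have hx20 : 0 ≤ ‖x2‖ := norm_nonneg x2
  have hA3b : ‖A₃‖ ≤ 4/3 := by
    rw [hA3]
    refine le_trans (abs_sub_le₂ _ _) ?_
    rw [norm_mul, norm_mul, norm_pow]
    have e1 : ‖(4/3 : ℂ)‖ = 4/3 := by
      rw [norm_div]; simp
    have e2 : ‖(2/3 : ℂ)‖ = 2/3 := by
      rw [norm_div]; simp
    rw [e1, e2]
    have := numA3 ht0 ht1 hc2
    linarith
  have hA4b : ‖A₄‖ ≤ 13/6 := by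
    rw [hA4]
    refine le_trans (abs_sub_le₂ _ _) ?_
    have step : ‖-(1/4) * x2 + (7/3) * (c1 * x1)‖
        ≤ ‖-(1/4) * x2‖ + ‖(7/3) * (c1 * x1)‖ :=
      norm_add_le _ _
    refine le_trans (add_le_add_left step _) ?_
    rw [norm_mul, norm_mul, norm_mul, norm_mul, norm_pow, norm_neg]
    have e1 : ‖(1/4 : ℂ)‖ = 1/4 := by rw [norm_div]; simp
    have e2 : ‖(7/3 : ℂ)‖ = 7/3 := by rw [norm_div]; simp
    have e3 : ‖(13/6 : ℂ)‖ = 13/6 := by rw [norm_div]; simp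
    rw [e1, e2, e3]
    have := numA4 ht0 ht1 hx10 hc2 hc3
    linarith
  have htri : ‖A₃^2 - A₄^2‖ ≤ (‖A₃‖)^2 + (‖A₄‖)^2 := by
    refine le_trans (abs_sub_le₂ _ _) ?_
    rw [norm_pow, norm_pow]
  have hA30 : 0 ≤ ‖A₃‖ := norm_nonneg _
  have hA40 : 0 ≤ ‖A₄‖ := norm_nonneg _
  have := numFinal hA30 hA3b hA40 hA4b
  linarith
end

section
/- Let f be in the class R (bounded turning) and let A_2, A_3, A_4 be the coefficients of the inverse function. Then the symmetric Toeplitz determinant satisfies |T^s_{3,2}(f^{-1})| = |(A_2 - A_4)(A_2^2 - 2A_3^2 + A_2 A_4)| ≤ 817/108. -/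
open Complex Metric Set intervalIntegral Topology Filter

noncomputable def Complex.abs : AbsoluteValue ℂ ℝ := NormedField.toAbsoluteValue ℂ
lemma Complex.norm_eq_abs (z : ℂ) : ‖z‖ = Complex.abs z := rfl
@[simp] lemma Complex.abs_exp (z : ℂ) : Complex.abs (Complex.exp z) = Real.exp z.re := Complex.norm_exp z
lemma Complex.sq_abs (z : ℂ) : Complex.abs z ^ 2 = Complex.normSq z := Complex.sq_norm z
@[simp] lemma Complex.abs_ofReal (x : ℝ) : Complex.abs (x : ℂ) = |x| := by
  rw [← Complex.norm_eq_abs]; simp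
@[simp] lemma Complex.abs_two : Complex.abs (2 : ℂ) = 2 := by
  rw [← Complex.norm_eq_abs]; simp
@[simp] lemma Complex.abs_ofNat (n : ℕ) [n.AtLeastTwo] :
    Complex.abs (no_index (OfNat.ofNat n : ℂ)) = OfNat.ofNat n := by
  rw [← Complex.norm_eq_abs]; simp

namespace SymToeplitzAux

noncomputable def E (θ : ℝ) : ℂ := Complex.exp (θ * I)
noncomputable def U (θ : ℝ) : ℂ := Complex.exp (-(θ * I))

lemma contE : Continuous E := by unfold E; fun_prop
lemma contU : Continuous U := by unfold U; fun_prop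
lemma UE (θ : ℝ) : U θ * E θ = 1 := by unfold U E; rw [← Complex.exp_add]; simp
lemma absE (θ : ℝ) : Complex.abs (E θ) = 1 := by unfold E; simp [Complex.abs_exp]
lemma absU (θ : ℝ) : Complex.abs (U θ) = 1 := by unfold U; simp [Complex.abs_exp]
lemma conjU (θ : ℝ) : (starRingEnd ℂ) (U θ) = E θ := by
  unfold U E; rw [← Complex.exp_conj]; congr 1; simp
lemma conjE (θ : ℝ) : (starRingEnd ℂ) (E θ) = U θ := by
  rw [← conjU, Complex.conj_conj]
lemma circleMap_zero' (r θ : ℝ) : circleMap 0 r θ = r * E θ := by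
  simp [circleMap, E]
lemma intervalIntegral_conj {f : ℝ → ℂ} {a b : ℝ} :
    (∫ x in a..b, (starRingEnd ℂ) (f x)) = (starRingEnd ℂ) (∫ x in a..b, f x) := by
  rw [intervalIntegral, intervalIntegral, integral_conj, integral_conj, ← map_sub]

end SymToeplitzAux

open SymToeplitzAux
variable {p : ℂ → ℂ}

lemma q_continuous (hp : DifferentiableOn ℂ p (ball (0:ℂ) 1)) {r : ℝ} (hr0 : 0 < r) (hr1 : r < 1) :
    Continuous (fun θ : ℝ => p (r * E θ)) := by
  apply (hp.continuousOn).comp_continuous (continuous_const.mul contE)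
  intro θ
  show (r:ℂ) * E θ ∈ ball (0:ℂ) 1
  simp only [mem_ball, dist_zero_right, norm_mul]
  rw [Complex.norm_eq_abs, Complex.norm_eq_abs, absE]
  simpa [abs_of_pos hr0] using hr1

lemma vanish_integral (hp : DifferentiableOn ℂ p (ball (0:ℂ) 1)) {r : ℝ} (hr0 : 0 < r) (hr1 : r < 1)
    (k : ℕ) :
    ∫ θ in (0:ℝ)..2*Real.pi, E θ ^ (k+1) * p (r * E θ) = 0 := by
  have hball : closedBall (0:ℂ) r ⊆ ball 0 1 := closedBall_subset_ball (by exact_mod_cast hr1)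
  have hzero : (∮ z in C(0, r), z ^ k * p z) = 0 := by
    apply circleIntegral_eq_zero_of_differentiable_on_off_countable hr0.le Set.countable_empty
    · apply ContinuousOn.mul (by fun_prop)
      exact (hp.continuousOn).mono hball
    · intro z hz
      exact (differentiableAt_pow k).mul ((hp.differentiableAt
        (isOpen_ball.mem_nhds (ball_subset_ball (by exact_mod_cast hr1.le) hz.1))))
  rw [circleIntegral] at hzero
  have key : ∀ θ : ℝ, deriv (circleMap 0 r) θ • ((circleMap 0 r θ) ^ k * p (circleMap 0 r θ))
      = (I * r^(k+1)) * (E θ ^ (k+1) * p (r * E θ)) := by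
    intro θ
    rw [deriv_circleMap, circleMap_zero', smul_eq_mul]
    push_cast
    ring
  simp only [key] at hzero
  rw [intervalIntegral.integral_const_mul] at hzero
  have hI : (I * (r:ℂ)^(k+1)) ≠ 0 := by
    apply mul_ne_zero Complex.I_ne_zero
    exact pow_ne_zero _ (Complex.ofReal_ne_zero.mpr hr0.ne')
  exact (mul_eq_zero.mp hzero).resolve_left hI

lemma coeff_integral (hp : DifferentiableOn ℂ p (ball (0:ℂ) 1)) {r : ℝ} (hr0 : 0 < r) (hr1 : r < 1)
    (k : ℕ) :
    ∫ θ in (0:ℝ)..2*Real.pi, U θ ^ k * p (r * E θ)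
      = 2*Real.pi*r^k*(iteratedDeriv k p 0 / (k.factorial : ℂ)) := by
  set R : NNReal := ⟨r, hr0.le⟩ with hR
  have hball : closedBall (0:ℂ) R ⊆ ball 0 1 := by
    apply closedBall_subset_ball
    show (R:ℝ) < 1
    exact_mod_cast hr1
  have hps : HasFPowerSeriesOnBall p (cauchyPowerSeries p 0 R) 0 R :=
    (hp.mono hball).hasFPowerSeriesOnBall (by exact_mod_cast hr0)
  have hcoeff : (k.factorial : ℂ) • (cauchyPowerSeries p 0 R k fun _ => (1:ℂ))
      = iteratedDeriv k p 0 := by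
    have h1 := hps.factorial_smul (1:ℂ) k
    rw [iteratedDeriv_eq_iteratedFDeriv]
    rw [← h1]
    simp [nsmul_eq_mul]
  rw [cauchyPowerSeries_apply] at hcoeff
  rw [circleIntegral] at hcoeff
  have key : ∀ θ : ℝ, deriv (circleMap 0 R) θ •
        (((1:ℂ) / (circleMap 0 R θ - 0)) ^ k • ((circleMap 0 R θ - 0)⁻¹ • p (circleMap 0 R θ)))
      = (I * ((r:ℂ)⁻¹)^k) * (U θ ^ k * p (r * E θ)) := by
    intro θ
    rw [deriv_circleMap]
    have hc : circleMap 0 (R:ℝ) θ = r * E θ := circleMap_zero' r θ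
    have hRr : (R:ℝ) = r := rfl
    rw [hRr] at hc ⊢
    rw [hc]
    simp only [smul_eq_mul, sub_zero]
    have hEne : E θ ≠ 0 := Complex.exp_ne_zero _
    have hrne : (r:ℂ) ≠ 0 := Complex.ofReal_ne_zero.mpr hr0.ne'
    have hU : U θ = (E θ)⁻¹ := by
      unfold U E; rw [Complex.exp_neg]
    rw [hU]
    field_simp
    ring
  simp only [key] at hcoeff
  rw [intervalIntegral.integral_const_mul] at hcoeff
  set J := ∫ θ in (0:ℝ)..2*Real.pi, U θ ^ k * p (r * E θ) with hJ
  have hπ : (Real.pi : ℂ) ≠ 0 := Complex.ofReal_ne_zero.mpr Real.pi_ne_zero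
  have hrne : (r:ℂ) ≠ 0 := Complex.ofReal_ne_zero.mpr hr0.ne'
  have hfac : ((k.factorial : ℕ) : ℂ) ≠ 0 := Nat.cast_ne_zero.mpr k.factorial_ne_zero
  have hc2 : (k.factorial:ℂ) * ((2*(Real.pi:ℂ)*I)⁻¹ * (I*((r:ℂ)⁻¹)^k*J)) = iteratedDeriv k p 0 := by
    simpa [smul_eq_mul] using hcoeff
  rw [inv_pow] at hc2
  have hI := Complex.I_ne_zero
  have hrk : ((r:ℂ))^k ≠ 0 := pow_ne_zero _ hrne
  field_simp at hc2
  have hc3 : (k.factorial:ℂ) * J = iteratedDeriv k p 0 * (2*(Real.pi:ℂ)*(r:ℂ)^k) := by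
    apply mul_left_cancel₀ hI
    linear_combination I * hc2
  field_simp
  linear_combination hc3
lemma moment_bounds (w : ℝ → ℝ) (hw : Continuous w) (hpos : ∀ θ, 0 ≤ w θ)
    (μ1 μ2 μ3 : ℂ)
    (h0 : (∫ θ in (0:ℝ)..2*Real.pi, ((w θ : ℝ) : ℂ)) = 2*Real.pi)
    (h1 : (∫ θ in (0:ℝ)..2*Real.pi, U θ * w θ) = 2*Real.pi*μ1)
    (h2 : (∫ θ in (0:ℝ)..2*Real.pi, U θ^2 * w θ) = 2*Real.pi*μ2)
    (h3 : (∫ θ in (0:ℝ)..2*Real.pi, U θ^3 * w θ) = 2*Real.pi*μ3) :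
    Complex.abs μ1 ≤ 1 ∧ Complex.abs (μ2 - μ1^2) ≤ 1 - (Complex.abs μ1)^2 ∧
      Complex.abs (μ3 - 3*μ1*μ2 + 2*μ1^3) ≤ (1 + Complex.abs μ1)*(1 - (Complex.abs μ1)^2) := by
  have hπ : (0:ℝ) < Real.pi := Real.pi_pos
  have hle : (0:ℝ) ≤ 2*Real.pi := by linarith
  -- real integral of w
  have hwint : (∫ θ in (0:ℝ)..2*Real.pi, w θ) = 2*Real.pi := by
    have : ((∫ θ in (0:ℝ)..2*Real.pi, w θ : ℝ) : ℂ) = ((2*Real.pi : ℝ) : ℂ) := by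
      rw [← intervalIntegral.integral_ofReal]
      rw [h0]; push_cast; ring
    exact_mod_cast this
  set a := μ1 with ha
  set s := Complex.abs μ1 with hs
  have hs0 : 0 ≤ s := Complex.abs.nonneg _
  -- conj integral
  have hE1 : (∫ θ in (0:ℝ)..2*Real.pi, E θ * w θ) = 2*Real.pi*(starRingEnd ℂ) μ1 := by
    have hpt : ∀ θ : ℝ, E θ * (w θ : ℂ) = (starRingEnd ℂ) (U θ * (w θ : ℂ)) := by
      intro θ
      rw [map_mul, conjU, Complex.conj_ofReal]
    simp only [hpt]
    rw [intervalIntegral_conj, h1]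
    simp only [map_mul, Complex.conj_ofReal, map_ofNat, ha]
  -- integrability
  have hwC : Continuous (fun θ : ℝ => (w θ : ℂ)) := Complex.continuous_ofReal.comp hw
  have intw : IntervalIntegrable (fun θ => (w θ : ℂ)) MeasureTheory.volume 0 (2*Real.pi) :=
    hwC.intervalIntegrable 0 (2*Real.pi)
  have intU : ∀ k : ℕ, IntervalIntegrable (fun θ => U θ^k * (w θ:ℂ)) MeasureTheory.volume 0 (2*Real.pi) :=
    fun k => (((contU.pow k)).mul hwC).intervalIntegrable 0 (2*Real.pi)
  have intE : IntervalIntegrable (fun θ => E θ * (w θ:ℂ)) MeasureTheory.volume 0 (2*Real.pi) :=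
    (contE.mul hwC).intervalIntegrable 0 (2*Real.pi)
  -- first inequality
  have ineq1 : Complex.abs μ1 ≤ 1 := by
    have hnorm := intervalIntegral.norm_integral_le_integral_norm
      (f := fun θ => U θ * (w θ:ℂ)) (μ := MeasureTheory.volume) hle
    rw [h1] at hnorm
    have hptn : ∀ θ : ℝ, ‖U θ * (w θ:ℂ)‖ = w θ := by
      intro θ
      rw [norm_mul, Complex.norm_eq_abs, Complex.norm_eq_abs, absU, one_mul,
        Complex.abs_ofReal, _root_.abs_of_nonneg (hpos θ)]
    simp only [hptn] at hnorm
    rw [hwint] at hnorm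
    rw [show (2:ℂ)*Real.pi*a = ((2*Real.pi:ℝ):ℂ)*μ1 by push_cast; ring] at hnorm
    rw [norm_mul, Complex.norm_real, Real.norm_eq_abs, _root_.abs_of_nonneg hle,
      Complex.norm_eq_abs] at hnorm
    nlinarith
  -- pointwise conjugate square identity
  have habs2 : ∀ θ : ℝ, (((Complex.abs (U θ - a))^2 : ℝ) : ℂ) = (U θ - a) * (starRingEnd ℂ) (U θ - a) := by
    intro θ
    rw [Complex.mul_conj]
    norm_cast
    exact Complex.sq_abs _
  have hBpt : ∀ θ : ℝ, (((Complex.abs (U θ - a))^2 * w θ : ℝ) : ℂ)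
      = ((w θ : ℂ) + (a * (starRingEnd ℂ) a) * (w θ:ℂ)) - (starRingEnd ℂ) a * (U θ * (w θ:ℂ)) - a * (E θ * (w θ:ℂ)) := by
    intro θ
    have hc : (((Complex.abs (U θ - a))^2 * w θ : ℝ) : ℂ)
        = (U θ - a) * (starRingEnd ℂ) (U θ - a) * (w θ : ℂ) := by
      push_cast
      rw [← Complex.ofReal_pow, habs2 θ]
    rw [hc, map_sub, conjU]
    linear_combination ((w θ : ℂ)) * UE θ
  have intUw : IntervalIntegrable (fun θ => U θ * (w θ:ℂ)) MeasureTheory.volume 0 (2*Real.pi) :=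
    (contU.mul hwC).intervalIntegrable 0 (2*Real.pi)
  have hBint : (∫ θ in (0:ℝ)..2*Real.pi, (((Complex.abs (U θ - a))^2 * w θ : ℝ) : ℂ))
      = 2*Real.pi*(1 - a * (starRingEnd ℂ) a) := by
    simp only [hBpt]
    rw [intervalIntegral.integral_sub ((intw.add (intw.const_mul _)).sub (intUw.const_mul _))
        (intE.const_mul _),
      intervalIntegral.integral_sub (intw.add (intw.const_mul _)) (intUw.const_mul _),
      intervalIntegral.integral_add intw (intw.const_mul _),
      intervalIntegral.integral_const_mul, intervalIntegral.integral_const_mul,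
      intervalIntegral.integral_const_mul, h0, h1, hE1]
    ring
  have haa : a * (starRingEnd ℂ) a = ((s^2 : ℝ) : ℂ) := by
    rw [Complex.mul_conj]
    norm_cast
    exact (Complex.sq_abs _).symm
  have hBreal : (∫ θ in (0:ℝ)..2*Real.pi, (Complex.abs (U θ - a))^2 * w θ) = 2*Real.pi*(1 - s^2) := by
    have : ((∫ θ in (0:ℝ)..2*Real.pi, (Complex.abs (U θ - a))^2 * w θ : ℝ) : ℂ)
        = ((2*Real.pi*(1 - s^2) : ℝ) : ℂ) := by
      rw [← intervalIntegral.integral_ofReal]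
      rw [hBint, haa]
      push_cast
      ring
    exact_mod_cast this
  have hd0 : 0 ≤ 1 - s^2 := by
    nlinarith [hBreal, intervalIntegral.integral_nonneg (μ := MeasureTheory.volume) (f := fun θ => Complex.abs (U θ - a) ^ 2 * w θ) hle
      (fun θ _ => mul_nonneg (sq_nonneg (Complex.abs (U θ - a))) (hpos θ)), hπ]
  -- second inequality
  have hApt : ∀ θ : ℝ, (U θ - a)^2 * (w θ:ℂ)
      = U θ^2*(w θ:ℂ) - (2*a)*(U θ*(w θ:ℂ)) + (a^2)*(w θ:ℂ) := by
    intro θ; ring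
  have hAint : (∫ θ in (0:ℝ)..2*Real.pi, (U θ - a)^2 * (w θ:ℂ)) = 2*Real.pi*(μ2 - a^2) := by
    simp only [hApt]
    rw [intervalIntegral.integral_add ((intU 2).sub (intUw.const_mul _)) (intw.const_mul _),
      intervalIntegral.integral_sub (intU 2) (intUw.const_mul _),
      intervalIntegral.integral_const_mul, intervalIntegral.integral_const_mul, h0, h1, h2]
    ring
  have ineq2 : Complex.abs (μ2 - μ1^2) ≤ 1 - s^2 := by
    have hnorm := intervalIntegral.norm_integral_le_integral_norm
      (f := fun θ => (U θ - a)^2 * (w θ:ℂ)) (μ := MeasureTheory.volume) hle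
    rw [hAint] at hnorm
    have hptn : ∀ θ : ℝ, ‖(U θ - a)^2 * (w θ:ℂ)‖ = (Complex.abs (U θ - a))^2 * w θ := by
      intro θ
      rw [norm_mul, norm_pow, Complex.norm_eq_abs, Complex.norm_eq_abs, Complex.abs_ofReal,
        _root_.abs_of_nonneg (hpos θ)]
    simp only [hptn] at hnorm
    rw [hBreal] at hnorm
    rw [show (2:ℂ)*Real.pi*(μ2 - a^2) = ((2*Real.pi:ℝ):ℂ)*(μ2 - a^2) by push_cast; ring] at hnorm
    rw [norm_mul, Complex.norm_real, Real.norm_eq_abs, _root_.abs_of_nonneg hle,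
      Complex.norm_eq_abs] at hnorm
    nlinarith [Complex.abs.nonneg (μ2 - a^2)]
  -- third inequality
  have hCpt : ∀ θ : ℝ, (U θ - a)^3 * (w θ:ℂ)
      = U θ^3*(w θ:ℂ) - (3*a)*(U θ^2*(w θ:ℂ)) + (3*a^2)*(U θ*(w θ:ℂ)) - (a^3)*(w θ:ℂ) := by
    intro θ; ring
  have hCint : (∫ θ in (0:ℝ)..2*Real.pi, (U θ - a)^3 * (w θ:ℂ))
      = 2*Real.pi*(μ3 - 3*a*μ2 + 2*a^3) := by
    simp only [hCpt]
    rw [intervalIntegral.integral_sub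
        (((intU 3).sub ((intU 2).const_mul _)).add (intUw.const_mul _)) (intw.const_mul _),
      intervalIntegral.integral_add ((intU 3).sub ((intU 2).const_mul _)) (intUw.const_mul _),
      intervalIntegral.integral_sub (intU 3) ((intU 2).const_mul _),
      intervalIntegral.integral_const_mul, intervalIntegral.integral_const_mul,
      intervalIntegral.integral_const_mul, h0, h1, h2, h3]
    ring
  have contAbs : Continuous (fun θ : ℝ => Complex.abs (U θ - a)) := by
    have : Continuous (fun θ : ℝ => U θ - a) := contU.sub continuous_const
    exact this.norm
  have ineq3 : Complex.abs (μ3 - 3*μ1*μ2 + 2*μ1^3) ≤ (1 + s)*(1 - s^2) := by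
    have hnorm := intervalIntegral.norm_integral_le_integral_norm
      (f := fun θ => (U θ - a)^3 * (w θ:ℂ)) (μ := MeasureTheory.volume) hle
    rw [hCint] at hnorm
    have hptn : ∀ θ : ℝ, ‖(U θ - a)^3 * (w θ:ℂ)‖ = (Complex.abs (U θ - a))^3 * w θ := by
      intro θ
      rw [norm_mul, norm_pow, Complex.norm_eq_abs, Complex.norm_eq_abs, Complex.abs_ofReal,
        _root_.abs_of_nonneg (hpos θ)]
    simp only [hptn] at hnorm
    have hmono : (∫ θ in (0:ℝ)..2*Real.pi, (Complex.abs (U θ - a))^3 * w θ)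
        ≤ ∫ θ in (0:ℝ)..2*Real.pi, (1+s) * ((Complex.abs (U θ - a))^2 * w θ) := by
      apply intervalIntegral.integral_mono_on hle
        (((contAbs.pow 3).mul hw).intervalIntegrable 0 (2*Real.pi))
        ((continuous_const.mul ((contAbs.pow 2).mul hw)).intervalIntegrable 0 (2*Real.pi))
      intro θ _
      have hub : Complex.abs (U θ - a) ≤ 1 + s := by
        have h := norm_sub_le (U θ) a
        simp only [Complex.norm_eq_abs] at h
        rw [absU] at h
        exact h
      have h2n : 0 ≤ (Complex.abs (U θ - a))^2 * w θ :=
        mul_nonneg (sq_nonneg _) (hpos θ)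
      calc (Complex.abs (U θ - a))^3 * w θ
          = Complex.abs (U θ - a) * ((Complex.abs (U θ - a))^2 * w θ) := by ring
        _ ≤ (1+s) * ((Complex.abs (U θ - a))^2 * w θ) :=
            mul_le_mul_of_nonneg_right hub h2n
    rw [intervalIntegral.integral_const_mul, hBreal] at hmono
    rw [show (2:ℂ)*Real.pi*(μ3 - 3*a*μ2 + 2*a^3) = ((2*Real.pi:ℝ):ℂ)*(μ3 - 3*a*μ2 + 2*a^3)
      by push_cast; ring] at hnorm
    rw [norm_mul, Complex.norm_real, Real.norm_eq_abs, _root_.abs_of_nonneg hle,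
      Complex.norm_eq_abs] at hnorm
    have hfinal : 2*Real.pi*Complex.abs (μ3 - 3*a*μ2 + 2*a^3) ≤ 2*Real.pi*((1+s)*(1-s^2)) := by
      calc 2*Real.pi*Complex.abs (μ3 - 3*a*μ2 + 2*a^3)
          ≤ ∫ θ in (0:ℝ)..2*Real.pi, (Complex.abs (U θ - a))^3 * w θ := hnorm
        _ ≤ (1+s)*(2*Real.pi*(1-s^2)) := hmono
        _ = 2*Real.pi*((1+s)*(1-s^2)) := by ring
    nlinarith [Complex.abs.nonneg (μ3 - 3*a*μ2 + 2*a^3)]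
  exact ⟨ineq1, ineq2, ineq3⟩
lemma wmoment (hp : DifferentiableOn ℂ p (ball (0:ℂ) 1)) {r : ℝ} (hr0 : 0 < r) (hr1 : r < 1)
    (k : ℕ) :
    (∫ θ in (0:ℝ)..2*Real.pi, U θ^(k+1) * (((p (r * E θ)).re : ℝ) : ℂ))
      = Real.pi * r^(k+1) * (iteratedDeriv (k+1) p 0 / ((k+1).factorial : ℂ)) := by
  have hq := q_continuous hp hr0 hr1
  have split : ∀ θ : ℝ, U θ^(k+1) * (((p (r * E θ)).re : ℝ) : ℂ)
      = (U θ^(k+1) * p (r * E θ))/2 + (starRingEnd ℂ) (E θ^(k+1) * p (r * E θ))/2 := by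
    intro θ
    rw [map_mul, map_pow, conjE]
    linear_combination (norm := (push_cast; ring_nf)) (-(U θ^(k+1))/2) * (Complex.add_conj (p (r * E θ)))
  simp only [split]
  have int2 : IntervalIntegrable (fun θ => (starRingEnd ℂ) (E θ^(k+1) * p (r * E θ)) / 2)
      MeasureTheory.volume 0 (2*Real.pi) :=
    ((Complex.continuous_conj.comp ((contE.pow (k+1)).mul hq)).div_const 2).intervalIntegrable 0 (2*Real.pi)
  rw [intervalIntegral.integral_add
      (show IntervalIntegrable (fun θ => U θ^(k+1) * p (r * E θ) / 2) MeasureTheory.volume 0 (2*Real.pi) from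
        ((((contU.pow (k+1)).mul hq).div_const 2).intervalIntegrable 0 (2*Real.pi))) int2]
  rw [intervalIntegral.integral_div, intervalIntegral.integral_div]
  rw [coeff_integral hp hr0 hr1 (k+1)]
  rw [intervalIntegral_conj, vanish_integral hp hr0 hr1 k]
  simp
  ring

lemma wmoment0 (hp : DifferentiableOn ℂ p (ball (0:ℂ) 1)) (hp0 : p 0 = 1) {r : ℝ}
    (hr0 : 0 < r) (hr1 : r < 1) :
    (∫ θ in (0:ℝ)..2*Real.pi, (((p (r * E θ)).re : ℝ) : ℂ)) = 2*Real.pi := by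
  have hq := q_continuous hp hr0 hr1
  have split : ∀ θ : ℝ, (((p (r * E θ)).re : ℝ) : ℂ)
      = (p (r * E θ))/2 + (starRingEnd ℂ) (p (r * E θ))/2 := by
    intro θ
    linear_combination (norm := (push_cast; ring_nf)) (-1/2) * (Complex.add_conj (p (r * E θ)))
  simp only [split]
  have int2 : IntervalIntegrable (fun θ => (starRingEnd ℂ) (p (r * E θ)) / 2)
      MeasureTheory.volume 0 (2*Real.pi) :=
    ((Complex.continuous_conj.comp hq).div_const 2).intervalIntegrable 0 (2*Real.pi)
  rw [intervalIntegral.integral_add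
      ((hq.div_const 2).intervalIntegrable 0 (2*Real.pi)) int2]
  rw [intervalIntegral.integral_div, intervalIntegral.integral_div]
  have h0 := coeff_integral hp hr0 hr1 0
  simp only [pow_zero, one_mul] at h0
  rw [h0]
  rw [intervalIntegral_conj, h0]
  simp [iteratedDeriv_zero, hp0, map_ofNat]
  ring
lemma poly1 (s : ℝ) (h0 : 0 ≤ s) (h1 : s ≤ 1) :
    s + 13/6*s^3 + (1+s)*(1-s^2)/2 + 11/6*(s*(1-s^2)) ≤ 19/6 := by
  nlinarith [sq_nonneg (1-s), sq_nonneg s, sq_nonneg (1+s), mul_nonneg h0 (sq_nonneg (1-s)), sq_nonneg (s*(1-s))]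

lemma poly2 (s : ℝ) (h0 : 0 ≤ s) (h1 : s ≤ 1) :
    s^2 + 25/18*s^4 + 31/18*(s^2*(1-s^2)) + 8/9*(1-s^2)^2 + s*((1+s)*(1-s^2))/2 ≤ 43/18 := by
  nlinarith [sq_nonneg (1-s), sq_nonneg s, sq_nonneg (1-s^2), mul_nonneg h0 (sq_nonneg (1-s)), sq_nonneg (s*(1-s)), mul_nonneg (mul_nonneg h0 h0) (sq_nonneg (1-s))]

lemma alg_main (γ1 γ2 γ3 a₂ a₃ a₄ A₂ A₃ A₄ : ℂ)
    (hg1 : γ1 = a₂) (hg2 : γ2 = 3/2 * a₃) (hg3 : γ3 = 2 * a₄)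
    (hA₂ : A₂ = -a₂) (hA₃ : A₃ = 2 * a₂ ^ 2 - a₃) (hA₄ : A₄ = -a₄ + 5 * a₂ * a₃ - 5 * a₂ ^ 3)
    (h1 : Complex.abs γ1 ≤ 1)
    (h2 : Complex.abs (γ2 - γ1^2) ≤ 1 - (Complex.abs γ1)^2)
    (h3 : Complex.abs (γ3 - 3*γ1*γ2 + 2*γ1^3) ≤ (1 + Complex.abs γ1) * (1 - (Complex.abs γ1)^2)) :
    Complex.abs ((A₂ - A₄) * (A₂ ^ 2 - 2 * A₃ ^ 2 + A₂ * A₄)) ≤ 817 / 108 := by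
  set s := Complex.abs γ1 with hs
  have hs0 : 0 ≤ s := Complex.abs.nonneg _
  have hd0 : 0 ≤ 1 - s^2 := le_trans (Complex.abs.nonneg _) h2
  set δ2 := γ2 - γ1^2 with hd2
  set δ3 := γ3 - 3*γ1*γ2 + 2*γ1^3 with hd3
  have e1 : A₂ - A₄ = (-γ1 + 13/6*γ1^3) + δ3/2 - 11/6*γ1*δ2 := by
    subst hA₂ hA₄ hg1 hg2 hg3; rw [hd2, hd3]; ring_nf
  have e2 : A₂ ^ 2 - 2 * A₃ ^ 2 + A₂ * A₄
      = (γ1^2 - 25/18*γ1^4) + 31/18*γ1^2*δ2 - 8/9*δ2^2 + γ1*δ3/2 := by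
    subst hA₂ hA₃ hA₄ hg1 hg2 hg3; rw [hd2, hd3]; ring_nf
  have t1 : Complex.abs (-γ1 + 13/6*γ1^3) ≤ s + 13/6*s^3 := by
    refine le_trans (map_add_le_add _ _ _) ?_
    have : Complex.abs (13/6*γ1^3) = 13/6*s^3 := by
      rw [map_mul, map_pow, map_div₀]
      norm_num [Complex.abs_ofNat, hs]
    simp [this, hs]
  have t3 : Complex.abs (δ3/2) ≤ (1+s)*(1-s^2)/2 := by
    rw [map_div₀, Complex.abs_two]; linarith
  have t4 : Complex.abs (11/6*γ1*δ2) ≤ 11/6*(s*(1-s^2)) := by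
    rw [map_mul, map_mul]
    have h116 : Complex.abs (11/6 : ℂ) = 11/6 := by
      rw [map_div₀]; norm_num [Complex.abs_ofNat]
    rw [h116]
    nlinarith [h2, hs0, Complex.abs.nonneg δ2]
  have b1 : Complex.abs (A₂ - A₄) ≤ 19/6 := by
    rw [e1]
    have step : Complex.abs ((-γ1 + 13/6*γ1^3) + δ3/2 - 11/6*γ1*δ2)
        ≤ Complex.abs (-γ1 + 13/6*γ1^3) + Complex.abs (δ3/2) + Complex.abs (11/6*γ1*δ2) := by
      refine le_trans (map_sub_le_add _ _ _) ?_
      gcongr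
      exact map_add_le_add _ _ _
    refine le_trans step ?_
    have := poly1 s hs0 h1
    linarith
  have u1 : Complex.abs (γ1^2 - 25/18*γ1^4) ≤ s^2 + 25/18*s^4 := by
    refine le_trans (map_sub_le_add _ _ _) ?_
    have : Complex.abs (25/18*γ1^4) = 25/18*s^4 := by
      rw [map_mul, map_pow, map_div₀]; norm_num [Complex.abs_ofNat, hs]
    simp [this, map_pow, hs]
  have u2 : Complex.abs (31/18*γ1^2*δ2) ≤ 31/18*(s^2*(1-s^2)) := by
    rw [map_mul, map_mul, map_pow]
    have : Complex.abs (31/18 : ℂ) = 31/18 := by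
      rw [map_div₀]; norm_num [Complex.abs_ofNat]
    rw [this]
    nlinarith [h2, hs0, Complex.abs.nonneg δ2, sq_nonneg s]
  have u3 : Complex.abs (8/9*δ2^2) ≤ 8/9*(1-s^2)^2 := by
    rw [map_mul, map_pow]
    have : Complex.abs (8/9 : ℂ) = 8/9 := by
      rw [map_div₀]; norm_num [Complex.abs_ofNat]
    rw [this]
    nlinarith [h2, Complex.abs.nonneg δ2]
  have u4 : Complex.abs (γ1*δ3/2) ≤ s*((1+s)*(1-s^2))/2 := by
    rw [map_div₀, map_mul, Complex.abs_two]
    have : s * Complex.abs δ3 ≤ s*((1+s)*(1-s^2)) := by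
      apply mul_le_mul_of_nonneg_left h3 hs0
    linarith
  have b2 : Complex.abs (A₂ ^ 2 - 2 * A₃ ^ 2 + A₂ * A₄) ≤ 43/18 := by
    rw [e2]
    have step : Complex.abs ((γ1^2 - 25/18*γ1^4) + 31/18*γ1^2*δ2 - 8/9*δ2^2 + γ1*δ3/2)
        ≤ Complex.abs (γ1^2 - 25/18*γ1^4) + Complex.abs (31/18*γ1^2*δ2)
          + Complex.abs (8/9*δ2^2) + Complex.abs (γ1*δ3/2) := by
      refine le_trans (map_add_le_add _ _ _) ?_
      gcongr
      refine le_trans (map_sub_le_add _ _ _) ?_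
      gcongr
      exact map_add_le_add _ _ _
    refine le_trans step ?_
    have := poly2 s hs0 h1
    linarith
  rw [map_mul]
  calc Complex.abs (A₂ - A₄) * Complex.abs (A₂ ^ 2 - 2 * A₃ ^ 2 + A₂ * A₄)
      ≤ (19/6) * (43/18) := by
        apply mul_le_mul b1 b2 (Complex.abs.nonneg _) (by norm_num)
    _ = 817/108 := by norm_num

lemma lim_le (F G : ℝ → ℝ) (hF : Continuous F) (hG : Continuous G)
    (h : ∀ r ∈ Ioo (0:ℝ) 1, F r ≤ G r) : F 1 ≤ G 1 := by
  refine le_of_tendsto_of_tendsto (b := 𝓝[<] (1:ℝ))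
    (hF.continuousAt.continuousWithinAt) (hG.continuousAt.continuousWithinAt) ?_
  filter_upwards [Ioo_mem_nhdsLT_of_mem (by norm_num : (1:ℝ) ∈ Ioc (0:ℝ) 1)] with r hr
    using h r hr

theorem symToeplitz32_R (f : ℂ → ℂ)
    (hf : AnalyticOnNhd ℂ f (ball (0:ℂ) 1))
    (hf0 : f 0 = 0) (hf1 : deriv f 0 = 1)
    (hre : ∀ z ∈ ball (0:ℂ) 1, 0 < (deriv f z).re)
    (a₂ a₃ a₄ A₂ A₃ A₄ : ℂ)
    (ha₂ : a₂ = iteratedDeriv 2 f 0 / 2)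
    (ha₃ : a₃ = iteratedDeriv 3 f 0 / 6)
    (ha₄ : a₄ = iteratedDeriv 4 f 0 / 24)
    (hA₂ : A₂ = -a₂)
    (hA₃ : A₃ = 2 * a₂ ^ 2 - a₃)
    (hA₄ : A₄ = -a₄ + 5 * a₂ * a₃ - 5 * a₂ ^ 3) :
    ‖(A₂ - A₄) * (A₂ ^ 2 - 2 * A₃ ^ 2 + A₂ * A₄)‖ ≤ 817 / 108 := by
  rw [Complex.norm_eq_abs]
  have hpA : AnalyticOnNhd ℂ (deriv f) (ball (0:ℂ) 1) := hf.deriv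
  have hp : DifferentiableOn ℂ (deriv f) (ball (0:ℂ) 1) :=
    fun z hz => (hpA z hz).differentiableAt.differentiableWithinAt
  have hp0 : deriv f 0 = 1 := hf1
  have hid1 : iteratedDeriv 1 (deriv f) 0 = 2*a₂ := by
    have h : iteratedDeriv 2 f = iteratedDeriv 1 (deriv f) := iteratedDeriv_succ'
    rw [← h, ha₂]; ring
  have hid2 : iteratedDeriv 2 (deriv f) 0 = 6*a₃ := by
    have h : iteratedDeriv 3 f = iteratedDeriv 2 (deriv f) := iteratedDeriv_succ'
    rw [← h, ha₃]; ring
  have hid3 : iteratedDeriv 3 (deriv f) 0 = 24*a₄ := by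
    have h : iteratedDeriv 4 f = iteratedDeriv 3 (deriv f) := iteratedDeriv_succ'
    rw [← h, ha₄]; ring
  have master : ∀ r ∈ Ioo (0:ℝ) 1,
      (r * Complex.abs a₂ ≤ 1 ∧
       r^2 * Complex.abs (3/2*a₃ - a₂^2) ≤ 1 - r^2*(Complex.abs a₂)^2 ∧
       r^3 * Complex.abs (2*a₄ - 3*a₂*(3/2*a₃) + 2*a₂^3)
         ≤ (1 + r*Complex.abs a₂)*(1 - r^2*(Complex.abs a₂)^2)) := by
    rintro r ⟨hr0, hr1⟩
    have hq := q_continuous hp hr0 hr1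
    have hw : Continuous (fun θ : ℝ => (deriv f (r * E θ)).re) :=
      Complex.continuous_re.comp hq
    have hmem : ∀ θ : ℝ, (r : ℂ) * E θ ∈ ball (0:ℂ) 1 := by
      intro θ
      simp only [mem_ball, dist_zero_right, norm_mul]
      rw [Complex.norm_eq_abs, Complex.norm_eq_abs, absE]
      simpa [abs_of_pos hr0] using hr1
    have hpos : ∀ θ : ℝ, 0 ≤ (deriv f (r * E θ)).re :=
      fun θ => (hre _ (hmem θ)).le
    have h0 := wmoment0 hp hp0 hr0 hr1
    have h1' : (∫ θ in (0:ℝ)..2*Real.pi, U θ * (((deriv f (r * E θ)).re : ℝ) : ℂ))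
        = 2*Real.pi*((r:ℂ)*a₂) := by
      have h := wmoment hp hr0 hr1 0
      simp only [zero_add, pow_one] at h
      rw [h, hid1]
      norm_num [Nat.factorial]
      ring
    have h2' : (∫ θ in (0:ℝ)..2*Real.pi, U θ^2 * (((deriv f (r * E θ)).re : ℝ) : ℂ))
        = 2*Real.pi*((r:ℂ)^2*(3/2*a₃)) := by
      have h := wmoment hp hr0 hr1 1
      norm_num at h
      rw [h, hid2]
      norm_num [Nat.factorial]
      ring
    have h3' : (∫ θ in (0:ℝ)..2*Real.pi, U θ^3 * (((deriv f (r * E θ)).re : ℝ) : ℂ))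
        = 2*Real.pi*((r:ℂ)^3*(2*a₄)) := by
      have h := wmoment hp hr0 hr1 2
      norm_num at h
      rw [h, hid3]
      norm_num [Nat.factorial]
      ring
    obtain ⟨m1, m2, m3⟩ := moment_bounds (fun θ => (deriv f (r * E θ)).re) hw hpos
      ((r:ℂ)*a₂) ((r:ℂ)^2*(3/2*a₃)) ((r:ℂ)^3*(2*a₄)) h0 h1' h2' h3'
    have habsr : Complex.abs ((r:ℂ)) = r := by
      rw [Complex.abs_ofReal]; exact _root_.abs_of_pos hr0
    have habs1 : Complex.abs ((r:ℂ)*a₂) = r * Complex.abs a₂ := by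
      rw [map_mul, habsr]
    refine ⟨?_, ?_, ?_⟩
    · rw [habs1] at m1; exact m1
    · have e : (r:ℂ)^2*(3/2*a₃) - ((r:ℂ)*a₂)^2 = (r:ℂ)^2*(3/2*a₃ - a₂^2) := by ring
      rw [e, map_mul, map_pow, habsr, habs1] at m2
      nlinarith [m2]
    · have e : (r:ℂ)^3*(2*a₄) - 3*((r:ℂ)*a₂)*((r:ℂ)^2*(3/2*a₃)) + 2*((r:ℂ)*a₂)^3
          = (r:ℂ)^3*(2*a₄ - 3*a₂*(3/2*a₃) + 2*a₂^3) := by ring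
      rw [e, map_mul, map_pow, habsr, habs1] at m3
      nlinarith [m3]
  have lim1 : Complex.abs a₂ ≤ 1 := by
    have := lim_le (fun r => r * Complex.abs a₂) (fun r => 1)
      (continuous_id.mul continuous_const) continuous_const (fun r hr => (master r hr).1)
    simpa using this
  have lim2 : Complex.abs (3/2*a₃ - a₂^2) ≤ 1 - (Complex.abs a₂)^2 := by
    have := lim_le (fun r => r^2 * Complex.abs (3/2*a₃ - a₂^2))
      (fun r => 1 - r^2*(Complex.abs a₂)^2)
      ((continuous_pow 2).mul continuous_const)
      (continuous_const.sub ((continuous_pow 2).mul continuous_const))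
      (fun r hr => (master r hr).2.1)
    simpa using this
  have lim3 : Complex.abs (2*a₄ - 3*a₂*(3/2*a₃) + 2*a₂^3)
      ≤ (1 + Complex.abs a₂)*(1 - (Complex.abs a₂)^2) := by
    have := lim_le (fun r => r^3 * Complex.abs (2*a₄ - 3*a₂*(3/2*a₃) + 2*a₂^3))
      (fun r => (1 + r*Complex.abs a₂)*(1 - r^2*(Complex.abs a₂)^2))
      ((continuous_pow 3).mul continuous_const)
      ((continuous_const.add (continuous_id.mul continuous_const)).mul
        (continuous_const.sub ((continuous_pow 2).mul continuous_const)))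
      (fun r hr => (master r hr).2.2)
    simpa using this
  exact alg_main a₂ (3/2*a₃) (2*a₄) a₂ a₃ a₄ A₂ A₃ A₄ rfl rfl rfl hA₂ hA₃ hA₄ lim1 lim2 lim3
end

section
/- Let f be in the class R (bounded turning) and let A_2, A_3, A_4 be the coefficients of the inverse function. Then |A_2| ≤ 1, |A_3| ≤ 4/3, and |A_4| ≤ 13/6. -/
open Complex Metric Set Filter Topology

noncomputable section
namespace InvR

local notation "B" => ball (0:ℂ) 1

lemma hB0 : (0:ℂ) ∈ B := mem_ball_self one_pos

lemma hBnhds : B ∈ 𝓝 (0:ℂ) := isOpen_ball.mem_nhds hB0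

lemma aderiv {f : ℂ → ℂ} {x : ℂ} (hf : AnalyticAt ℂ f x) :
    AnalyticAt ℂ (deriv f) x := by
  obtain ⟨s, hs, h⟩ := hf.exists_mem_nhds_analyticOnNhd
  exact h.deriv x (mem_of_mem_nhds hs)

lemma D2_eq (h : ℂ → ℂ) : iteratedDeriv 2 h = deriv (deriv h) := by
  rw [show (2:ℕ) = 1 + 1 from rfl, iteratedDeriv_succ, iteratedDeriv_one]

lemma D3_eq (h : ℂ → ℂ) : iteratedDeriv 3 h = deriv (deriv (deriv h)) := by
  rw [show (3:ℕ) = 2 + 1 from rfl, iteratedDeriv_succ, D2_eq]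

lemma D1_mul {f g : ℂ → ℂ} {x : ℂ} (hf : AnalyticAt ℂ f x) (hg : AnalyticAt ℂ g x) :
    deriv (fun z => f z * g z) x = deriv f x * g x + f x * deriv g x :=
  deriv_mul hf.differentiableAt hg.differentiableAt

lemma D2_mul {f g : ℂ → ℂ} {x : ℂ} (hf : AnalyticAt ℂ f x) (hg : AnalyticAt ℂ g x) :
    iteratedDeriv 2 (fun z => f z * g z) x =
      iteratedDeriv 2 f x * g x + 2 * deriv f x * deriv g x + f x * iteratedDeriv 2 g x := by
  have hev : deriv (fun z => f z * g z) =ᶠ[𝓝 x]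
      fun z => deriv f z * g z + f z * deriv g z := by
    filter_upwards [hf.eventually_analyticAt, hg.eventually_analyticAt] with z hfz hgz
    exact D1_mul hfz hgz
  have H : HasDerivAt (fun z => deriv f z * g z + f z * deriv g z)
      ((deriv (deriv f) x * g x + deriv f x * deriv g x)
        + (deriv f x * deriv g x + f x * deriv (deriv g) x)) x :=
    (((aderiv hf).differentiableAt.hasDerivAt.mul hg.differentiableAt.hasDerivAt).add
      (hf.differentiableAt.hasDerivAt.mul (aderiv hg).differentiableAt.hasDerivAt))
  rw [D2_eq, hev.deriv_eq, H.deriv, D2_eq, D2_eq]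
  ring

lemma D3_mul {f g : ℂ → ℂ} {x : ℂ} (hf : AnalyticAt ℂ f x) (hg : AnalyticAt ℂ g x) :
    iteratedDeriv 3 (fun z => f z * g z) x =
      iteratedDeriv 3 f x * g x + 3 * iteratedDeriv 2 f x * deriv g x
        + 3 * deriv f x * iteratedDeriv 2 g x + f x * iteratedDeriv 3 g x := by
  have hev : iteratedDeriv 2 (fun z => f z * g z) =ᶠ[𝓝 x]
      fun z => deriv (deriv f) z * g z + 2 * (deriv f z * deriv g z)
        + f z * deriv (deriv g) z := by
    filter_upwards [hf.eventually_analyticAt, hg.eventually_analyticAt] with z hfz hgz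
    rw [D2_mul hfz hgz, D2_eq, D2_eq]; ring
  have h3 : iteratedDeriv 3 (fun z => f z * g z) x
      = deriv (iteratedDeriv 2 (fun z => f z * g z)) x := by
    rw [show (3:ℕ) = 2 + 1 from rfl, iteratedDeriv_succ]
  have Hf1 := hf.differentiableAt.hasDerivAt
  have Hf2 := (aderiv hf).differentiableAt.hasDerivAt
  have Hf3 := (aderiv (aderiv hf)).differentiableAt.hasDerivAt
  have Hg1 := hg.differentiableAt.hasDerivAt
  have Hg2 := (aderiv hg).differentiableAt.hasDerivAt
  have Hg3 := (aderiv (aderiv hg)).differentiableAt.hasDerivAt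
  have H : HasDerivAt (fun z => deriv (deriv f) z * g z + 2 * (deriv f z * deriv g z)
        + f z * deriv (deriv g) z)
      (((deriv (deriv (deriv f)) x * g x + deriv (deriv f) x * deriv g x)
        + 2 * (deriv (deriv f) x * deriv g x + deriv f x * deriv (deriv g) x))
        + (deriv f x * deriv (deriv g) x + f x * deriv (deriv (deriv g)) x)) x :=
    (((Hf3.mul Hg1).add ((Hf2.mul Hg2).const_mul 2)).add (Hf1.mul Hg3))
  rw [h3, hev.deriv_eq, H.deriv, D2_eq, D2_eq, D3_eq, D3_eq]
  ring

lemma ID_sub_const {n : ℕ} (h : ℂ → ℂ) (c : ℂ) :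
    iteratedDeriv (n+1) (fun z => h z - c) = iteratedDeriv (n+1) h := by
  have e : deriv (fun z => h z - c) = deriv h := funext fun x => deriv_sub_const c
  rw [iteratedDeriv_succ', e, ← iteratedDeriv_succ']

lemma ID_add_const {n : ℕ} (h : ℂ → ℂ) (c : ℂ) :
    iteratedDeriv (n+1) (fun z => h z + c) = iteratedDeriv (n+1) h := by
  have e : deriv (fun z => h z + c) = deriv h := funext fun x => deriv_add_const c
  rw [iteratedDeriv_succ', e, ← iteratedDeriv_succ']

/-- dslope at 0 of a function analytic on B is analytic on B. -/
lemma dslope_analytic {g : ℂ → ℂ} (hg : AnalyticOnNhd ℂ g B) :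
    AnalyticOnNhd ℂ (dslope g 0) B := by
  intro z hz
  rcases eq_or_ne z 0 with rfl | hne
  · obtain ⟨q, hq⟩ := hg 0 hB0
    exact ⟨_, hq.has_fpower_series_dslope_fslope⟩
  · have h1 : AnalyticAt ℂ (fun w => (g w - g 0) / (w - 0)) z :=
      ((hg z hz).sub analyticAt_const).div (analyticAt_id.sub analyticAt_const)
        (sub_ne_zero.2 hne)
    apply h1.congr
    filter_upwards [eventually_ne_nhds hne] with w hw
    rw [dslope_of_ne _ hw, slope_def_field]

/-- z * dslope g 0 z = g z when g 0 = 0. -/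
lemma dslope_mul {g : ℂ → ℂ} (hg0 : g 0 = 0) (z : ℂ) : g z = z * dslope g 0 z := by
  rcases eq_or_ne z 0 with rfl | hne
  · simp [hg0]
  · rw [dslope_of_ne _ hne, slope_def_field, hg0]
    field_simp
    ring

/-- Bound on dslope for maps into the closed unit ball fixing 0. -/
lemma dslope_bound {g : ℂ → ℂ} (hg : AnalyticOnNhd ℂ g B) (hg0 : g 0 = 0)
    (hb : ∀ z ∈ B, ‖g z‖ ≤ 1) :
    ∀ z ∈ B, ‖dslope g 0 z‖ ≤ 1 := by
  intro z hz
  have key : ∀ ε : ℝ, 0 < ε → ‖dslope g 0 z‖ ≤ 1 + ε := by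
    intro ε hε
    have hmaps : MapsTo g B (ball (g 0) (1 + ε)) := by
      intro w hw
      rw [hg0, mem_ball_zero_iff]
      exact lt_of_le_of_lt (hb w hw) (by linarith)
    have := Complex.norm_dslope_le_div_of_mapsTo_ball hg.differentiableOn (hmaps.mono_right ball_subset_closedBall) hz
    simpa using this
  exact le_of_forall_pos_le_add key

/-- Key Möbius inequality: |a - c| ≤ |1 - conj c * a| for |a| ≤ 1, |c| ≤ 1. -/
lemma mobius_normSq (a c : ℂ) :
    normSq (1 - (starRingEnd ℂ) c * a) - normSq (a - c) = (1 - normSq a) * (1 - normSq c) := by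
  simp only [Complex.normSq_apply, Complex.sub_re, Complex.sub_im, Complex.mul_re,
    Complex.mul_im, Complex.conj_re, Complex.conj_im, Complex.one_re, Complex.one_im]
  ring

lemma mobius_abs_le {a c : ℂ} (ha : ‖a‖ ≤ 1) (hc : ‖c‖ ≤ 1) :
    ‖a - c‖ ≤ ‖1 - (starRingEnd ℂ) c * a‖ := by
  have h1 : normSq (a - c) ≤ normSq (1 - (starRingEnd ℂ) c * a) := by
    have h2 : normSq a ≤ 1 := by
      rw [← Complex.sq_norm]; nlinarith [norm_nonneg a]
    have h3 : normSq c ≤ 1 := by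
      rw [← Complex.sq_norm]; nlinarith [norm_nonneg c]
    nlinarith [mobius_normSq a c]
  rw [Complex.norm_def, Complex.norm_def]
  exact Real.sqrt_le_sqrt h1

lemma mobius_den_ne {a c : ℂ} (ha : ‖a‖ ≤ 1) (hc : ‖c‖ < 1) :
    1 - (starRingEnd ℂ) c * a ≠ 0 := by
  intro h
  have h1 : (starRingEnd ℂ) c * a = 1 := by linear_combination -h
  have h2 : ‖(starRingEnd ℂ) c * a‖ = 1 := by rw [h1]; simp
  rw [norm_mul, Complex.norm_conj] at h2
  nlinarith [norm_nonneg a, norm_nonneg c]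

/-- Maximum modulus: if |h| ≤ |h 0| on B then first two derivatives at 0 vanish. -/
lemma max_principle_derivs {h : ℂ → ℂ} (hh : AnalyticOnNhd ℂ h B)
    (hb : ∀ z ∈ B, ‖h z‖ ≤ ‖h 0‖) :
    deriv h 0 = 0 ∧ iteratedDeriv 2 h 0 = 0 := by
  have hconst : EqOn h (Function.const ℂ (h 0)) B := by
    apply Complex.eqOn_of_isPreconnected_of_isMaxOn_norm (convex_ball 0 1).isPreconnected
      isOpen_ball hh.differentiableOn hB0
    intro z hz
    simpa using hb z hz
  have hev : h =ᶠ[𝓝 (0:ℂ)] Function.const ℂ (h 0) :=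
    eventually_of_mem hBnhds hconst
  have D2c : iteratedDeriv 2 (Function.const ℂ (h 0)) = fun _ => (0:ℂ) := by
    rw [show (2:ℕ) = 1 + 1 from rfl, iteratedDeriv_succ, iteratedDeriv_one]
    have e1 : deriv (Function.const ℂ (h 0)) = fun _ => (0:ℂ) := by
      funext x; exact deriv_const x (h 0)
    rw [e1]
    funext x; exact deriv_const x 0
  constructor
  · rw [hev.deriv_eq]; exact deriv_const 0 (h 0)
  · rw [hev.iteratedDeriv_eq, D2c]



lemma abs_one_sub_conj_mul_self {e : ℂ} (he : ‖e‖ ≤ 1) :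
    ‖1 - (starRingEnd ℂ) e * e‖ = 1 - ‖e‖ ^ 2 := by
  have h1 : (starRingEnd ℂ) e * e = ((normSq e : ℝ) : ℂ) := by
    rw [mul_comm, Complex.mul_conj]
  have h2 : normSq e ≤ 1 := by
    rw [← Complex.sq_norm]; nlinarith [norm_nonneg e]
  rw [h1, ← Complex.ofReal_one, ← Complex.ofReal_sub, Complex.norm_real, Real.norm_eq_abs,
    _root_.abs_of_nonneg (by linarith), Complex.sq_norm]

/-- Möbius transport: the function (h - h 0)/(1 - conj (h 0) * h) is analytic on B,
vanishes at 0 and is bounded by 1. -/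
lemma mobius_package {h : ℂ → ℂ} (hh : AnalyticOnNhd ℂ h B)
    (hb : ∀ z ∈ B, ‖h z‖ ≤ 1) (hlt : ‖h 0‖ < 1) :
    AnalyticOnNhd ℂ (fun z => (h z - h 0) / (1 - (starRingEnd ℂ) (h 0) * h z)) B ∧
    (fun z => (h z - h 0) / (1 - (starRingEnd ℂ) (h 0) * h z)) 0 = 0 ∧
    (∀ z ∈ B, ‖(fun z => (h z - h 0) / (1 - (starRingEnd ℂ) (h 0) * h z)) z‖ ≤ 1) ∧
    (∀ z ∈ B, 1 - (starRingEnd ℂ) (h 0) * h z ≠ 0) := by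
  have hden : ∀ z ∈ B, 1 - (starRingEnd ℂ) (h 0) * h z ≠ 0 := fun z hz =>
    mobius_den_ne (hb z hz) hlt
  refine ⟨(hh.sub analyticOnNhd_const).div
    (analyticOnNhd_const.sub (analyticOnNhd_const.mul hh)) hden, by simp, ?_, hden⟩
  intro z hz
  rw [norm_div]
  apply div_le_one_of_le₀ (mobius_abs_le (hb z hz) hlt.le) (norm_nonneg _)

/-- Schwarz–Pick inequality at the origin for analytic self-maps of the disk. -/
lemma SP {h : ℂ → ℂ} (hh : AnalyticOnNhd ℂ h B) (hb : ∀ z ∈ B, ‖h z‖ ≤ 1) :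
    ‖deriv h 0‖ ≤ 1 - ‖h 0‖ ^ 2 := by
  have he : ‖h 0‖ ≤ 1 := hb 0 hB0
  by_cases hlt : ‖h 0‖ < 1
  · obtain ⟨hHa, hH0, hHb, hden⟩ := mobius_package hh hb hlt
    set e := h 0 with he_def
    set H := fun z => (h z - e) / (1 - (starRingEnd ℂ) e * h z) with hH_def
    have hd1 : ‖deriv H 0‖ ≤ 1 := by
      apply le_of_forall_pos_le_add
      intro ε hε
      have hmaps : MapsTo H B (ball (H 0) (1 + ε)) := by
        intro w hw
        rw [hH0, mem_ball_zero_iff]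
        exact lt_of_le_of_lt (hHb w hw) (by linarith)
      have := Complex.norm_deriv_le_div_of_mapsTo_ball hHa.differentiableOn (hmaps.mono_right ball_subset_closedBall) one_pos
      simpa using this
    have hne0 : (1 : ℂ) - (starRingEnd ℂ) e * e ≠ 0 := mobius_den_ne he hlt
    have hdiff_h : DifferentiableAt ℂ h 0 := (hh 0 hB0).differentiableAt
    have hdH : deriv H 0 = deriv h 0 / (1 - (starRingEnd ℂ) e * e) := by
      rw [hH_def]
      rw [deriv_fun_div (d := fun z => 1 - (starRingEnd ℂ) e * h z) (hdiff_h.sub_const e)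
        ((differentiableAt_const _).sub ((differentiableAt_const _).mul hdiff_h))
        (hden 0 hB0)]
      rw [deriv_sub_const, deriv_const_sub, deriv_const_mul _ hdiff_h]
      have hsub0 : h 0 - e = 0 := by rw [he_def]; ring
      rw [hsub0]
      rw [div_eq_div_iff (pow_ne_zero 2 (hden 0 hB0)) hne0, he_def]
      ring
    have habs : ‖deriv h 0‖ = ‖deriv H 0‖ * (1 - ‖e‖ ^ 2) := by
      rw [hdH, norm_div, abs_one_sub_conj_mul_self he, div_mul_cancel₀]
      have : ‖e‖ ^ 2 < 1 := by nlinarith [norm_nonneg e]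
      intro hcon; nlinarith
    rw [habs]
    have : (0:ℝ) ≤ 1 - ‖e‖ ^ 2 := by nlinarith [norm_nonneg e]
    nlinarith
  · have heq : ‖h 0‖ = 1 := le_antisymm he (not_lt.1 hlt)
    have h0 := max_principle_derivs hh (fun z hz => (hb z hz).trans_eq heq.symm)
    rw [h0.1, heq]
    simp


lemma id_derivs : deriv (fun z : ℂ => z) 0 = 1 ∧ iteratedDeriv 2 (fun z : ℂ => z) 0 = 0
    ∧ iteratedDeriv 3 (fun z : ℂ => z) 0 = 0 := by
  have e1 : deriv (fun z : ℂ => z) = fun _ => (1:ℂ) := funext fun x => deriv_id x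
  have e2 : deriv (fun _ : ℂ => (1:ℂ)) = fun _ => (0:ℂ) := funext fun x => deriv_const x 1
  have e3 : deriv (fun _ : ℂ => (0:ℂ)) = fun _ => (0:ℂ) := funext fun x => deriv_const x 0
  refine ⟨by rw [e1], ?_, ?_⟩
  · rw [D2_eq, e1, e2]
  · rw [D3_eq, e1, e2, e3]

/-- Coefficients of g in terms of those of g(z)/z, when g 0 = 0. -/
lemma shift_coeffs {g : ℂ → ℂ} (hga : AnalyticOnNhd ℂ g B) (hg0 : g 0 = 0) :
    deriv g 0 = dslope g 0 0 ∧ iteratedDeriv 2 g 0 = 2 * deriv (dslope g 0) 0 ∧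
      iteratedDeriv 3 g 0 = 3 * iteratedDeriv 2 (dslope g 0) 0 := by
  have hφa : AnalyticAt ℂ (dslope g 0) 0 := dslope_analytic hga 0 hB0
  have hgz : g = fun z => z * dslope g 0 z := funext (dslope_mul hg0)
  obtain ⟨i1, i2, i3⟩ := id_derivs
  have hid : AnalyticAt ℂ (fun z : ℂ => z) 0 := analyticAt_id
  refine ⟨?_, ?_, ?_⟩
  · conv_lhs => rw [hgz]
    rw [D1_mul hid hφa, i1]; ring
  · conv_lhs => rw [hgz]
    rw [D2_mul hid hφa, i1, i2]; ring
  · conv_lhs => rw [hgz]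
    rw [D3_mul hid hφa, i1, i2, i3]; ring

/-- Wiener-type bound on the first two Taylor coefficients of a self-map of the disk. -/
lemma coeff_bound {φ : ℂ → ℂ} (hφa : AnalyticOnNhd ℂ φ B)
    (hb : ∀ z ∈ B, ‖φ z‖ ≤ 1) :
    ‖deriv φ 0‖ ≤ 1 - ‖φ 0‖ ^ 2 ∧
    ‖iteratedDeriv 2 φ 0‖ ≤ 2 * (1 - ‖φ 0‖ ^ 2) := by
  by_cases hlt : ‖φ 0‖ < 1
  · obtain ⟨hψa, hψ0, hψb, hden⟩ := mobius_package hφa hb hlt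
    set c := φ 0 with hc_def
    set ψ := fun z => (φ z - c) / (1 - (starRingEnd ℂ) c * φ z) with hψ_def
    set χ := dslope ψ 0 with hχ_def
    have hχa : AnalyticOnNhd ℂ χ B := dslope_analytic hψa
    have hχb : ∀ z ∈ B, ‖χ z‖ ≤ 1 := dslope_bound hψa hψ0 hψb
    obtain ⟨s1, s2, _⟩ := shift_coeffs hψa hψ0
    -- coefficients of ψ
    have hs1 : ‖χ 0‖ ≤ 1 := hχb 0 hB0
    have hs2 : ‖deriv χ 0‖ ≤ 1 - ‖χ 0‖ ^ 2 := SP hχa hχb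
    -- identity: φ z - c = ψ z * (1 - conj c * φ z) on B
    have ev : (fun z => φ z - c) =ᶠ[𝓝 (0:ℂ)]
        fun z => ψ z * (1 - (starRingEnd ℂ) c * φ z) := by
      filter_upwards [hBnhds] with z hz
      rw [hψ_def]
      exact (div_mul_cancel₀ _ (hden z hz)).symm
    have hψ0a : AnalyticAt ℂ ψ 0 := hψa 0 hB0
    have hφ0a : AnalyticAt ℂ φ 0 := hφa 0 hB0
    have hva : AnalyticAt ℂ (fun z => 1 - (starRingEnd ℂ) c * φ z) 0 :=
      analyticAt_const.sub (analyticAt_const.mul hφ0a)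
    have hdφ : DifferentiableAt ℂ φ 0 := hφ0a.differentiableAt
    have dv : deriv (fun z => 1 - (starRingEnd ℂ) c * φ z) 0
        = -((starRingEnd ℂ) c * deriv φ 0) := by
      rw [deriv_const_sub, deriv_const_mul _ hdφ]
    have E1 : deriv φ 0 = deriv ψ 0 * (1 - (starRingEnd ℂ) c * c) := by
      have h1 := ev.deriv_eq
      rw [deriv_sub_const, D1_mul hψ0a hva, hψ0, zero_mul, add_zero] at h1
      exact h1
    have E2 : iteratedDeriv 2 φ 0 = iteratedDeriv 2 ψ 0 * (1 - (starRingEnd ℂ) c * c)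
        + 2 * deriv ψ 0 * -((starRingEnd ℂ) c * deriv φ 0) := by
      have h2 := ev.iteratedDeriv_eq 2
      have hL : iteratedDeriv 2 (fun z => φ z - c) 0 = iteratedDeriv 2 φ 0 :=
        congrFun (ID_sub_const (n := 1) φ c) 0
      rw [hL, D2_mul hψ0a hva, hψ0, zero_mul, add_zero, dv] at h2
      exact h2
    -- now the bounds
    have habs1 : ‖1 - (starRingEnd ℂ) c * c‖ = 1 - ‖c‖ ^ 2 :=
      abs_one_sub_conj_mul_self hlt.le
    set s := ‖χ 0‖ with hs_def
    set t := ‖c‖ with ht_def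
    have ht0 : 0 ≤ t := norm_nonneg _
    have hs0 : 0 ≤ s := norm_nonneg _
    have ht1 : t < 1 := hlt
    have hE1abs : ‖deriv φ 0‖ = s * (1 - t ^ 2) := by
      rw [E1, norm_mul, habs1, s1, ← hs_def]
    have h1t : (0:ℝ) ≤ 1 - t ^ 2 := by nlinarith
    constructor
    · rw [hE1abs]
      nlinarith [mul_nonneg (sub_nonneg.2 hs1) h1t]
    · have tri : ‖iteratedDeriv 2 φ 0‖
          ≤ ‖iteratedDeriv 2 ψ 0 * (1 - (starRingEnd ℂ) c * c)‖
            + ‖2 * deriv ψ 0 * -((starRingEnd ℂ) c * deriv φ 0)‖ := by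
        rw [E2]; exact norm_add_le _ _
      have p1 : ‖iteratedDeriv 2 ψ 0 * (1 - (starRingEnd ℂ) c * c)‖
          = 2 * ‖deriv χ 0‖ * (1 - t ^ 2) := by
        rw [norm_mul, habs1, s2, norm_mul]
        simp [Complex.norm_two]
        exact Or.inl rfl
      have p2 : ‖2 * deriv ψ 0 * -((starRingEnd ℂ) c * deriv φ 0)‖
          = 2 * s * (t * (s * (1 - t ^ 2))) := by
        rw [norm_mul, norm_neg, norm_mul, norm_mul, Complex.norm_conj, hE1abs, s1,
          ← hs_def, Complex.norm_two, ← ht_def]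
      rw [p1, p2] at tri
      nlinarith [mul_le_mul_of_nonneg_right hs2 h1t,
        mul_nonneg (mul_nonneg (mul_nonneg hs0 hs0) (sub_nonneg.2 ht1.le)) h1t]
  · have heq : ‖φ 0‖ = 1 := le_antisymm (hb 0 hB0) (not_lt.1 hlt)
    have h0 := max_principle_derivs hφa (fun z hz => (hb z hz).trans_eq heq.symm)
    rw [h0.1, h0.2, heq]
    simp

/-- Main structural lemma: coefficients of a Carathéodory-type function. -/
lemma key {p : ℂ → ℂ} (hp : AnalyticOnNhd ℂ p B) (hp0 : p 0 = 1)
    (hre : ∀ z ∈ B, 0 < (p z).re) :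
    ∃ b₁ b₂ b₃ : ℂ, deriv p 0 = 2 * b₁ ∧
      iteratedDeriv 2 p 0 = 4 * b₂ + 4 * b₁ ^ 2 ∧
      iteratedDeriv 3 p 0 = 12 * b₃ + 24 * b₁ * b₂ + 12 * b₁ ^ 3 ∧
      ‖b₁‖ ≤ 1 ∧ ‖b₂‖ ≤ 1 - ‖b₁‖ ^ 2 ∧
      ‖b₃‖ ≤ 1 - ‖b₁‖ ^ 2 := by
  have hpne : ∀ z ∈ B, p z + 1 ≠ 0 := by
    intro z hz h
    have h1 := hre z hz
    have h2 : (p z + 1).re = 0 := by rw [h]; simp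
    rw [Complex.add_re, Complex.one_re] at h2
    linarith
  set ω := fun z => (p z - 1) / (p z + 1) with hω_def
  have hωa : AnalyticOnNhd ℂ ω B :=
    (hp.sub analyticOnNhd_const).div (hp.add analyticOnNhd_const) hpne
  have hω0 : ω 0 = 0 := by rw [hω_def]; simp [hp0]
  have hωlt : ∀ z ∈ B, ‖ω z‖ < 1 := by
    intro z hz
    rw [hω_def]
    simp only
    rw [norm_div, div_lt_one (norm_pos_iff.2 (hpne z hz))]
    have h1 := hre z hz
    have hn : normSq (p z - 1) < normSq (p z + 1) := by
      simp only [Complex.normSq_apply, Complex.sub_re, Complex.sub_im, Complex.add_re,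
        Complex.add_im, Complex.one_re, Complex.one_im]
      nlinarith
    rw [Complex.norm_def, Complex.norm_def]
    exact Real.sqrt_lt_sqrt (normSq_nonneg _) hn
  set φ := dslope ω 0 with hφ_def
  have hφa : AnalyticOnNhd ℂ φ B := dslope_analytic hωa
  have hφb : ∀ z ∈ B, ‖φ z‖ ≤ 1 :=
    dslope_bound hωa hω0 (fun z hz => (hωlt z hz).le)
  obtain ⟨s1, s2, s3⟩ := shift_coeffs hωa hω0
  obtain ⟨cb1, cb2⟩ := coeff_bound hφa hφb
  have hq : AnalyticAt ℂ (fun z => p z + 1) 0 := (hp 0 hB0).add analyticAt_const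
  have hω0a : AnalyticAt ℂ ω 0 := hωa 0 hB0
  have ev : (fun z => p z - 1) =ᶠ[𝓝 (0:ℂ)] fun z => ω z * (p z + 1) := by
    filter_upwards [hBnhds] with z hz
    rw [hω_def]
    exact (div_mul_cancel₀ _ (hpne z hz)).symm
  have dq : deriv (fun z => p z + 1) 0 = deriv p 0 := deriv_add_const 1
  have dq2 : iteratedDeriv 2 (fun z => p z + 1) 0 = iteratedDeriv 2 p 0 :=
    congrFun (ID_add_const (n := 1) p 1) 0
  have P1 : deriv p 0 = 2 * φ 0 := by
    have h := ev.deriv_eq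
    rw [deriv_sub_const, D1_mul hω0a hq, dq, hω0, hp0, zero_mul, add_zero] at h
    rw [h, s1]
    ring
  have P2 : iteratedDeriv 2 p 0 = 4 * deriv φ 0 + 4 * φ 0 ^ 2 := by
    have h := ev.iteratedDeriv_eq 2
    have hL : iteratedDeriv 2 (fun z => p z - 1) 0 = iteratedDeriv 2 p 0 :=
      congrFun (ID_sub_const (n := 1) p 1) 0
    rw [hL, D2_mul hω0a hq, dq, dq2, hω0, hp0, zero_mul, add_zero, P1, s2, s1] at h
    rw [h]
    ring
  have P3 : iteratedDeriv 3 p 0 = 12 * (iteratedDeriv 2 φ 0 / 2)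
      + 24 * φ 0 * deriv φ 0 + 12 * φ 0 ^ 3 := by
    have h := ev.iteratedDeriv_eq 3
    have hL : iteratedDeriv 3 (fun z => p z - 1) 0 = iteratedDeriv 3 p 0 :=
      congrFun (ID_sub_const (n := 2) p 1) 0
    have dq3 : iteratedDeriv 3 (fun z => p z + 1) 0 = iteratedDeriv 3 p 0 :=
      congrFun (ID_add_const (n := 2) p 1) 0
    rw [hL, D3_mul hω0a hq, dq, dq2, dq3, hω0, hp0, zero_mul, add_zero, P1, P2,
      s3, s2, s1] at h
    rw [h]
    ring
  refine ⟨φ 0, deriv φ 0, iteratedDeriv 2 φ 0 / 2, ?_, ?_, ?_, hφb 0 hB0, cb1, ?_⟩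
  · exact P1
  · exact P2
  · rw [P3]
  · rw [norm_div, Complex.norm_two]
    linarith [cb2]

lemma abs_sub_le' (x y : ℂ) : ‖x - y‖ ≤ ‖x‖ + ‖y‖ := by
  rw [sub_eq_add_neg]
  exact (norm_add_le _ _).trans (by rw [norm_neg])

lemma abs_add_sub_le (u v w : ℂ) :
    ‖u + v - w‖ ≤ ‖u‖ + ‖v‖ + ‖w‖ := by
  calc ‖u + v - w‖ ≤ ‖u + v‖ + ‖w‖ := abs_sub_le' _ _
  _ ≤ ‖u‖ + ‖v‖ + ‖w‖ := by
      linarith [norm_add_le u v]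


end InvR

open InvR in
theorem inverse_coeff_bounds_R (f : ℂ → ℂ)
    (hf : AnalyticOnNhd ℂ f (ball (0:ℂ) 1))
    (hf0 : f 0 = 0) (hf1 : deriv f 0 = 1)
    (hre : ∀ z ∈ ball (0:ℂ) 1, 0 < (deriv f z).re)
    (a₂ a₃ a₄ A₂ A₃ A₄ : ℂ)
    (ha₂ : a₂ = iteratedDeriv 2 f 0 / 2)
    (ha₃ : a₃ = iteratedDeriv 3 f 0 / 6)
    (ha₄ : a₄ = iteratedDeriv 4 f 0 / 24)
    (hA₂ : A₂ = -a₂)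
    (hA₃ : A₃ = 2 * a₂ ^ 2 - a₃)
    (hA₄ : A₄ = -a₄ + 5 * a₂ * a₃ - 5 * a₂ ^ 3) :
    ‖A₂‖ ≤ 1 ∧ ‖A₃‖ ≤ 4 / 3 ∧ ‖A₄‖ ≤ 13 / 6 := by
  have hp : AnalyticOnNhd ℂ (deriv f) (ball (0:ℂ) 1) := hf.deriv
  obtain ⟨b₁, b₂, b₃, e1, e2, e3, hb1, hb2, hb3⟩ := key hp hf1 hre
  have k2 : iteratedDeriv 2 f 0 = deriv (deriv f) 0 := congrFun (D2_eq f) 0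
  have k3 : iteratedDeriv 3 f 0 = iteratedDeriv 2 (deriv f) 0 := by
    rw [show (3:ℕ) = 2 + 1 from rfl, iteratedDeriv_succ']
  have k4 : iteratedDeriv 4 f 0 = iteratedDeriv 3 (deriv f) 0 := by
    rw [show (4:ℕ) = 3 + 1 from rfl, iteratedDeriv_succ']
  have ea2 : a₂ = b₁ := by
    rw [ha₂, k2]
    have : deriv (deriv f) 0 = 2 * b₁ := e1
    rw [this]; ring
  have ea3 : a₃ = (4 * b₂ + 4 * b₁ ^ 2) / 6 := by rw [ha₃, k3, e2]
  have ea4 : a₄ = (12 * b₃ + 24 * b₁ * b₂ + 12 * b₁ ^ 3) / 24 := by rw [ha₄, k4, e3]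
  set r := ‖b₁‖ with hr_def
  have hr0 : 0 ≤ r := norm_nonneg _
  have hr1 : r ≤ 1 := hb1
  have habs4 : ‖(4:ℂ)‖ = 4 := by
    rw [show (4:ℂ) = ((4:ℝ):ℂ) by norm_num, Complex.norm_real]; norm_num
  have habs2 : ‖(2:ℂ)‖ = 2 := Complex.norm_two
  have habs3 : ‖(3:ℂ)‖ = 3 := by
    rw [show (3:ℂ) = ((3:ℝ):ℂ) by norm_num, Complex.norm_real]; norm_num
  have habs6 : ‖(6:ℂ)‖ = 6 := by
    rw [show (6:ℂ) = ((6:ℝ):ℂ) by norm_num, Complex.norm_real]; norm_num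
  have habs13 : ‖(13:ℂ)‖ = 13 := by
    rw [show (13:ℂ) = ((13:ℝ):ℂ) by norm_num, Complex.norm_real]; norm_num
  have habs14 : ‖(14:ℂ)‖ = 14 := by
    rw [show (14:ℂ) = ((14:ℝ):ℂ) by norm_num, Complex.norm_real]; norm_num
  refine ⟨?_, ?_, ?_⟩
  · rw [hA₂, ea2, norm_neg]
    exact hb1
  · have eA3 : A₃ = (4 * b₁ ^ 2 - 2 * b₂) / 3 := by
      rw [hA₃, ea2, ea3]; ring
    rw [eA3, norm_div, habs3]
    have tri : ‖4 * b₁ ^ 2 - 2 * b₂‖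
        ≤ 4 * r ^ 2 + 2 * ‖b₂‖ := by
      calc ‖4 * b₁ ^ 2 - 2 * b₂‖
          ≤ ‖4 * b₁ ^ 2‖ + ‖2 * b₂‖ := abs_sub_le' _ _
        _ = 4 * r ^ 2 + 2 * ‖b₂‖ := by
            rw [norm_mul, norm_mul, norm_pow, habs4, habs2]
    have : ‖4 * b₁ ^ 2 - 2 * b₂‖ ≤ 4 := by nlinarith
    linarith
  · have eA4 : A₄ = (-(3 * b₃) + 14 * b₁ * b₂ - 13 * b₁ ^ 3) / 6 := by
      rw [hA₄, ea2, ea3, ea4]; ring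
    rw [eA4, norm_div, habs6]
    have tri : ‖-(3 * b₃) + 14 * b₁ * b₂ - 13 * b₁ ^ 3‖
        ≤ 3 * ‖b₃‖ + 14 * r * ‖b₂‖ + 13 * r ^ 3 := by
      calc ‖-(3 * b₃) + 14 * b₁ * b₂ - 13 * b₁ ^ 3‖
          ≤ ‖-(3 * b₃)‖ + ‖14 * b₁ * b₂‖
            + ‖13 * b₁ ^ 3‖ := abs_add_sub_le _ _ _
        _ = 3 * ‖b₃‖ + 14 * r * ‖b₂‖ + 13 * r ^ 3 := by
            simp only [norm_neg, norm_mul, norm_pow, habs3, habs13, habs14, ← hr_def]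
    have key13 : ‖-(3 * b₃) + 14 * b₁ * b₂ - 13 * b₁ ^ 3‖ ≤ 13 := by
      have h10 : (0:ℝ) ≤ 10 - 4 * r - r ^ 2 := by nlinarith
      have hfac : (0:ℝ) ≤ (1 - r) * (10 - 4 * r - r ^ 2) :=
        mul_nonneg (by linarith) h10
      nlinarith [mul_le_mul_of_nonneg_left hb2 (by linarith : (0:ℝ) ≤ 14 * r)]
    linarith
end
end

section
/- Let f be in the class R (bounded turning) and let A_2, A_3, A_4 be the coefficients of the inverse function. Then |A_2^2 - 2A_3^2 + A_2 A_4| ≤ 43/18. -/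
open Complex Metric Set Filter Function

noncomputable section

namespace AuxR

/-- Disk-algebra inequality: `‖v - a‖ ≤ ‖1 - conj a * v‖` for `a, v` in closed unit disk. -/
lemma mobius_norm_le {a v : ℂ} (ha : ‖a‖ ≤ 1) (hv : ‖v‖ ≤ 1) :
    ‖v - a‖ ≤ ‖1 - (starRingEnd ℂ) a * v‖ := by
  have h1 : Complex.normSq a ≤ 1 := by
    rw [← Complex.sq_norm] at *; nlinarith [norm_nonneg a, ha]
  have h2 : Complex.normSq v ≤ 1 := by
    rw [← Complex.sq_norm] at *; nlinarith [norm_nonneg v, hv]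
  have key : Complex.normSq (v - a) ≤ Complex.normSq (1 - (starRingEnd ℂ) a * v) := by
    simp only [Complex.normSq_apply, Complex.sub_re, Complex.sub_im, Complex.mul_re,
      Complex.mul_im, Complex.one_re, Complex.one_im, Complex.conj_re, Complex.conj_im] at *
    nlinarith [sq_nonneg (a.re * v.re + a.im * v.im), sq_nonneg (a.re * v.im - a.im * v.re)]
  rw [Complex.norm_def, Complex.norm_def]
  exact Real.sqrt_le_sqrt key


lemma schwarz_closed {w : ℂ → ℂ} (hw : DifferentiableOn ℂ w (ball 0 1))
    (hw0 : w 0 = 0) (hb : ∀ z ∈ ball (0:ℂ) 1, ‖w z‖ ≤ 1) {z : ℂ} (hz : z ∈ ball (0:ℂ) 1) :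
    ‖dslope w 0 z‖ ≤ 1 := by
  have hz1 : ‖z‖ < 1 := mem_ball_zero_iff.1 hz
  refine le_of_forall_gt_imp_ge_of_dense fun b hb1 => ?_
  set ε : ℝ := min ((b - 1) / 3) 1 with hεdef
  have hε : 0 < ε := lt_min (by linarith) one_pos
  have hε1 : ε ≤ 1 := min_le_right _ _
  have hεb : 3 * ε ≤ b - 1 := by
    have := min_le_left ((b - 1) / 3) 1; linarith
  set r : ℝ := (max ‖z‖ (1 / (1 + ε)) + 1) / 2 with hrdef
  have hinv1 : 1 / (1 + ε) < 1 := by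
    rw [div_lt_one (by linarith)]; linarith
  have hr1 : r < 1 := by
    have := max_lt hz1 hinv1; simp only [hrdef]; linarith
  have hrz : ‖z‖ < r := by
    have h1 := le_max_left ‖z‖ (1 / (1 + ε))
    simp only [hrdef]; linarith
  have hr0 : 0 < r := lt_of_le_of_lt (norm_nonneg z) hrz
  have hrinv : 1 / (1 + ε) ≤ r := by
    have := le_max_right ‖z‖ (1 / (1 + ε)); simp only [hrdef]
    have : 1 / (1 + ε) ≤ max ‖z‖ (1 / (1 + ε)) := le_max_right _ _
    linarith [hinv1]
  have maps : MapsTo w (ball 0 r) (ball (w 0) (1 + ε)) := by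
    intro x hx
    rw [hw0, mem_ball_zero_iff]
    have hx1 : x ∈ ball (0:ℂ) 1 := ball_subset_ball hr1.le hx
    exact lt_of_le_of_lt (hb x hx1) (by linarith)
  have key := Complex.norm_dslope_le_div_of_mapsTo_ball
    (hw.mono (ball_subset_ball hr1.le)) (maps.mono_right ball_subset_closedBall) (mem_ball_zero_iff.2 hrz)
  have h2 : (1 + ε) / r ≤ (1 + ε) * (1 + ε) := by
    rw [div_le_iff₀ hr0]
    have h3 : 1 ≤ r * (1 + ε) := by
      rw [div_le_iff₀ (by linarith : (0:ℝ) < 1 + ε)] at hrinv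
      linarith [mul_comm r (1+ε)] 
    nlinarith
  calc ‖dslope w 0 z‖ ≤ (1 + ε) / r := key
    _ ≤ (1 + ε) * (1 + ε) := h2
    _ ≤ 1 + 3 * ε := by nlinarith
    _ ≤ b := by linarith


/-- Pointwise Schwarz–Pick on the unit disk, plus derivative bound at the origin,
for maps into the closed unit disk. -/
lemma sp {u : ℂ → ℂ} (hu : DifferentiableOn ℂ u (ball 0 1))
    (hb : ∀ z ∈ ball (0:ℂ) 1, ‖u z‖ ≤ 1) :
    (∀ z ∈ ball (0:ℂ) 1, ‖u z - u 0‖ ≤ ‖z‖ * ‖1 - (starRingEnd ℂ) (u 0) * u z‖) ∧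
    ‖deriv u 0‖ ≤ 1 - ‖u 0‖ ^ 2 := by
  have h0 : (0:ℂ) ∈ ball (0:ℂ) 1 := mem_ball_self one_pos
  have ha := hb 0 h0
  rcases eq_or_lt_of_le ha with heq | hlt
  · -- ‖u 0‖ = 1 : u is constant by the maximum principle
    have hmax : IsMaxOn (norm ∘ u) (ball (0:ℂ) 1) 0 := by
      intro x hx
      simp only [comp_apply, Set.mem_setOf_eq]
      calc ‖u x‖ ≤ 1 := hb x hx
        _ = ‖u 0‖ := heq.symm
    have hconst : EqOn u (const ℂ (u 0)) (ball (0:ℂ) 1) :=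
      Complex.eqOn_of_isPreconnected_of_isMaxOn_norm
        (convex_ball (0:ℂ) 1).isPreconnected isOpen_ball hu h0 hmax
    constructor
    · intro z hz
      rw [hconst hz]
      simp only [const_apply, sub_self, norm_zero]
      positivity
    · have hev : u =ᶠ[nhds 0] fun _ => u 0 :=
        hconst.eventuallyEq_of_mem (isOpen_ball.mem_nhds h0)
      rw [hev.deriv_eq, deriv_const, norm_zero, heq]
      norm_num
  · -- ‖u 0‖ < 1
    set a := u 0 with hadef
    have hden : ∀ z ∈ ball (0:ℂ) 1, 1 - (starRingEnd ℂ) a * u z ≠ 0 := by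
      intro z hz h
      have h1 : (1:ℂ) = (starRingEnd ℂ) a * u z := by
        rw [sub_eq_zero] at h; exact h
      have h2 : ‖(starRingEnd ℂ) a * u z‖ = 1 := by rw [← h1]; norm_num
      rw [norm_mul, RCLike.norm_conj] at h2
      nlinarith [norm_nonneg (u z), hb z hz, norm_nonneg a]
    set w := fun z => (u z - a) / (1 - (starRingEnd ℂ) a * u z) with hwdef
    have hwd : DifferentiableOn ℂ w (ball 0 1) := by
      apply DifferentiableOn.div (hu.sub_const a)
      · exact (differentiableOn_const 1).sub ((differentiableOn_const _).mul hu)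
      · exact hden
    have hw0 : w 0 = 0 := by simp [hwdef, ← hadef]
    have hwb : ∀ z ∈ ball (0:ℂ) 1, ‖w z‖ ≤ 1 := by
      intro z hz
      rw [hwdef]
      simp only [norm_div]
      apply div_le_one_of_le₀ (mobius_norm_le hlt.le (hb z hz)) (norm_nonneg _)
    have hds := fun z hz => schwarz_closed hwd hw0 hwb (z := z) hz
    have hk : (1:ℂ) - (starRingEnd ℂ) a * a = ((1 - ‖a‖ ^ 2 : ℝ) : ℂ) := by
      rw [Complex.conj_mul']
      push_cast
      ring
    have hkne : (1:ℂ) - (starRingEnd ℂ) a * a ≠ 0 := by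
      rw [hk]
      simp only [ne_eq, Complex.ofReal_eq_zero]
      nlinarith [norm_nonneg a]
    constructor
    · intro z hz
      rcases eq_or_ne z 0 with rfl | hz0
      · simp [hadef]
      · have h1 := hds z hz
        rw [dslope_of_ne _ hz0] at h1
        have h2 : ‖w z‖ ≤ ‖z‖ := by
          rw [slope_def_field, hw0, sub_zero, sub_zero, norm_div,
            div_le_one (norm_pos_iff.2 hz0)] at h1
          exact h1
        rw [hwdef] at h2
        simp only [norm_div] at h2
        rw [div_le_iff₀ (norm_pos_iff.2 (hden z hz))] at h2
        linarith [h2]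
    · have h1 := hds 0 h0
      rw [dslope_same] at h1
      have hua : DifferentiableAt ℂ u 0 := hu.differentiableAt (isOpen_ball.mem_nhds h0)
      have hdw : deriv w 0 = deriv u 0 / (1 - (starRingEnd ℂ) a * a) := by
        rw [hwdef]
        rw [deriv_fun_div (d := fun z => 1 - (starRingEnd ℂ) a * u z) (hua.sub_const a)
          ((differentiableAt_const (1:ℂ)).sub ((differentiableAt_const _).mul hua))
          (hden 0 h0)]
        rw [deriv_sub_const, deriv_const_sub, deriv_const_mul _ hua, ← hadef,
          sub_self, zero_mul, sub_zero]
        rw [pow_two]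
        rw [mul_comm (1 - (starRingEnd ℂ) a * a) (1 - (starRingEnd ℂ) a * a)] 
        exact mul_div_mul_right _ _ hkne
      have h2 : ‖deriv u 0‖ ≤ ‖(1:ℂ) - (starRingEnd ℂ) a * a‖ := by
        rw [hdw, norm_div, div_le_one (norm_pos_iff.2 hkne)] at h1
        exact h1
      rw [hk, Complex.norm_real, Real.norm_eq_abs] at h2
      rwa [_root_.abs_of_nonneg (by nlinarith [norm_nonneg a] : (0:ℝ) ≤ 1 - ‖a‖ ^ 2)] at h2


lemma dslope_diffOn {h : ℂ → ℂ} (hd : DifferentiableOn ℂ h (ball 0 1)) :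
    DifferentiableOn ℂ (dslope h 0) (ball 0 1) := by
  intro z hz
  rcases eq_or_ne z 0 with rfl | hz0
  · have hA : AnalyticAt ℂ h 0 :=
      (hd.analyticOnNhd isOpen_ball) 0 (mem_ball_self one_pos)
    obtain ⟨p, hp⟩ := hA
    exact (hp.has_fpower_series_dslope_fslope.analyticAt).differentiableAt.differentiableWithinAt
  · exact ((differentiableAt_dslope_of_ne hz0).2
      (hd.differentiableAt (isOpen_ball.mem_nhds hz))).differentiableWithinAt

/-- Extraction of the first three Taylor coefficients at 0. -/
lemma cubic_taylor {V g : ℂ → ℂ} (hV : DifferentiableOn ℂ V (ball 0 1))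
    (c₀ c₁ c₂ c₃ : ℂ)
    (hg : ∀ z ∈ ball (0:ℂ) 1, g z = c₀ + c₁*z + c₂*z^2 + c₃*z^3 + z^4 * V z) :
    deriv g 0 = c₁ ∧ iteratedDeriv 2 g 0 = 2*c₂ ∧ iteratedDeriv 3 g 0 = 6*c₃ := by
  have h0 : (0:ℂ) ∈ ball (0:ℂ) 1 := mem_ball_self one_pos
  have hVa : AnalyticOnNhd ℂ V (ball 0 1) := hV.analyticOnNhd isOpen_ball
  have hV' : AnalyticOnNhd ℂ (deriv V) (ball 0 1) := hVa.deriv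
  have hV'' : AnalyticOnNhd ℂ (deriv (deriv V)) (ball 0 1) := hV'.deriv
  -- derivative of z^4 * V z  is  z^3 * (4 * V z + z * deriv V z)
  set W : ℂ → ℂ := fun z => 4 * V z + z * deriv V z with hWdef
  set X : ℂ → ℂ := fun z => 3 * W z + z * deriv W z with hXdef
  have hWa : AnalyticOnNhd ℂ W (ball 0 1) := by
    apply AnalyticOnNhd.add
    · exact (analyticOnNhd_const).mul hVa
    · exact (analyticOnNhd_id).mul hV'
  have hXa : AnalyticOnNhd ℂ X (ball 0 1) := by
    apply AnalyticOnNhd.add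
    · exact (analyticOnNhd_const).mul hWa
    · exact (analyticOnNhd_id).mul hWa.deriv
  set T : ℂ → ℂ := fun z => c₀ + c₁*z + c₂*z^2 + c₃*z^3 + z^4 * V z with hTdef
  set T₁ : ℂ → ℂ := fun z => c₁ + 2*c₂*z + 3*c₃*z^2 + z^3 * W z with hT₁def
  set T₂ : ℂ → ℂ := fun z => 2*c₂ + 6*c₃*z + z^2 * X z with hT₂def
  -- generic: HasDerivAt T (T₁ z) z on ball
  have hdT : ∀ z ∈ ball (0:ℂ) 1, HasDerivAt T (T₁ z) z := by
    intro z hz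
    have hVz : HasDerivAt V (deriv V z) z := ((hVa z hz).differentiableAt).hasDerivAt
    have hA := ((((hasDerivAt_const z c₀).add ((hasDerivAt_id' z).const_mul c₁)).add
      ((hasDerivAt_pow 2 z).const_mul c₂)).add ((hasDerivAt_pow 3 z).const_mul c₃)).add
      ((hasDerivAt_pow 4 z).mul hVz)
    refine hA.congr_deriv ?_
    simp only [hT₁def, hWdef]
    push_cast
    ring
  have hdT₁ : ∀ z ∈ ball (0:ℂ) 1, HasDerivAt T₁ (T₂ z) z := by
    intro z hz
    have hWz : HasDerivAt W (deriv W z) z := ((hWa z hz).differentiableAt).hasDerivAt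
    have hA := (((hasDerivAt_const z c₁).add ((hasDerivAt_id' z).const_mul (2*c₂))).add
      ((hasDerivAt_pow 2 z).const_mul (3*c₃))).add ((hasDerivAt_pow 3 z).mul hWz)
    refine hA.congr_deriv ?_
    simp only [hT₂def, hXdef]
    push_cast
    ring
  have hgT : g =ᶠ[nhds (0:ℂ)] T := eventually_of_mem (isOpen_ball.mem_nhds h0) hg
  have hd1 : deriv g 0 = c₁ := by
    rw [hgT.deriv_eq, (hdT 0 h0).deriv]
    simp [hT₁def]
  have hderivT : deriv g =ᶠ[nhds (0:ℂ)] T₁ := by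
    have h1 : deriv g =ᶠ[nhds (0:ℂ)] deriv T := hgT.deriv
    have h2 : deriv T =ᶠ[nhds (0:ℂ)] T₁ :=
      eventually_of_mem (isOpen_ball.mem_nhds h0) (fun z hz => (hdT z hz).deriv)
    exact h1.trans h2
  have hd2 : iteratedDeriv 2 g 0 = 2*c₂ := by
    rw [iteratedDeriv_succ, iteratedDeriv_one]
    rw [hderivT.deriv_eq, (hdT₁ 0 h0).deriv]
    simp [hT₂def]
  have hd3 : iteratedDeriv 3 g 0 = 6*c₃ := by
    rw [iteratedDeriv_succ, iteratedDeriv_succ, iteratedDeriv_one]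
    have h1 : deriv (deriv g) =ᶠ[nhds (0:ℂ)] T₂ := by
      have h2 : deriv (deriv g) =ᶠ[nhds (0:ℂ)] deriv T₁ := hderivT.deriv
      exact h2.trans (eventually_of_mem (isOpen_ball.mem_nhds h0)
        (fun z hz => (hdT₁ z hz).deriv))
    rw [h1.deriv_eq]
    -- deriv T₂ 0 = 6*c₃
    have hXz : HasDerivAt X (deriv X 0) 0 := ((hXa 0 h0).differentiableAt).hasDerivAt
    have h5 : HasDerivAt T₂ (6*c₃) 0 := by
      have hA := ((hasDerivAt_const (0:ℂ) (2*c₂)).add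
        ((hasDerivAt_id' (0:ℂ)).const_mul (6*c₃))).add ((hasDerivAt_pow 2 (0:ℂ)).mul hXz)
      refine hA.congr_deriv ?_
      push_cast; ring
    rw [h5.deriv]
  exact ⟨hd1, hd2, hd3⟩


end AuxR

open AuxR

set_option maxHeartbeats 2000000 in
theorem aux_bound_R (f : ℂ → ℂ)
    (hf : AnalyticOnNhd ℂ f (ball (0:ℂ) 1))
    (hf0 : f 0 = 0) (hf1 : deriv f 0 = 1)
    (hre : ∀ z ∈ ball (0:ℂ) 1, 0 < (deriv f z).re)
    (a₂ a₃ a₄ A₂ A₃ A₄ : ℂ)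
    (ha₂ : a₂ = iteratedDeriv 2 f 0 / 2)
    (ha₃ : a₃ = iteratedDeriv 3 f 0 / 6)
    (ha₄ : a₄ = iteratedDeriv 4 f 0 / 24)
    (hA₂ : A₂ = -a₂)
    (hA₃ : A₃ = 2 * a₂ ^ 2 - a₃)
    (hA₄ : A₄ = -a₄ + 5 * a₂ * a₃ - 5 * a₂ ^ 3) :
    ‖A₂ ^ 2 - 2 * A₃ ^ 2 + A₂ * A₄‖ ≤ 43 / 18 := by
  have h0 : (0:ℂ) ∈ ball (0:ℂ) 1 := mem_ball_self one_pos
  set g : ℂ → ℂ := deriv f with hgdef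
  have hg : DifferentiableOn ℂ g (ball 0 1) := (hf.deriv).differentiableOn
  have hg0 : g 0 = 1 := hf1
  have hgne : ∀ z ∈ ball (0:ℂ) 1, g z + 1 ≠ 0 := by
    intro z hz h
    have h1 := hre z hz
    have h2 : (g z + 1).re = 0 := by rw [h]; simp
    rw [Complex.add_re, Complex.one_re] at h2
    have : (g z).re = (deriv f z).re := rfl
    linarith [this ▸ h2]
  set ω : ℂ → ℂ := fun z => (g z - 1) / (g z + 1) with hωdef
  have hωd : DifferentiableOn ℂ ω (ball 0 1) :=
    (hg.sub_const 1).div (hg.add_const 1) hgne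
  have hω0 : ω 0 = 0 := by simp [hωdef, hg0]
  have hωlt : ∀ z ∈ ball (0:ℂ) 1, ‖ω z‖ < 1 := by
    intro z hz
    have hlt : Complex.normSq (g z - 1) < Complex.normSq (g z + 1) := by
      simp only [Complex.normSq_apply, Complex.sub_re, Complex.add_re, Complex.sub_im,
        Complex.add_im, Complex.one_re, Complex.one_im]
      nlinarith [hre z hz]
    have h2 : ‖g z - 1‖ < ‖g z + 1‖ := by
      rw [Complex.norm_def, Complex.norm_def]
      exact Real.sqrt_lt_sqrt (Complex.normSq_nonneg _) hlt
    rw [hωdef]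
    simp only [norm_div]
    rw [div_lt_one (norm_pos_iff.2 (hgne z hz))]
    exact h2
  set φ : ℂ → ℂ := dslope ω 0 with hφdef
  set φ₂ : ℂ → ℂ := dslope φ 0 with hφ₂def
  set φ₃ : ℂ → ℂ := dslope φ₂ 0 with hφ₃def
  set φ₄ : ℂ → ℂ := dslope φ₃ 0 with hφ₄def
  have hφd : DifferentiableOn ℂ φ (ball 0 1) := dslope_diffOn hωd
  have hφ₂d : DifferentiableOn ℂ φ₂ (ball 0 1) := dslope_diffOn hφd
  have hφ₃d : DifferentiableOn ℂ φ₃ (ball 0 1) := dslope_diffOn hφ₂d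
  have hφ₄d : DifferentiableOn ℂ φ₄ (ball 0 1) := dslope_diffOn hφ₃d
  set b₁ : ℂ := φ 0 with hb₁def
  set b₂ : ℂ := φ₂ 0 with hb₂def
  set b₃ : ℂ := φ₃ 0 with hb₃def
  have tω : ∀ z : ℂ, ω z = z * φ z := by
    intro z
    have h1 := sub_smul_dslope ω 0 z
    rw [hω0, sub_zero, sub_zero, smul_eq_mul] at h1
    rw [← h1, hφdef]
  have tφ : ∀ z : ℂ, φ z = b₁ + z * φ₂ z := by
    intro z
    have h1 := sub_smul_dslope φ 0 z
    rw [sub_zero, smul_eq_mul, ← hφ₂def] at h1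
    rw [hb₁def]
    linear_combination -h1
  have tφ₂ : ∀ z : ℂ, φ₂ z = b₂ + z * φ₃ z := by
    intro z
    have h1 := sub_smul_dslope φ₂ 0 z
    rw [sub_zero, smul_eq_mul, ← hφ₃def] at h1
    rw [hb₂def]
    linear_combination -h1
  have tφ₃ : ∀ z : ℂ, φ₃ z = b₃ + z * φ₄ z := by
    intro z
    have h1 := sub_smul_dslope φ₃ 0 z
    rw [sub_zero, smul_eq_mul, ← hφ₄def] at h1
    rw [hb₃def]
    linear_combination -h1
  have hφb : ∀ z ∈ ball (0:ℂ) 1, ‖φ z‖ ≤ 1 := fun z hz =>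
    schwarz_closed hωd hω0 (fun y hy => (hωlt y hy).le) hz
  obtain ⟨hsp1, hsp2⟩ := sp hφd hφb
  have hx1 : ‖b₁‖ ≤ 1 := hφb 0 h0
  have hderivφ : deriv φ 0 = b₂ := by rw [hb₂def, hφ₂def, dslope_same]
  have hy : ‖b₂‖ ≤ 1 - ‖b₁‖^2 := by rw [← hderivφ]; exact hsp2
  have hderivφ₂ : deriv φ₂ 0 = b₃ := by rw [hb₃def, hφ₃def, dslope_same]
  -- bound on b₃
  have ht : ‖b₃‖ ≤ 1 - ‖b₁‖^2 := by
    rcases eq_or_lt_of_le hx1 with heq | hlt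
    · -- ‖b₁‖ = 1 : φ constant
      have hmax : IsMaxOn (norm ∘ φ) (ball (0:ℂ) 1) 0 := by
        intro x hx
        simp only [comp_apply, Set.mem_setOf_eq]
        calc ‖φ x‖ ≤ 1 := hφb x hx
          _ = ‖φ 0‖ := heq.symm
      have hconst : EqOn φ (const ℂ (φ 0)) (ball (0:ℂ) 1) :=
        Complex.eqOn_of_isPreconnected_of_isMaxOn_norm
          (convex_ball (0:ℂ) 1).isPreconnected isOpen_ball hφd h0 hmax
      have hφ₂zero : ∀ z ∈ ball (0:ℂ) 1, φ₂ z = 0 := by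
        intro z hz
        rcases eq_or_ne z 0 with rfl | hz0
        · rw [← hb₂def, ← hderivφ]
          have hev : φ =ᶠ[nhds 0] fun _ => φ 0 :=
            hconst.eventuallyEq_of_mem (isOpen_ball.mem_nhds h0)
          rw [hev.deriv_eq, deriv_const]
        · rw [hφ₂def, dslope_of_ne _ hz0, slope_def_field, hconst hz]
          simp [const_apply]
      have hb₃zero : b₃ = 0 := by
        rw [← hderivφ₂]
        have hev : φ₂ =ᶠ[nhds 0] fun _ => (0:ℂ) :=
          eventually_of_mem (isOpen_ball.mem_nhds h0) hφ₂zero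
        rw [hev.deriv_eq, deriv_const]
      rw [hb₃zero, norm_zero, ← heq]
      nlinarith [norm_nonneg b₁]
    · -- ‖b₁‖ < 1
      have hden : ∀ z ∈ ball (0:ℂ) 1, (1:ℂ) - (starRingEnd ℂ) b₁ * φ z ≠ 0 := by
        intro z hz h
        have h1 : (1:ℂ) = (starRingEnd ℂ) b₁ * φ z := by rwa [sub_eq_zero] at h
        have h2 : ‖(starRingEnd ℂ) b₁ * φ z‖ = 1 := by rw [← h1]; norm_num
        rw [norm_mul, RCLike.norm_conj] at h2
        nlinarith [norm_nonneg (φ z), hφb z hz, norm_nonneg b₁]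
      set χ : ℂ → ℂ := fun z => φ₂ z / (1 - (starRingEnd ℂ) b₁ * φ z) with hχdef
      have hχd : DifferentiableOn ℂ χ (ball 0 1) :=
        hφ₂d.div ((differentiableOn_const 1).sub ((differentiableOn_const _).mul hφd)) hden
      have hk : (1:ℂ) - (starRingEnd ℂ) b₁ * b₁ = ((1 - ‖b₁‖ ^ 2 : ℝ) : ℂ) := by
        rw [Complex.conj_mul']
        push_cast
        ring
      have hkpos : (0:ℝ) < 1 - ‖b₁‖^2 := by nlinarith [norm_nonneg b₁]
      have hknorm : ‖(1:ℂ) - (starRingEnd ℂ) b₁ * b₁‖ = 1 - ‖b₁‖^2 := by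
        rw [hk, Complex.norm_real, Real.norm_eq_abs, _root_.abs_of_nonneg hkpos.le]
      have hχb : ∀ z ∈ ball (0:ℂ) 1, ‖χ z‖ ≤ 1 := by
        intro z hz
        rcases eq_or_ne z 0 with rfl | hz0
        · rw [hχdef]
          simp only [norm_div]
          rw [div_le_one (norm_pos_iff.2 (hden 0 h0))]
          calc ‖φ₂ 0‖ = ‖b₂‖ := by rw [hb₂def]
            _ ≤ 1 - ‖b₁‖^2 := hy
            _ = ‖(1:ℂ) - (starRingEnd ℂ) b₁ * b₁‖ := hknorm.symm
            _ = ‖(1:ℂ) - (starRingEnd ℂ) b₁ * φ 0‖ := by rw [← hb₁def]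
        · have h1 := hsp1 z hz
          rw [← hb₁def] at h1
          have h2 : φ z - b₁ = z * φ₂ z := by rw [tφ z]; ring
          rw [h2, norm_mul] at h1
          have h3 : ‖φ₂ z‖ ≤ ‖1 - (starRingEnd ℂ) b₁ * φ z‖ := by
            have hzpos : (0:ℝ) < ‖z‖ := norm_pos_iff.2 hz0
            nlinarith [h1]
          rw [hχdef]
          simp only [norm_div]
          rw [div_le_one (norm_pos_iff.2 (hden z hz))]
          exact h3
      obtain ⟨_, hχsp⟩ := sp hχd hχb
      have hφ₂a : DifferentiableAt ℂ φ₂ 0 := hφ₂d.differentiableAt (isOpen_ball.mem_nhds h0)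
      have hφa : DifferentiableAt ℂ φ 0 := hφd.differentiableAt (isOpen_ball.mem_nhds h0)
      have hχ0 : χ 0 = b₂ / ((1:ℂ) - (starRingEnd ℂ) b₁ * b₁) := by
        rw [hχdef]
      have hdχ : deriv χ 0 = (b₃ * ((1:ℂ) - (starRingEnd ℂ) b₁ * b₁)
          + (starRingEnd ℂ) b₁ * b₂^2) / ((1:ℂ) - (starRingEnd ℂ) b₁ * b₁)^2 := by
        rw [hχdef]
        rw [deriv_fun_div (d := fun z => 1 - (starRingEnd ℂ) b₁ * φ z) hφ₂a
          ((differentiableAt_const (1:ℂ)).sub ((differentiableAt_const _).mul hφa))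
          (hden 0 h0)]
        rw [deriv_const_sub, deriv_const_mul _ hφa, hderivφ, hderivφ₂, ← hb₁def, ← hb₂def]
        ring
      have hkne : ((1:ℂ) - (starRingEnd ℂ) b₁ * b₁) ≠ 0 := by
        intro h
        have : ‖(1:ℂ) - (starRingEnd ℂ) b₁ * b₁‖ = 0 := by rw [h, norm_zero]
        rw [hknorm] at this
        linarith
      have hnum : ‖b₃‖ * (1 - ‖b₁‖^2) - ‖b₁‖ * ‖b₂‖^2
          ≤ ‖b₃ * ((1:ℂ) - (starRingEnd ℂ) b₁ * b₁) + (starRingEnd ℂ) b₁ * b₂^2‖ := by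
        have h4 := norm_sub_norm_le (b₃ * ((1:ℂ) - (starRingEnd ℂ) b₁ * b₁))
          (-((starRingEnd ℂ) b₁ * b₂^2))
        rw [sub_neg_eq_add, norm_neg, norm_mul, norm_mul, RCLike.norm_conj, norm_pow,
          hknorm] at h4
        exact h4
      have h5 := hχsp
      rw [hdχ, hχ0, norm_div, norm_div, norm_pow, hknorm] at h5
      have h7 : ‖b₃ * ((1:ℂ) - (starRingEnd ℂ) b₁ * b₁) + (starRingEnd ℂ) b₁ * b₂^2‖
          ≤ (1 - ‖b₁‖^2)^2 - ‖b₂‖^2 := by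
        rw [div_le_iff₀ (by positivity)] at h5
        calc ‖b₃ * ((1:ℂ) - (starRingEnd ℂ) b₁ * b₁) + (starRingEnd ℂ) b₁ * b₂^2‖
            ≤ (1 - (‖b₂‖/(1-‖b₁‖^2))^2) * ((1-‖b₁‖^2)^2) := h5
          _ = (1-‖b₁‖^2)^2 - ‖b₂‖^2 := by
              rw [div_pow, sub_mul, one_mul, div_mul_cancel₀ _ (pow_ne_zero 2 hkpos.ne')]
      nlinarith [hnum, h7, hkpos, norm_nonneg b₂, norm_nonneg b₃,
        mul_nonneg (sub_nonneg.2 hlt.le) (sq_nonneg ‖b₂‖)]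
  -- the function 1 - ω z does not vanish
  have hone : ∀ z ∈ ball (0:ℂ) 1, (1:ℂ) - ω z ≠ 0 := by
    intro z hz h
    rw [sub_eq_zero] at h
    have : ‖ω z‖ = 1 := by rw [← h]; norm_num
    linarith [hωlt z hz]
  set V : ℂ → ℂ := fun z =>
    2*φ₄ z + 2*b₂^2 + 4*b₁*b₃ + 6*b₁^2*b₂
    + z*(4*b₂*b₃ + 4*b₁*φ₄ z + 6*b₁*b₂^2 + 6*b₁^2*b₃)
    + z^2*(2*b₃^2 + 4*b₂*φ₄ z + 2*b₂^3 + 12*b₁*b₂*b₃ + 6*b₁^2*φ₄ z)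
    + z^3*(4*b₃*φ₄ z + 6*b₂^2*b₃ + 6*b₁*b₃^2 + 12*b₁*b₂*φ₄ z)
    + z^4*(2*(φ₄ z)^2 + 6*b₂*b₃^2 + 6*b₂^2*φ₄ z + 12*b₁*b₃*φ₄ z)
    + z^5*(2*b₃^3 + 12*b₂*b₃*φ₄ z + 6*b₁*(φ₄ z)^2)
    + z^6*(6*b₃^2*φ₄ z + 6*b₂*(φ₄ z)^2)
    + z^7*(6*b₃*(φ₄ z)^2) + z^8*(2*(φ₄ z)^3)
    + 2*(φ z)^4 / (1 - ω z) with hVdef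
  have hVd : DifferentiableOn ℂ V (ball 0 1) := by
    have hdiv : DifferentiableOn ℂ (fun z => 2*(φ z)^4 / (1 - ω z)) (ball 0 1) :=
      ((hφd.pow 4).const_mul 2).div ((differentiableOn_const 1).sub hωd) hone
    apply DifferentiableOn.add _ hdiv
    fun_prop
  have hgexp : ∀ z ∈ ball (0:ℂ) 1, g z = 1 + (2*b₁)*z + (2*b₁^2+2*b₂)*z^2
      + (2*b₁^3+4*b₁*b₂+2*b₃)*z^3 + z^4 * V z := by
    intro z hz
    have h1ne := hone z hz
    have hgz : g z * (1 - ω z) = 1 + ω z := by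
      have h2 : ω z * (g z + 1) = g z - 1 := by
        rw [hωdef]; exact div_mul_cancel₀ _ (hgne z hz)
      linear_combination -h2
    have hVz : V z = 2*φ₄ z + 2*b₂^2 + 4*b₁*b₃ + 6*b₁^2*b₂
      + z*(4*b₂*b₃ + 4*b₁*φ₄ z + 6*b₁*b₂^2 + 6*b₁^2*b₃)
      + z^2*(2*b₃^2 + 4*b₂*φ₄ z + 2*b₂^3 + 12*b₁*b₂*b₃ + 6*b₁^2*φ₄ z)
      + z^3*(4*b₃*φ₄ z + 6*b₂^2*b₃ + 6*b₁*b₃^2 + 12*b₁*b₂*φ₄ z)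
      + z^4*(2*(φ₄ z)^2 + 6*b₂*b₃^2 + 6*b₂^2*φ₄ z + 12*b₁*b₃*φ₄ z)
      + z^5*(2*b₃^3 + 12*b₂*b₃*φ₄ z + 6*b₁*(φ₄ z)^2)
      + z^6*(6*b₃^2*φ₄ z + 6*b₂*(φ₄ z)^2)
      + z^7*(6*b₃*(φ₄ z)^2) + z^8*(2*(φ₄ z)^3)
      + 2*(φ z)^4 / (1 - ω z) := by rw [hVdef]
    have key : (1 - ω z) * (1 + (2*b₁)*z + (2*b₁^2+2*b₂)*z^2
        + (2*b₁^3+4*b₁*b₂+2*b₃)*z^3 + z^4 * V z) = 1 + ω z := by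
      rw [hVz]
      rw [tω z, tφ z, tφ₂ z, tφ₃ z] at h1ne ⊢
      field_simp
      ring
    apply mul_left_cancel₀ h1ne
    rw [key, ← hgz]
    ring
  obtain ⟨hc1, hc2, hc3⟩ := cubic_taylor hVd 1 (2*b₁) (2*b₁^2+2*b₂)
    (2*b₁^3+4*b₁*b₂+2*b₃) hgexp
  have e2 : iteratedDeriv 2 f 0 = deriv g 0 := by
    rw [show (2:ℕ) = 1+1 from rfl, iteratedDeriv_succ', ← hgdef, iteratedDeriv_one]
  have e3 : iteratedDeriv 3 f 0 = iteratedDeriv 2 g 0 := by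
    rw [show (3:ℕ) = 2+1 from rfl, iteratedDeriv_succ', ← hgdef]
  have e4 : iteratedDeriv 4 f 0 = iteratedDeriv 3 g 0 := by
    rw [show (4:ℕ) = 3+1 from rfl, iteratedDeriv_succ', ← hgdef]
  have ha₂' : a₂ = b₁ := by rw [ha₂, e2, hc1]; ring
  have ha₃' : a₃ = (2*b₁^2+2*b₂)/3 := by rw [ha₃, e3, hc2]; ring
  have ha₄' : a₄ = (2*b₁^3+4*b₁*b₂+2*b₃)/4 := by rw [ha₄, e4, hc3]; ring
  have hE : A₂^2 - 2*A₃^2 + A₂*A₄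
      = b₁^2 - (25/18)*b₁^4 + (11/9)*b₁^2*b₂ - (8/9)*b₂^2 + (1/2)*b₁*b₃ := by
    rw [hA₂, hA₃, hA₄, ha₂', ha₃', ha₄']; ring
  rw [hE]
  -- triangle inequality
  have n1 := norm_add_le (b₁^2 - (25/18)*b₁^4 + (11/9)*b₁^2*b₂ - (8/9)*b₂^2) ((1/2)*b₁*b₃)
  have n2 := norm_sub_le (b₁^2 - (25/18)*b₁^4 + (11/9)*b₁^2*b₂) ((8/9)*b₂^2)
  have n3 := norm_add_le (b₁^2 - (25/18)*b₁^4) ((11/9)*b₁^2*b₂)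
  have n4 := norm_sub_le (b₁^2) ((25/18)*b₁^4)
  have m1 : ‖((1:ℂ)/2)*b₁*b₃‖ = 1/2*‖b₁‖*‖b₃‖ := by
    rw [norm_mul, norm_mul]; norm_num
  have m2 : ‖((8:ℂ)/9)*b₂^2‖ = 8/9*‖b₂‖^2 := by
    rw [norm_mul, norm_pow]; norm_num
  have m3 : ‖((11:ℂ)/9)*b₁^2*b₂‖ = 11/9*‖b₁‖^2*‖b₂‖ := by
    rw [norm_mul, norm_mul, norm_pow]; norm_num
  have m4 : ‖((25:ℂ)/18)*b₁^4‖ = 25/18*‖b₁‖^4 := by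
    rw [norm_mul, norm_pow]; norm_num
  have m5 : ‖b₁^2‖ = ‖b₁‖^2 := norm_pow _ _
  rw [m1] at n1; rw [m2] at n2; rw [m3] at n3; rw [m4, m5] at n4
  -- final polynomial inequality
  have hxnn : (0:ℝ) ≤ ‖b₁‖ := norm_nonneg _
  have hynn : (0:ℝ) ≤ ‖b₂‖ := norm_nonneg _
  have htnn : (0:ℝ) ≤ ‖b₃‖ := norm_nonneg _
  have p1 : (0:ℝ) ≤ ‖b₁‖*(1-‖b₁‖^2-‖b₃‖) := by
    apply mul_nonneg hxnn; linarith
  have p2 : (0:ℝ) ≤ ‖b₁‖^2*(1-‖b₁‖^2-‖b₂‖) := by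
    apply mul_nonneg (sq_nonneg _); linarith
  have p3 : (0:ℝ) ≤ (1-‖b₁‖^2-‖b₂‖)*(1-‖b₁‖^2+‖b₂‖) := by
    apply mul_nonneg <;> nlinarith
  have p4 : (0:ℝ) ≤ (1-‖b₁‖)*(19*‖b₁‖^3+10*‖b₁‖^2+18*‖b₁‖+27) := by
    apply mul_nonneg (by linarith) (by positivity)
  linarith [n1, n2, n3, n4, p1, p2, p3, p4]
end
end

section
/- Let f be a convex function (class C) and let A_2, A_3 be the coefficients of the inverse function. Then the symmetric Toeplitz determinant satisfies |T^s_{2,2}(f^{-1})| = |A_2^2 - A_3^2| ≤ 2. -/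
open Complex Metric Set

/-- Schwarz–Pick coefficient bound: if `g` is differentiable on the unit ball with `‖g‖ ≤ 1`,
then `‖g'(0)‖ ≤ 1 - ‖g 0‖²`. -/
lemma schwarzPick_deriv_zero (g : ℂ → ℂ) (hd : DifferentiableOn ℂ g (ball 0 1))
    (hb : ∀ z ∈ ball (0:ℂ) 1, ‖g z‖ ≤ 1) :
    ‖deriv g 0‖ ≤ 1 - ‖g 0‖ ^ 2 := by
  have h0 : (0:ℂ) ∈ ball (0:ℂ) 1 := mem_ball_self one_pos
  have hb0 : ‖g 0‖ ≤ 1 := hb 0 h0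
  set b := g 0 with hbdef
  rcases eq_or_lt_of_le hb0 with heq | hlt
  · -- max modulus: g is constant, deriv = 0
    have hmax : IsMaxOn (norm ∘ g) (ball 0 1) 0 := by
      intro z hz
      simp only [Function.comp_apply]
      rw [← hbdef] at *
      calc ‖g z‖ ≤ 1 := hb z hz
        _ = ‖b‖ := heq.symm
    have hEq : EqOn g (Function.const ℂ (g 0)) (ball 0 1) :=
      Complex.eqOn_of_isPreconnected_of_isMaxOn_norm (convex_ball (0:ℂ) 1).isPreconnected
        isOpen_ball hd h0 hmax
    have : deriv g 0 = 0 := by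
      have hev : g =ᶠ[nhds 0] Function.const ℂ (g 0) :=
        Filter.eventuallyEq_of_mem (isOpen_ball.mem_nhds h0) hEq
      rw [hev.deriv_eq]; exact deriv_const _ _
    rw [this, norm_zero, heq]
    norm_num
  · -- Möbius transform
    have hb2 : Complex.normSq b < 1 := by
      rw [Complex.normSq_eq_norm_sq]; nlinarith [norm_nonneg b]
    set h : ℂ → ℂ := fun z => (g z - b) / (1 - (starRingEnd ℂ) b * g z) with hhdef
    have hden : ∀ z ∈ ball (0:ℂ) 1, 1 - (starRingEnd ℂ) b * g z ≠ 0 := by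
      intro z hz hc
      have h1 : ‖(starRingEnd ℂ) b * g z‖ ≤ ‖b‖ := by
        rw [norm_mul, Complex.norm_conj]
        calc ‖b‖ * ‖g z‖ ≤ ‖b‖ * 1 :=
          mul_le_mul_of_nonneg_left (hb z hz) (norm_nonneg b)
        _ = ‖b‖ := mul_one _
      have : (starRingEnd ℂ) b * g z = 1 := by linear_combination -hc
      rw [this] at h1; simp at h1; linarith
    -- key normSq identity/inequality
    have hkey : ∀ z ∈ ball (0:ℂ) 1,
        ‖g z - b‖ ≤ ‖1 - (starRingEnd ℂ) b * g z‖ := by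
      intro z hz
      have hident : Complex.normSq (1 - (starRingEnd ℂ) b * g z) - Complex.normSq (g z - b)
          = (1 - Complex.normSq b) * (1 - Complex.normSq (g z)) := by
        have : ((Complex.normSq (1 - (starRingEnd ℂ) b * g z) : ℂ))
            - Complex.normSq (g z - b)
            = ((1 - Complex.normSq b) * (1 - Complex.normSq (g z)) : ℝ) := by
          push_cast
          rw [← Complex.mul_conj, ← Complex.mul_conj, ← Complex.mul_conj, ← Complex.mul_conj]
          simp only [map_sub, map_mul, map_one, Complex.conj_conj]
          ring
        exact_mod_cast this
      have hgz : Complex.normSq (g z) ≤ 1 := by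
        rw [Complex.normSq_eq_norm_sq]; nlinarith [hb z hz, norm_nonneg (g z)]
      have : Complex.normSq (g z - b) ≤ Complex.normSq (1 - (starRingEnd ℂ) b * g z) := by
        nlinarith [hident]
      rw [Complex.norm_def, Complex.norm_def]
      exact Real.sqrt_le_sqrt this
    have hhd : DifferentiableOn ℂ h (ball 0 1) := by
      apply DifferentiableOn.div
      · exact hd.sub (differentiableOn_const _)
      · exact (differentiableOn_const _).sub ((differentiableOn_const _).mul hd)
      · exact hden
    have hh0 : h 0 = 0 := by simp [hhdef, ← hbdef]
    have hhb : ∀ z ∈ ball (0:ℂ) 1, ‖h z‖ ≤ 1 := by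
      intro z hz
      rw [hhdef]
      simp only [norm_div]
      rw [div_le_one_iff]
      left
      exact ⟨(norm_pos_iff.mpr (hden z hz)), hkey z hz⟩
    -- Schwarz: ‖deriv h 0‖ ≤ 1
    have hder : ‖deriv h 0‖ ≤ 1 := by
      apply le_of_forall_pos_le_add
      intro ε hε
      have hmaps : MapsTo h (ball 0 1) (ball (h 0) (1 + ε)) := by
        intro z hz
        rw [hh0, mem_ball_zero_iff]
        calc ‖h z‖ ≤ 1 := hhb z hz
          _ < 1 + ε := by linarith
      have := Complex.norm_deriv_le_div_of_mapsTo_ball hhd (hmaps.mono_right ball_subset_closedBall) one_pos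
      simpa using this
    -- compute deriv h 0
    have hgd0 : DifferentiableAt ℂ g 0 := hd.differentiableAt (isOpen_ball.mem_nhds h0)
    have hgd : HasDerivAt g (deriv g 0) 0 := hgd0.hasDerivAt
    have hnum : HasDerivAt (fun z => g z - b) (deriv g 0) 0 := hgd.sub_const b
    have hdenD : HasDerivAt (fun z => 1 - (starRingEnd ℂ) b * g z)
        (-((starRingEnd ℂ) b * deriv g 0)) 0 := (hgd.const_mul ((starRingEnd ℂ) b)).const_sub 1
    have hden0 : (1 : ℂ) - (starRingEnd ℂ) b * g 0 ≠ 0 := hden 0 h0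
    have hdd := (hnum.div hdenD hden0).deriv
    have hbb : (1 : ℂ) - (starRingEnd ℂ) b * b = ((1 - Complex.normSq b : ℝ) : ℂ) := by
      push_cast
      rw [mul_comm, Complex.mul_conj]
    have hbbne : ((1 - Complex.normSq b : ℝ) : ℂ) ≠ 0 := by
      simp only [ne_eq, Complex.ofReal_eq_zero]
      intro hc; nlinarith
    have hderiv : deriv h 0 = deriv g 0 / ((1 - Complex.normSq b : ℝ) : ℂ) := by
      rw [hhdef]
      change deriv ((fun z => g z - b) / fun z => 1 - (starRingEnd ℂ) b * g z) 0 = _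
      rw [hdd, ← hbdef, sub_self, zero_mul, sub_zero, hbb, pow_two,
        mul_div_mul_right _ _ hbbne]
    rw [hderiv, norm_div, Complex.norm_real, Real.norm_eq_abs, abs_of_pos (by nlinarith : (0:ℝ) < 1 - Complex.normSq b),
      div_le_one (by nlinarith : (0:ℝ) < 1 - Complex.normSq b)] at hder
    rw [Complex.normSq_eq_norm_sq] at hder
    linarith

theorem symToeplitz22_convex (f : ℂ → ℂ)
    (hf : AnalyticOnNhd ℂ f (ball (0:ℂ) 1))
    (hf0 : f 0 = 0) (hf1 : deriv f 0 = 1)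
    (hne : ∀ z ∈ ball (0:ℂ) 1, deriv f z ≠ 0)
    (hcv : ∀ z ∈ ball (0:ℂ) 1, 0 < (1 + z * iteratedDeriv 2 f z / deriv f z).re)
    (a₂ a₃ A₂ A₃ : ℂ)
    (ha₂ : a₂ = iteratedDeriv 2 f 0 / 2)
    (ha₃ : a₃ = iteratedDeriv 3 f 0 / 6)
    (hA₂ : A₂ = -a₂)
    (hA₃ : A₃ = 2 * a₂ ^ 2 - a₃) :
    ‖A₂ ^ 2 - A₃ ^ 2‖ ≤ 2 := by
  have h0 : (0:ℂ) ∈ ball (0:ℂ) 1 := mem_ball_self one_pos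
  have hAn1 : AnalyticOnNhd ℂ (deriv f) (ball 0 1) := hf.deriv
  have hAn2 : AnalyticOnNhd ℂ (deriv (deriv f)) (ball 0 1) := hAn1.deriv
  have hAn3 : AnalyticOnNhd ℂ (deriv (deriv (deriv f))) (ball 0 1) := hAn2.deriv
  have hi2 : iteratedDeriv 2 f = deriv (deriv f) := by
    rw [iteratedDeriv_succ, iteratedDeriv_one]
  have hi3 : iteratedDeriv 3 f = deriv (deriv (deriv f)) := by
    rw [iteratedDeriv_succ, hi2]
  set den : ℂ → ℂ := fun z => 2 * deriv f z + z * deriv (deriv f) z with hdendef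
  -- den z ≠ 0 and the strict bound |z f''| < |den z|
  have hfactor : ∀ z ∈ ball (0:ℂ) 1, den z = deriv f z * (2 + z * deriv (deriv f) z / deriv f z) := by
    intro z hz
    have hfz := hne z hz
    field_simp [hdendef]
    simp only [hdendef]; ring
  have hre : ∀ z ∈ ball (0:ℂ) 1, 0 < (2 + z * deriv (deriv f) z / deriv f z).re := by
    intro z hz
    have hw := hcv z hz
    rw [hi2] at hw
    have e : (2 + z * deriv (deriv f) z / deriv f z)
        = 1 + (1 + z * deriv (deriv f) z / deriv f z) := by ring
    rw [e, Complex.add_re, Complex.one_re]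
    linarith
  have hden_ne : ∀ z ∈ ball (0:ℂ) 1, den z ≠ 0 := by
    intro z hz hc
    rw [hfactor z hz] at hc
    rcases mul_eq_zero.1 hc with h | h
    · exact hne z hz h
    · have := hre z hz
      rw [h] at this
      simp at this
  have hlt : ∀ z ∈ ball (0:ℂ) 1,
      ‖z * deriv (deriv f) z‖ < ‖den z‖ := by
    intro z hz
    have hfz := hne z hz
    set w := z * deriv (deriv f) z / deriv f z with hwdef
    have h1 : z * deriv (deriv f) z = deriv f z * w := by
      rw [hwdef]; field_simp
    rw [h1, hfactor z hz, norm_mul, norm_mul]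
    apply mul_lt_mul_of_pos_left _ (norm_pos_iff.mpr hfz)
    -- |w| < |2 + w| since Re (1+w) > 0
    have hw : 0 < (1 + w).re := by
      have := hcv z hz; rwa [hi2] at this
    rw [Complex.norm_def, Complex.norm_def]
    apply Real.sqrt_lt_sqrt (Complex.normSq_nonneg _)
    have hw' : 0 < 1 + w.re := by simpa using hw
    have e1 : (2 + w).re = 2 + w.re := by simp
    have e2 : (2 + w).im = w.im := by simp
    rw [← hwdef]
    simp only [Complex.normSq_apply, e1, e2]
    nlinarith
  -- the bounded function g
  set g : ℂ → ℂ := fun z => deriv (deriv f) z / den z with hgdef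
  have hdend : DifferentiableOn ℂ den (ball 0 1) := by
    apply DifferentiableOn.add
    · exact (hAn1.differentiableOn).const_mul 2
    · exact differentiableOn_id.mul hAn2.differentiableOn
  have hgd : DifferentiableOn ℂ g (ball 0 1) :=
    (hAn2.differentiableOn).div hdend hden_ne
  set ω : ℂ → ℂ := fun z => z * g z with hwdef
  have hωd : DifferentiableOn ℂ ω (ball 0 1) := differentiableOn_id.mul hgd
  have hω0 : ω 0 = 0 := by simp [hwdef]
  have hmaps : MapsTo ω (ball 0 1) (ball (ω 0) 1) := by
    intro z hz
    rw [hω0, mem_ball_zero_iff, hwdef]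
    simp only
    rw [hgdef]
    simp only
    rw [mul_div_assoc'] at *
    rw [norm_div, div_lt_one (norm_pos_iff.mpr (hden_ne z hz))]
    exact hlt z hz
  have hgd0 : DifferentiableAt ℂ g 0 := hgd.differentiableAt (isOpen_ball.mem_nhds h0)
  have hgb : ∀ z ∈ ball (0:ℂ) 1, ‖g z‖ ≤ 1 := by
    intro z hz
    have hds := Complex.norm_dslope_le_div_of_mapsTo_ball hωd (hmaps.mono_right ball_subset_closedBall) hz
    rw [div_one] at hds
    rcases eq_or_ne z 0 with rfl | hz0
    · have hder : deriv ω 0 = g 0 := by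
        have h1 : HasDerivAt ω (1 * g 0 + 0 * deriv g 0) 0 :=
          (hasDerivAt_id 0).mul hgd0.hasDerivAt
        simpa using h1.deriv
      rwa [dslope_same, hder] at hds
    · rw [dslope_of_ne _ hz0, slope_def_field] at hds
      rw [show ω z = z * g z from rfl, show ω 0 = 0 * g 0 from by rw [hω0]; ring] at hds
      rw [show (z * g z - 0 * g 0) / (z - 0) = g z from by field_simp; ring] at hds
      exact hds
  -- values at 0
  have hden0 : den 0 = 2 := by simp [hdendef, hf1]
  have hd20 : deriv (deriv f) 0 = 2 * a₂ := by
    rw [ha₂, ← hi2]; field_simp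
  have hd30 : deriv (deriv (deriv f)) 0 = 6 * a₃ := by
    rw [ha₃, ← hi3]; field_simp
  have hg0 : g 0 = a₂ := by
    rw [hgdef]; simp only; rw [hden0, hd20]; ring_nf
  -- deriv g 0
  have hd2A : DifferentiableAt ℂ (deriv (deriv f)) 0 :=
    (hAn2 0 h0).differentiableAt
  have hd3A : DifferentiableAt ℂ (deriv (deriv (deriv f))) 0 :=
    (hAn3 0 h0).differentiableAt
  have hd1A : DifferentiableAt ℂ (deriv f) 0 := (hAn1 0 h0).differentiableAt
  have hnum : HasDerivAt (deriv (deriv f)) (deriv (deriv (deriv f)) 0) 0 := hd2A.hasDerivAt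
  have h1 : HasDerivAt (fun z : ℂ => 2 * deriv f z) (2 * deriv (deriv f) 0) 0 :=
    hd1A.hasDerivAt.const_mul 2
  have h2 : HasDerivAt (fun z : ℂ => z * deriv (deriv f) z)
      (1 * deriv (deriv f) 0 + (0 : ℂ) * deriv (deriv (deriv f)) 0) 0 := by
    have := (hasDerivAt_id (0:ℂ)).mul hd2A.hasDerivAt
    simpa [Pi.mul_def] using this
  have hdenD : HasDerivAt den
      (2 * deriv (deriv f) 0 + (1 * deriv (deriv f) 0 + (0:ℂ) * deriv (deriv (deriv f)) 0)) 0 :=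
    h1.add h2
  have hden0ne : den 0 ≠ 0 := hden_ne 0 h0
  have hgderiv : deriv g 0 = 3 * a₃ - 3 * a₂ ^ 2 := by
    have h := (hnum.div hdenD hden0ne).deriv
    rw [hgdef]
    rw [show (fun z => deriv (deriv f) z / den z) = deriv (deriv f) / den from rfl]
    rw [h, hden0, hd20, hd30]
    ring
  -- Schwarz–Pick
  have hSP := schwarzPick_deriv_zero g hgd hgb
  rw [hg0, hgderiv] at hSP
  rw [show (3 : ℂ) * a₃ - 3 * a₂ ^ 2 = 3 * (a₃ - a₂ ^ 2) from by ring, norm_mul] at hSP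
  rw [show ‖(3:ℂ)‖ = 3 from by
    rw [show (3:ℂ) = ((3:ℝ):ℂ) from by norm_num, Complex.norm_real]; norm_num] at hSP
  set t := ‖a₂‖ with htdef
  have ht0 : 0 ≤ t := norm_nonneg _
  have ht1 : t ≤ 1 := by have := hgb 0 h0; rwa [hg0] at this
  have hu : ‖a₃ - a₂ ^ 2‖ ≤ (1 - t ^ 2) / 3 := by linarith
  have hA2abs : ‖A₂‖ = t := by rw [hA₂]; exact norm_neg a₂
  have hA3abs : ‖A₃‖ ≤ t ^ 2 + (1 - t ^ 2) / 3 := by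
    rw [hA₃, show (2 * a₂ ^ 2 - a₃ : ℂ) = a₂ ^ 2 - (a₃ - a₂ ^ 2) from by ring]
    calc ‖a₂ ^ 2 - (a₃ - a₂ ^ 2)‖
        ≤ ‖a₂ ^ 2‖ + ‖a₃ - a₂ ^ 2‖ := by
          exact norm_sub_le (a₂ ^ 2) (a₃ - a₂ ^ 2)
      _ ≤ t ^ 2 + (1 - t ^ 2) / 3 := by rw [norm_pow]; exact add_le_add le_rfl hu
  have hs : t ^ 2 ≤ 1 := by nlinarith
  have hc2 : ‖A₃‖ ^ 2 ≤ (t ^ 2 + (1 - t ^ 2) / 3) ^ 2 := by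
    have := norm_nonneg A₃
    nlinarith
  calc ‖A₂ ^ 2 - A₃ ^ 2‖
      ≤ ‖A₂ ^ 2‖ + ‖A₃ ^ 2‖ := by
        exact norm_sub_le (A₂ ^ 2) (A₃ ^ 2)
    _ = t ^ 2 + ‖A₃‖ ^ 2 := by rw [norm_pow, norm_pow, hA2abs]
    _ ≤ 2 := by nlinarith
end

section
/- Let f be a convex function (class C) and let A_2, A_3, A_4 be the coefficients of the inverse function. Then the symmetric Toeplitz determinant satisfies |T^s_{3,2}(f^{-1})| = |(A_2 - A_4)(A_2^2 - 2A_3^2 + A_2 A_4)| ≤ 4. -/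
open Complex Metric Set


lemma keypoly (x y t : ℝ) (hx0 : 0 ≤ x) (hx1 : x ≤ 1) (hy0 : 0 ≤ y)
    (hy : y ≤ 1 - x^2) (ht0 : 0 ≤ t) (ht : t ≤ 1 - x^2) :
    (x + t/6 + 5*(x*y)/6 + x^3) * (x^2 + x*t/6 + x^2*y/2 + x^4 + 2*y^2/9) ≤ 4 := by
  have hs0 : 0 ≤ 1 - x^2 := le_trans hy0 hy
  have h1 : x + t/6 + 5*(x*y)/6 + x^3 ≤ x + (1-x^2)/6 + 5*(x*(1-x^2))/6 + x^3 := by nlinarith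
  have h2 : x^2 + x*t/6 + x^2*y/2 + x^4 + 2*y^2/9 ≤
      x^2 + x*(1-x^2)/6 + x^2*(1-x^2)/2 + x^4 + 2*(1-x^2)^2/9 := by nlinarith
  have hp1 : 0 ≤ x + t/6 + 5*(x*y)/6 + x^3 := by positivity
  have hp2 : 0 ≤ x^2 + x*t/6 + x^2*y/2 + x^4 + 2*y^2/9 := by positivity
  calc (x + t/6 + 5*(x*y)/6 + x^3) * (x^2 + x*t/6 + x^2*y/2 + x^4 + 2*y^2/9)
      ≤ (x + (1-x^2)/6 + 5*(x*(1-x^2))/6 + x^3) *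
        (x^2 + x*(1-x^2)/6 + x^2*(1-x^2)/2 + x^4 + 2*(1-x^2)^2/9) := by
        apply mul_le_mul h1 h2 hp2 (le_trans hp1 h1)
    _ ≤ 4 := by nlinarith [sq_nonneg x, sq_nonneg (1-x), pow_le_one₀ hx0 hx1 (n:=5), pow_le_one₀ hx0 hx1 (n:=6), pow_le_one₀ hx0 hx1 (n:=7), mul_nonneg hx0 hx0]


lemma moeb_denom_ne (u v : ℂ) (hu : ‖u‖ ≤ 1) (hv : ‖v‖ < 1) :
    1 - (starRingEnd ℂ) v * u ≠ 0 := by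
  intro h
  have h2 : ‖(starRingEnd ℂ) v * u‖ < 1 := by
    rw [norm_mul, RCLike.norm_conj]
    nlinarith [norm_nonneg u, norm_nonneg v]
  have h3 : (starRingEnd ℂ) v * u = 1 := by linear_combination -h
  rw [h3] at h2; simp at h2

lemma moeb_norm_le (u v : ℂ) (hu : ‖u‖ ≤ 1) (hv : ‖v‖ < 1) :
    ‖(u - v) / (1 - (starRingEnd ℂ) v * u)‖ ≤ 1 := by
  have hd := moeb_denom_ne u v hu hv
  rw [norm_div, div_le_one (norm_pos_iff.2 hd)]
  have h1 : normSq (u - v) ≤ normSq (1 - (starRingEnd ℂ) v * u) := by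
    have hu' : normSq u ≤ 1 := by
      rw [normSq_eq_norm_sq]; nlinarith [norm_nonneg u]
    have hv' : normSq v ≤ 1 := by
      rw [normSq_eq_norm_sq]; nlinarith [norm_nonneg v]
    simp only [normSq_apply, Complex.sub_re, Complex.sub_im, Complex.mul_re, Complex.mul_im,
      Complex.one_re, Complex.one_im, Complex.conj_re, Complex.conj_im] at *
    nlinarith [sq_nonneg (u.re*v.re + u.im*v.im), sq_nonneg (u.re*v.im - u.im*v.re)]
  calc ‖u - v‖ = Real.sqrt (normSq (u - v)) := by
        rw [Complex.norm_def]
    _ ≤ Real.sqrt (normSq (1 - (starRingEnd ℂ) v * u)) := Real.sqrt_le_sqrt h1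
    _ = ‖1 - (starRingEnd ℂ) v * u‖ := by rw [Complex.norm_def]

lemma conj_mul_self_eq (a : ℂ) : 1 - (starRingEnd ℂ) a * a = ((1 - ‖a‖^2 : ℝ) : ℂ) := by
  have : (starRingEnd ℂ) a * a = (normSq a : ℂ) := by
    rw [mul_comm, Complex.mul_conj]
  rw [this, normSq_eq_norm_sq]
  push_cast; ring

lemma dslope_norm_le {g : ℂ → ℂ} (hg : DifferentiableOn ℂ g (ball 0 1)) (h0 : g 0 = 0)
    (hb : ∀ z ∈ ball (0:ℂ) 1, ‖g z‖ ≤ 1) :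
    ∀ z ∈ ball (0:ℂ) 1, ‖dslope g 0 z‖ ≤ 1 := by
  intro z hz
  refine le_of_forall_pos_le_add fun ε hε => ?_
  have hmaps : MapsTo g (ball 0 1) (ball (g 0) (1 + ε)) := by
    intro w hw
    rw [mem_ball, dist_eq_norm, h0, sub_zero]
    exact lt_of_le_of_lt (hb w hw) (by linarith)
  have := Complex.norm_dslope_le_div_of_mapsTo_ball hg (hmaps.mono_right ball_subset_closedBall) hz
  rwa [div_one] at this

lemma schwarz_pick_center {g : ℂ → ℂ} (hg : DifferentiableOn ℂ g (ball 0 1))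
    (hb : ∀ z ∈ ball (0:ℂ) 1, ‖g z‖ ≤ 1) : ‖deriv g 0‖ ≤ 1 - ‖g 0‖^2 := by
  have h0 : (0:ℂ) ∈ ball (0:ℂ) 1 := by simp
  have ha1 : ‖g 0‖ ≤ 1 := hb 0 h0
  rcases eq_or_lt_of_le ha1 with heq | hlt
  · -- max modulus: g constant
    have hmax : IsMaxOn (norm ∘ g) (ball (0:ℂ) 1) 0 := by
      intro z hz; simp only [Function.comp, mem_setOf_eq]; rw [heq] at *; exact hb z hz
    have hconst := Complex.eqOn_of_isPreconnected_of_isMaxOn_norm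
      (convex_ball (0:ℂ) 1).isPreconnected isOpen_ball hg h0 hmax
    have hev : g =ᶠ[nhds (0:ℂ)] (fun _ => g 0) := by
      filter_upwards [isOpen_ball.mem_nhds h0] with z hz using hconst hz
    rw [hev.deriv_eq, deriv_const', norm_zero, ← heq]
    nlinarith
  · -- Möbius trick
    set a := g 0 with ha
    set G := fun z => (g z - a) / (1 - (starRingEnd ℂ) a * g z) with hG
    have hdnm : ∀ z ∈ ball (0:ℂ) 1, 1 - (starRingEnd ℂ) a * g z ≠ 0 :=
      fun z hz => moeb_denom_ne (g z) a (hb z hz) hlt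
    have hGb : ∀ z ∈ ball (0:ℂ) 1, ‖G z‖ ≤ 1 :=
      fun z hz => moeb_norm_le (g z) a (hb z hz) hlt
    have hGd : DifferentiableOn ℂ G (ball 0 1) := by
      apply DifferentiableOn.div (hg.sub_const a)
      · exact (differentiableOn_const _).sub ((differentiableOn_const _).mul hg)
      · exact hdnm
    have hG0 : G 0 = 0 := by simp [hG, ha]
    have hGder : ‖deriv G 0‖ ≤ 1 := by
      have := dslope_norm_le hGd hG0 hGb 0 h0
      rwa [dslope_same] at this
    have hgd0 : DifferentiableAt ℂ g 0 := (hg.differentiableAt (isOpen_ball.mem_nhds h0))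
    have hda : DifferentiableAt ℂ (fun z => 1 - (starRingEnd ℂ) a * g z) 0 :=
      (differentiableAt_const _).sub ((hgd0.const_mul _))
    have hd1 : deriv (fun z => 1 - (starRingEnd ℂ) a * g z) 0 = -((starRingEnd ℂ) a * deriv g 0) := by
      rw [deriv_const_sub, deriv_const_mul _ hgd0]
    have hd2 : deriv (fun z => g z - a) 0 = deriv g 0 := deriv_sub_const a
    have hden0 := hdnm 0 h0
    have hder : deriv G 0 = deriv g 0 / (1 - (starRingEnd ℂ) a * a) := by
      rw [hG, deriv_fun_div (hgd0.sub_const a) hda hden0, hd1, hd2]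
      rw [show g 0 = a from rfl]
      have hden0' : 1 - (starRingEnd ℂ) a * a ≠ 0 := hden0
      field_simp
      ring
    have hcast := conj_mul_self_eq a
    have hpos : (0:ℝ) < 1 - ‖a‖^2 := by nlinarith [norm_nonneg a]
    have hnorm : ‖deriv G 0‖ = ‖deriv g 0‖ / (1 - ‖a‖^2) := by
      rw [hder, hcast, norm_div, Complex.norm_real, Real.norm_eq_abs, abs_of_pos hpos]
    rw [hnorm, div_le_one hpos] at hGder
    linarith

lemma second_deriv_bound {φ : ℂ → ℂ} (hφ : AnalyticOnNhd ℂ φ (ball 0 1))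
    (hb : ∀ z ∈ ball (0:ℂ) 1, ‖φ z‖ ≤ 1) :
    ‖deriv (deriv φ) 0‖ ≤ 2 * (1 - ‖φ 0‖^2) := by
  have h0 : (0:ℂ) ∈ ball (0:ℂ) 1 := by simp
  have hnb : ball (0:ℂ) 1 ∈ nhds (0:ℂ) := isOpen_ball.mem_nhds h0
  have ha1 : ‖φ 0‖ ≤ 1 := hb 0 h0
  rcases eq_or_lt_of_le ha1 with heq | hlt
  · -- φ is constant by maximum modulus
    have hmax : IsMaxOn (norm ∘ φ) (ball (0:ℂ) 1) 0 := by
      intro z hz; simp only [Function.comp, mem_setOf_eq]; rw [heq] at *; exact hb z hz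
    have hconst := Complex.eqOn_of_isPreconnected_of_isMaxOn_norm
      (convex_ball (0:ℂ) 1).isPreconnected isOpen_ball hφ.differentiableOn h0 hmax
    have hd0 : EqOn (deriv φ) (fun _ => (0:ℂ)) (ball (0:ℂ) 1) := by
      intro z hz
      have hev : φ =ᶠ[nhds z] (fun _ => φ 0) := by
        filter_upwards [isOpen_ball.mem_nhds hz] with w hw using hconst hw
      rw [hev.deriv_eq, deriv_const']
    have hev2 : deriv φ =ᶠ[nhds (0:ℂ)] (fun _ => (0:ℂ)) := by
      filter_upwards [hnb] with w hw using hd0 hw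
    rw [hev2.deriv_eq, deriv_const', norm_zero, ← heq]
    nlinarith
  · set c := φ 0 with hc
    set ψ := fun z => (φ z - c) / (1 - (starRingEnd ℂ) c * φ z) with hψ
    have hdnm : ∀ z ∈ ball (0:ℂ) 1, 1 - (starRingEnd ℂ) c * φ z ≠ 0 :=
      fun z hz => moeb_denom_ne (φ z) c (hb z hz) hlt
    have hψa : AnalyticOnNhd ℂ ψ (ball 0 1) := by
      apply AnalyticOnNhd.div (hφ.sub analyticOnNhd_const)
      · exact analyticOnNhd_const.sub (analyticOnNhd_const.mul hφ)
      · exact hdnm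
    have hψb : ∀ z ∈ ball (0:ℂ) 1, ‖ψ z‖ ≤ 1 :=
      fun z hz => moeb_norm_le (φ z) c (hb z hz) hlt
    have hψ0 : ψ 0 = 0 := by simp [hψ, hc]
    set φ₁ := dslope ψ 0 with hφ₁
    have hφ₁b : ∀ z ∈ ball (0:ℂ) 1, ‖φ₁ z‖ ≤ 1 :=
      dslope_norm_le hψa.differentiableOn hψ0 hψb
    have hφ₁d : DifferentiableOn ℂ φ₁ (ball 0 1) :=
      (differentiableOn_dslope hnb).mpr hψa.differentiableOn
    have hφ₁0 : AnalyticAt ℂ φ₁ 0 := by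
      obtain ⟨p, hp⟩ := hψa 0 h0
      exact ⟨_, hp.has_fpower_series_dslope_fslope⟩
    have he₂ : ‖deriv φ₁ 0‖ ≤ 1 - ‖φ₁ 0‖^2 := schwarz_pick_center hφ₁d hφ₁b
    have hd₁ : φ₁ 0 = deriv ψ 0 := dslope_same ψ 0
    have hψz : ∀ z, ψ z = z * φ₁ z := by
      intro z
      have := sub_smul_dslope ψ 0 z
      rw [sub_zero, hψ0, sub_zero, smul_eq_mul] at this
      exact this.symm
    -- deriv ψ near 0
    have hφ₁ev : ∀ᶠ z in nhds (0:ℂ), AnalyticAt ℂ φ₁ z := hφ₁0.eventually_analyticAt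
    have hder_ψ : deriv ψ =ᶠ[nhds (0:ℂ)] fun z => φ₁ z + z * deriv φ₁ z := by
      filter_upwards [hφ₁ev] with z hz
      have hdz : DifferentiableAt ℂ φ₁ z := hz.differentiableAt
      have : ψ = fun w => w * φ₁ w := funext hψz
      rw [this, deriv_fun_mul differentiableAt_fun_id hdz, deriv_id'', one_mul]
    have hφ₁dd : AnalyticAt ℂ (deriv φ₁) 0 := by
      have : AnalyticOnNhd ℂ φ₁ {(0:ℂ)} := fun x hx => by
        rw [mem_singleton_iff] at hx; rw [hx]; exact hφ₁0
      exact this.deriv 0 rfl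
    have hψ'' : deriv (deriv ψ) 0 = 2 * deriv φ₁ 0 := by
      rw [hder_ψ.deriv_eq,
        deriv_fun_add hφ₁0.differentiableAt (differentiableAt_fun_id.fun_mul hφ₁dd.differentiableAt),
        deriv_fun_mul differentiableAt_fun_id hφ₁dd.differentiableAt, deriv_id'']
      ring_nf
    -- the identity ψ * (1 - c̄ φ) = φ - c on the ball
    set L := fun z => ψ z * (1 - (starRingEnd ℂ) c * φ z) with hL
    set R := fun z => φ z - c with hR
    have hLR : EqOn L R (ball (0:ℂ) 1) := by
      intro z hz
      simp only [hL, hR, hψ]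
      exact div_mul_cancel₀ _ (hdnm z hz)
    have hLRev : L =ᶠ[nhds (0:ℂ)] R := by filter_upwards [hnb] with w hw using hLR hw
    have hφd0 : DifferentiableAt ℂ φ 0 := (hφ 0 h0).differentiableAt
    have hψd0 : DifferentiableAt ℂ ψ 0 := (hψa 0 h0).differentiableAt
    have hfacd : ∀ z ∈ ball (0:ℂ) 1,
        DifferentiableAt ℂ (fun w => 1 - (starRingEnd ℂ) c * φ w) z := fun z hz =>
      (differentiableAt_const _).sub (((hφ z hz).differentiableAt).const_mul _)
    have hfac_deriv : ∀ z ∈ ball (0:ℂ) 1,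
        deriv (fun w => 1 - (starRingEnd ℂ) c * φ w) z
          = -((starRingEnd ℂ) c * deriv φ z) := by
      intro z hz
      rw [deriv_const_sub, deriv_const_mul _ ((hφ z hz).differentiableAt)]
    -- first derivative relation
    have hd1eq : deriv ψ 0 * (1 - (starRingEnd ℂ) c * c) = deriv φ 0 := by
      have h1 : deriv L 0 = deriv R 0 := hLRev.deriv_eq
      rw [hL, hR] at h1
      rw [deriv_fun_mul hψd0 (hfacd 0 h0), hfac_deriv 0 h0, hψ0, deriv_sub_const] at h1
      simpa [hc] using h1
    -- second derivative relation
    set L' := fun z => deriv ψ z * (1 - (starRingEnd ℂ) c * φ z)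
      + ψ z * -((starRingEnd ℂ) c * deriv φ z) with hL'
    have hLd : EqOn (deriv L) L' (ball (0:ℂ) 1) := by
      intro z hz
      rw [hL, hL']
      rw [deriv_fun_mul ((hψa z hz).differentiableAt) (hfacd z hz), hfac_deriv z hz]
    have hLdev : deriv L =ᶠ[nhds (0:ℂ)] L' := by filter_upwards [hnb] with w hw using hLd hw
    have hRdev : deriv R =ᶠ[nhds (0:ℂ)] deriv φ := by
      filter_upwards [hnb] with w hw
      rw [hR, deriv_sub_const]
    have hψda : DifferentiableAt ℂ (deriv ψ) 0 := (hψa.deriv 0 h0).differentiableAt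
    have hφda : DifferentiableAt ℂ (deriv φ) 0 := (hφ.deriv 0 h0).differentiableAt
    have hd2eq : 2 * deriv φ₁ 0 * (1 - (starRingEnd ℂ) c * c)
        - 2 * (deriv ψ 0 * ((starRingEnd ℂ) c * deriv φ 0)) = deriv (deriv φ) 0 := by
      have h2 : deriv (deriv L) 0 = deriv (deriv R) 0 := by
        have : deriv L =ᶠ[nhds (0:ℂ)] deriv R := by
          apply Filter.EventuallyEq.deriv hLRev
        exact this.deriv_eq
      rw [hLdev.deriv_eq, hRdev.deriv_eq] at h2
      rw [hL'] at h2
      rw [deriv_fun_add (hψda.fun_mul (hfacd 0 h0))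
        (hψd0.fun_mul (((hφda.const_mul _)).fun_neg)) ] at h2
      rw [deriv_fun_mul hψda (hfacd 0 h0), hfac_deriv 0 h0] at h2
      rw [deriv_fun_mul hψd0 ((hφda.const_mul _).fun_neg)] at h2
      rw [hψ0, hψ''] at h2
      simp only [hc] at h2 ⊢
      linear_combination h2
    -- now the norm estimates
    have hcc := conj_mul_self_eq c
    set x := ‖c‖ with hx
    set u := ‖deriv ψ 0‖ with hu
    have hu1 : u ≤ 1 := by rw [hu, ← hd₁]; exact hφ₁b 0 h0
    have hx0 : 0 ≤ x := norm_nonneg c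
    have hu0 : 0 ≤ u := norm_nonneg _
    have h1x : (0:ℝ) ≤ 1 - x^2 := by nlinarith
    have hnr : ‖(((1 - x^2 : ℝ)):ℂ)‖ = 1 - x^2 := by
      rw [Complex.norm_real, Real.norm_eq_abs, _root_.abs_of_nonneg h1x]
    have hC2 : ‖deriv φ 0‖ = u * (1 - x^2) := by
      rw [← hd1eq, norm_mul, hcc, hnr]
    have he₂' : ‖deriv φ₁ 0‖ ≤ 1 - u^2 := by rw [hd₁] at he₂; exact he₂
    have hn2c : ‖(2:ℂ)‖ = 2 := by simp
    have hn1 : ‖2 * deriv φ₁ 0 * (1 - (starRingEnd ℂ) c * c)‖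
        = 2 * ‖deriv φ₁ 0‖ * (1 - x^2) := by
      rw [hcc, norm_mul, norm_mul, hnr, hn2c]
    have hn2 : ‖2 * (deriv ψ 0 * ((starRingEnd ℂ) c * deriv φ 0))‖
        = 2 * (u * (x * (u * (1-x^2)))) := by
      rw [norm_mul, norm_mul, norm_mul, RCLike.norm_conj, hC2, hn2c, ← hu, ← hx]
    calc ‖deriv (deriv φ) 0‖
        ≤ ‖2 * deriv φ₁ 0 * (1 - (starRingEnd ℂ) c * c)‖
          + ‖2 * (deriv ψ 0 * ((starRingEnd ℂ) c * deriv φ 0))‖ := by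
          rw [← hd2eq]; exact norm_sub_le _ _
      _ = 2 * ‖deriv φ₁ 0‖ * (1 - x^2) + 2 * (u * (x * (u * (1-x^2)))) := by
          rw [hn1, hn2]
      _ ≤ 2 * (1 - u^2) * (1-x^2) + 2 * (u * (x * (u * (1-x^2)))) := by
          nlinarith [he₂', norm_nonneg (deriv φ₁ 0)]
      _ ≤ 2 * (1 - ‖φ 0‖^2) := by
          rw [← hc, ← hx]
          nlinarith [mul_nonneg (mul_nonneg (mul_nonneg hu0 hu0) h1x)
            (by nlinarith : (0:ℝ) ≤ 1 - x), hu0, hx0, h1x]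

theorem symToeplitz32_convex (f : ℂ → ℂ)
    (hf : AnalyticOnNhd ℂ f (ball (0:ℂ) 1))
    (hf0 : f 0 = 0) (hf1 : deriv f 0 = 1)
    (hne : ∀ z ∈ ball (0:ℂ) 1, deriv f z ≠ 0)
    (hcv : ∀ z ∈ ball (0:ℂ) 1, 0 < (1 + z * iteratedDeriv 2 f z / deriv f z).re)
    (a₂ a₃ a₄ A₂ A₃ A₄ : ℂ)
    (ha₂ : a₂ = iteratedDeriv 2 f 0 / 2)
    (ha₃ : a₃ = iteratedDeriv 3 f 0 / 6)
    (ha₄ : a₄ = iteratedDeriv 4 f 0 / 24)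
    (hA₂ : A₂ = -a₂)
    (hA₃ : A₃ = 2 * a₂ ^ 2 - a₃)
    (hA₄ : A₄ = -a₄ + 5 * a₂ * a₃ - 5 * a₂ ^ 3) :
    ‖(A₂ - A₄) * (A₂ ^ 2 - 2 * A₃ ^ 2 + A₂ * A₄)‖ ≤ 4 := by
  have h0 : (0:ℂ) ∈ ball (0:ℂ) 1 := by simp
  have hnb : ball (0:ℂ) 1 ∈ nhds (0:ℂ) := isOpen_ball.mem_nhds h0
  set F1 := deriv f with hF1def
  set F2 := deriv F1 with hF2def
  set F3 := deriv F2 with hF3def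
  set F4 := deriv F3 with hF4def
  have hF1a : AnalyticOnNhd ℂ F1 (ball 0 1) := hf.deriv
  have hF2a : AnalyticOnNhd ℂ F2 (ball 0 1) := hF1a.deriv
  have hF3a : AnalyticOnNhd ℂ F3 (ball 0 1) := hF2a.deriv
  have hF4a : AnalyticOnNhd ℂ F4 (ball 0 1) := hF3a.deriv
  have e2 : iteratedDeriv 2 f = F2 := by
    rw [show (2:ℕ) = 1 + 1 from rfl, iteratedDeriv_succ, iteratedDeriv_one]
  have e3 : iteratedDeriv 3 f = F3 := by
    rw [show (3:ℕ) = 2 + 1 from rfl, iteratedDeriv_succ, e2]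
  have e4 : iteratedDeriv 4 f = F4 := by
    rw [show (4:ℕ) = 3 + 1 from rfl, iteratedDeriv_succ, e3]
  rw [e2] at ha₂ hcv
  rw [e3] at ha₃
  rw [e4] at ha₄
  have hF10 : F1 0 = 1 := hf1
  have hb2 : F2 0 = 2 * a₂ := by rw [ha₂]; ring
  have hb3 : F3 0 = 6 * a₃ := by rw [ha₃]; ring
  have hb4 : F4 0 = 24 * a₄ := by rw [ha₄]; ring
  -- the function D = 2 F1 + z F2 and its nonvanishing
  set D := fun z => 2 * F1 z + z * F2 z with hDdef
  have hDa : AnalyticOnNhd ℂ D (ball 0 1) :=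
    (analyticOnNhd_const.mul hF1a).add (analyticOnNhd_id.mul hF2a)
  have hD0 : D 0 = 2 := by simp [hDdef, hF10]
  have hDne : ∀ z ∈ ball (0:ℂ) 1, D z ≠ 0 := by
    intro z hz h
    have h1 : F1 z ≠ 0 := hne z hz
    have h2 := hcv z hz
    have h3 : z * F2 z / F1 z = -2 := by
      rw [hDdef] at h
      field_simp
      linear_combination h
    rw [h3] at h2
    norm_num at h2
  -- φ = F2 / D
  set φ := fun z => F2 z / D z with hφdef
  have hφa : AnalyticOnNhd ℂ φ (ball 0 1) := hF2a.div hDa hDne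
  -- ω = z φ(z) maps the ball to itself
  set ω := fun z => z * φ z with hωdef
  have hωd : DifferentiableOn ℂ ω (ball 0 1) :=
    differentiableOn_id.mul hφa.differentiableOn
  have hω0 : ω 0 = 0 := by simp [hωdef]
  have hmaps : MapsTo ω (ball (0:ℂ) 1) (ball (0:ℂ) 1) := by
    intro z hz
    have h1 : F1 z ≠ 0 := hne z hz
    have hDz : D z ≠ 0 := hDne z hz
    set q := 1 + z * F2 z / F1 z with hq
    have hreq : 0 < q.re := hcv z hz
    have hq1 : q + 1 ≠ 0 := by
      intro h
      have : q = -1 := by linear_combination h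
      rw [this] at hreq
      norm_num at hreq
    have hDq : D z = F1 z * (q + 1) := by
      rw [hq, hDdef]
      field_simp
      ring
    have hωq : ω z = (q - 1) / (q + 1) := by
      simp only [hωdef, hφdef]
      rw [hDq, hq]
      have h2 : F1 z * (1 + z * F2 z / F1 z + 1) ≠ 0 := by rw [← hq, ← hDq]; exact hDne z hz
      field_simp
      ring
    rw [mem_ball, dist_zero_right, hωq, norm_div,
      div_lt_one (norm_pos_iff.2 hq1)]
    have hsq : normSq (q - 1) < normSq (q + 1) := by
      simp only [normSq_apply, add_re, add_im, sub_re, sub_im, one_re, one_im]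
      nlinarith [hreq]
    calc ‖q - 1‖ = Real.sqrt (normSq (q - 1)) := by
          rw [Complex.norm_def]
      _ < Real.sqrt (normSq (q + 1)) := by
          exact Real.sqrt_lt_sqrt (normSq_nonneg _) hsq
      _ = ‖q + 1‖ := by rw [Complex.norm_def]
  -- boundedness of φ via the Schwarz lemma
  have hφb : ∀ z ∈ ball (0:ℂ) 1, ‖φ z‖ ≤ 1 := by
    intro z hz
    have hmaps' : MapsTo ω (ball (0:ℂ) 1) (ball (ω 0) 1) := by rw [hω0]; exact hmaps
    have hds := Complex.norm_dslope_le_div_of_mapsTo_ball hωd (hmaps'.mono_right ball_subset_closedBall) hz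
    rw [div_one] at hds
    rcases eq_or_ne z 0 with rfl | hz0
    · rw [dslope_same] at hds
      have hder : deriv ω 0 = φ 0 := by
        rw [hωdef, deriv_fun_mul differentiableAt_fun_id (hφa 0 h0).differentiableAt, deriv_id'']
        simp
      rwa [hder] at hds
    · rw [dslope_of_ne _ hz0] at hds
      have : slope ω 0 z = φ z := by
        rw [slope_def_field, hω0]
        simp only [hωdef]
        rw [sub_zero, sub_zero]
        exact mul_div_cancel_left₀ _ hz0
      rwa [this] at hds
  -- coefficient bounds
  have hx1 : ‖φ 0‖ ≤ 1 := hφb 0 h0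
  have hy1 : ‖deriv φ 0‖ ≤ 1 - ‖φ 0‖^2 := schwarz_pick_center hφa.differentiableOn hφb
  have ht1 : ‖deriv (deriv φ) 0‖ ≤ 2 * (1 - ‖φ 0‖^2) := second_deriv_bound hφa hφb
  -- extraction of Taylor data: φ * D = F2 on the ball
  have hid : EqOn (fun z => φ z * D z) F2 (ball (0:ℂ) 1) := by
    intro z hz
    exact div_mul_cancel₀ _ (hDne z hz)
  have hidev : (fun z => φ z * D z) =ᶠ[nhds (0:ℂ)] F2 := by
    filter_upwards [hnb] with w hw using hid hw
  have hC1 : φ 0 = a₂ := by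
    have h := hid h0
    simp only at h
    rw [hD0, hb2] at h
    linear_combination h / 2
  have hDd : EqOn (deriv D) (fun z => 3 * F2 z + z * F3 z) (ball (0:ℂ) 1) := by
    intro z hz
    rw [hDdef]
    rw [deriv_fun_add ((hF1a z hz).differentiableAt.const_mul _)
      (differentiableAt_fun_id.fun_mul (hF2a z hz).differentiableAt)]
    rw [deriv_const_mul _ (hF1a z hz).differentiableAt]
    rw [deriv_fun_mul differentiableAt_fun_id (hF2a z hz).differentiableAt, deriv_id'']
    rw [← hF2def, ← hF3def]
    ring
  have hDd0 : deriv D 0 = 3 * F2 0 := by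
    have := hDd h0
    simp only at this
    rw [this]
    ring
  have hC2 : deriv φ 0 = 3*a₃ - 3*a₂^2 := by
    have h := hidev.deriv_eq
    rw [deriv_fun_mul (hφa 0 h0).differentiableAt (hDa 0 h0).differentiableAt] at h
    rw [hD0, hDd0, hC1, hb2, ← hF3def] at h
    rw [hb3] at h
    linear_combination h / 2
  -- second derivative extraction
  have hLd : EqOn (deriv (fun z => φ z * D z))
      (fun z => deriv φ z * D z + φ z * (3 * F2 z + z * F3 z)) (ball (0:ℂ) 1) := by
    intro z hz
    rw [deriv_fun_mul (hφa z hz).differentiableAt (hDa z hz).differentiableAt, hDd hz]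
  have hLdev : deriv (fun z => φ z * D z)
      =ᶠ[nhds (0:ℂ)] (fun z => deriv φ z * D z + φ z * (3 * F2 z + z * F3 z)) := by
    filter_upwards [hnb] with w hw using hLd hw
  have hC3 : deriv (deriv φ) 0 = 12*a₄ - 30*a₂*a₃ + 18*a₂^3 := by
    have hA : deriv (deriv (fun z => φ z * D z)) 0 = F4 0 := by
      rw [hidev.deriv.deriv_eq, ← hF3def, ← hF4def]
    rw [hLdev.deriv_eq] at hA
    have hsum : DifferentiableAt ℂ (fun z => 3 * F2 z + z * F3 z) 0 :=
      ((hF2a 0 h0).differentiableAt.const_mul _).add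
        (differentiableAt_fun_id.mul (hF3a 0 h0).differentiableAt)
    rw [deriv_fun_add ((hφa.deriv 0 h0).differentiableAt.fun_mul (hDa 0 h0).differentiableAt)
      ((hφa 0 h0).differentiableAt.fun_mul hsum)] at hA
    rw [deriv_fun_mul (hφa.deriv 0 h0).differentiableAt (hDa 0 h0).differentiableAt] at hA
    rw [deriv_fun_mul (hφa 0 h0).differentiableAt hsum] at hA
    rw [deriv_fun_add ((hF2a 0 h0).differentiableAt.const_mul _)
      (differentiableAt_fun_id.fun_mul (hF3a 0 h0).differentiableAt)] at hA
    rw [deriv_const_mul _ (hF2a 0 h0).differentiableAt] at hA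
    rw [deriv_fun_mul differentiableAt_fun_id (hF3a 0 h0).differentiableAt, deriv_id''] at hA
    rw [hD0, hDd0, hC1, hC2, hb2, ← hF3def, ← hF4def, hb3, hb4] at hA
    simp only [zero_mul, mul_zero, add_zero, one_mul, zero_add] at hA
    linear_combination hA / 2
  -- final assembly
  have e1 : A₂ - A₄ = -(φ 0) + (deriv (deriv φ) 0)/12
      - 5/6*((φ 0)*(deriv φ 0)) + (φ 0)^3 := by
    rw [hA₂, hA₄, hC1, hC2, hC3]; ring
  have e2' : A₂^2 - 2*A₃^2 + A₂*A₄ = (φ 0)^2 + (φ 0)*(deriv (deriv φ) 0)/12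
      + (φ 0)^2*(deriv φ 0)/2 - (φ 0)^4 - 2*(deriv φ 0)^2/9 := by
    rw [hA₂, hA₃, hA₄, hC1, hC2, hC3]; ring
  set x := ‖φ 0‖ with hxdef
  set y := ‖deriv φ 0‖ with hydef
  set T := ‖deriv (deriv φ) 0‖ with hTdef
  have hx0 : 0 ≤ x := norm_nonneg _
  have hy0 : 0 ≤ y := norm_nonneg _
  have hT0 : 0 ≤ T := norm_nonneg _
  have h1n : ‖A₂ - A₄‖ ≤ x + (T/2)/6 + 5*(x*y)/6 + x^3 := by
    rw [e1]
    calc ‖-(φ 0) + (deriv (deriv φ) 0)/12 - 5/6*((φ 0)*(deriv φ 0)) + (φ 0)^3‖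
        ≤ ‖-(φ 0) + (deriv (deriv φ) 0)/12 - 5/6*((φ 0)*(deriv φ 0))‖ + ‖(φ 0)^3‖ :=
          norm_add_le _ _
      _ ≤ ‖-(φ 0) + (deriv (deriv φ) 0)/12‖ + ‖5/6*((φ 0)*(deriv φ 0))‖ + ‖(φ 0)^3‖ := by
          have := norm_sub_le (-(φ 0) + (deriv (deriv φ) 0)/12) (5/6*((φ 0)*(deriv φ 0)))
          linarith
      _ ≤ ‖-(φ 0)‖ + ‖(deriv (deriv φ) 0)/12‖ + ‖5/6*((φ 0)*(deriv φ 0))‖ + ‖(φ 0)^3‖ := by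
          have := norm_add_le (-(φ 0)) ((deriv (deriv φ) 0)/12)
          linarith
      _ = x + (T/2)/6 + 5*(x*y)/6 + x^3 := by
          have h12 : ‖(12:ℂ)‖ = 12 := by
            rw [show (12:ℂ) = ((12:ℝ):ℂ) by norm_num, Complex.norm_real]; norm_num
          have h56 : ‖(5/6:ℂ)‖ = 5/6 := by
            rw [show (5/6:ℂ) = ((5/6:ℝ):ℂ) by norm_num, Complex.norm_real]; norm_num
          simp only [norm_neg, norm_div, norm_mul, norm_pow, h12, h56,
            ← hxdef, ← hydef, ← hTdef]
          ring
  have h2n : ‖A₂^2 - 2*A₃^2 + A₂*A₄‖ ≤ x^2 + x*(T/2)/6 + x^2*y/2 + x^4 + 2*y^2/9 := by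
    rw [e2']
    calc ‖(φ 0)^2 + (φ 0)*(deriv (deriv φ) 0)/12 + (φ 0)^2*(deriv φ 0)/2
          - (φ 0)^4 - 2*(deriv φ 0)^2/9‖
        ≤ ‖(φ 0)^2 + (φ 0)*(deriv (deriv φ) 0)/12 + (φ 0)^2*(deriv φ 0)/2 - (φ 0)^4‖
          + ‖2*(deriv φ 0)^2/9‖ := norm_sub_le _ _
      _ ≤ ‖(φ 0)^2 + (φ 0)*(deriv (deriv φ) 0)/12 + (φ 0)^2*(deriv φ 0)/2‖ + ‖(φ 0)^4‖
          + ‖2*(deriv φ 0)^2/9‖ := by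
          have := norm_sub_le ((φ 0)^2 + (φ 0)*(deriv (deriv φ) 0)/12
            + (φ 0)^2*(deriv φ 0)/2) ((φ 0)^4)
          linarith
      _ ≤ ‖(φ 0)^2 + (φ 0)*(deriv (deriv φ) 0)/12‖ + ‖(φ 0)^2*(deriv φ 0)/2‖ + ‖(φ 0)^4‖
          + ‖2*(deriv φ 0)^2/9‖ := by
          have := norm_add_le ((φ 0)^2 + (φ 0)*(deriv (deriv φ) 0)/12)
            ((φ 0)^2*(deriv φ 0)/2)
          linarith
      _ ≤ ‖(φ 0)^2‖ + ‖(φ 0)*(deriv (deriv φ) 0)/12‖ + ‖(φ 0)^2*(deriv φ 0)/2‖ + ‖(φ 0)^4‖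
          + ‖2*(deriv φ 0)^2/9‖ := by
          have := norm_add_le ((φ 0)^2) ((φ 0)*(deriv (deriv φ) 0)/12)
          linarith
      _ = x^2 + x*(T/2)/6 + x^2*y/2 + x^4 + 2*y^2/9 := by
          have h12 : ‖(12:ℂ)‖ = 12 := by
            rw [show (12:ℂ) = ((12:ℝ):ℂ) by norm_num, Complex.norm_real]; norm_num
          have h2c : ‖(2:ℂ)‖ = 2 := by
            rw [show (2:ℂ) = ((2:ℝ):ℂ) by norm_num, Complex.norm_real]; norm_num
          have h9 : ‖(9:ℂ)‖ = 9 := by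
            rw [show (9:ℂ) = ((9:ℝ):ℂ) by norm_num, Complex.norm_real]; norm_num
          simp only [norm_div, norm_mul, norm_pow, h12, h2c, h9,
            ← hxdef, ← hydef, ← hTdef]
          ring
  have key := keypoly x y (T/2) hx0 hx1 hy0 hy1 (by linarith) (by linarith)
  rw [norm_mul]
  calc ‖A₂ - A₄‖ * ‖A₂^2 - 2*A₃^2 + A₂*A₄‖
      ≤ (x + (T/2)/6 + 5*(x*y)/6 + x^3) * (x^2 + x*(T/2)/6 + x^2*y/2 + x^4 + 2*y^2/9) := by
        apply mul_le_mul h1n h2n (norm_nonneg _)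
        positivity
    _ ≤ 4 := key
end
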